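/- arXiv:0901.2777 — 8 statements merged into one kernel-verified Lean document; each statement's English description precedes it below -/
import Mathlib

section
/- Let H : [0,1) → [0,∞) be increasing with I = ∫₀¹ H(t) dt < ∞. Then for every n ≥ 1 there exists a partition 0 = t₀ < t₁ < ⋯ < tₙ = 1 with ∫₀^{tᵢ} H(t) dt = (i/n)·I for all i, and for this partition one has (∑_{i=1}^n ∫_{t_{i-1}}^{t_i} (tᵢ − t) H(t)² dt)^{1/2} ≤ I/√n. -/
open MeasureTheory Set

/-- A partition `0 = t₀ < t₁ < ⋯ < tₙ = 1` of `[0,1]`. -/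
def IsPartition (n : ℕ) (t : ℕ → ℝ) : Prop :=
  t 0 = 0 ∧ t n = 1 ∧ ∀ i < n, t i < t (i + 1)

/-- `A(H,τ)² = ∑_{i=1}^n ∫_{t_{i-1}}^{t_i} (tᵢ − s) H(s)² ds`. -/
noncomputable def partErr (H : ℝ → ℝ) (n : ℕ) (t : ℕ → ℝ) : ℝ :=
  ∑ i ∈ Finset.range n, ∫ s in (t i)..(t (i + 1)), (t (i + 1) - s) * H s ^ 2

/-- `Aₙ(H) = inf_{τ ∈ 𝒯ₙ} A(H,τ)`. -/
noncomputable def An (H : ℝ → ℝ) (n : ℕ) : ℝ :=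
  sInf { x | ∃ t : ℕ → ℝ, IsPartition n t ∧ x = Real.sqrt (partErr H n t) }

lemma piece_bound (H : ℝ → ℝ) (hmono : MonotoneOn H (Ico (0 : ℝ) 1))
    (hpos : ∀ t ∈ Ico (0 : ℝ) 1, 0 ≤ H t)
    (hintIcc : IntegrableOn H (Icc (0 : ℝ) 1))
    (a b : ℝ) (ha : 0 ≤ a) (hab : a ≤ b) (hb : b ≤ 1) :
    ∫ s in Ioo a b, (b - s) * H s ^ 2 ≤ (∫ s in Ioo a b, H s) ^ 2 := by
  have hsub : Ioo a b ⊆ Ico (0 : ℝ) 1 := fun u hu => ⟨le_of_lt (lt_of_le_of_lt ha hu.1),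
    lt_of_lt_of_le hu.2 hb⟩
  have hHab : IntegrableOn H (Ioo a b) := hintIcc.mono_set
    (fun u hu => ⟨(hsub hu).1, le_of_lt (hsub hu).2⟩)
  set V := ∫ s in Ioo a b, H s with hV
  have hV0 : 0 ≤ V := setIntegral_nonneg measurableSet_Ioo (fun u hu => hpos u (hsub hu))
  have key : ∀ s ∈ Ioo a b, (b - s) * H s ^ 2 ≤ V * H s := by
    intro s hs
    have hsIco : s ∈ Ico (0 : ℝ) 1 := hsub hs
    have hsb : s ≤ b := le_of_lt hs.2
    have h1 : (b - s) * H s ≤ V := by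
      have e1 : ∫ _ in Ioo s b, H s = (b - s) * H s := by
        rw [setIntegral_const, Real.volume_real_Ioo_of_le (by linarith),
          smul_eq_mul]
      have e2 : (∫ _ in Ioo s b, H s) ≤ ∫ u in Ioo s b, H u := by
        refine setIntegral_mono_on (integrableOn_const ?_)
          (hHab.mono_set (Ioo_subset_Ioo (le_of_lt hs.1) le_rfl)) measurableSet_Ioo ?_
        · rw [Real.volume_Ioo]; exact ENNReal.ofReal_ne_top
        · intro u hu
          exact hmono hsIco (hsub (Ioo_subset_Ioo (le_of_lt hs.1) le_rfl hu)) (le_of_lt hu.1)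
      have e3 : (∫ u in Ioo s b, H u) ≤ V := by
        refine setIntegral_mono_set hHab ?_ ((Ioo_subset_Ioo (le_of_lt hs.1) le_rfl).eventuallyLE)
        exact (ae_restrict_iff' measurableSet_Ioo).2
          (Filter.Eventually.of_forall fun u hu => hpos u (hsub hu))
      linarith [e1 ▸ e2, e3]
    have hHs : 0 ≤ H s := hpos s hsIco
    calc (b - s) * H s ^ 2 = ((b - s) * H s) * H s := by ring
      _ ≤ V * H s := mul_le_mul_of_nonneg_right h1 hHs
  have hintg : IntegrableOn (fun s => V * H s) (Ioo a b) := hHab.const_mul V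
  have hintf : IntegrableOn (fun s => (b - s) * H s ^ 2) (Ioo a b) := by
    refine hintg.mono' ?_ ?_
    · have hm : AEStronglyMeasurable H (volume.restrict (Ioo a b)) := hHab.1
      have : AEStronglyMeasurable (fun s => (b - s) * (H s * H s))
          (volume.restrict (Ioo a b)) :=
        ((continuous_const.sub continuous_id).aestronglyMeasurable).mul (hm.mul hm)
      simpa [pow_two] using this
    · refine (ae_restrict_iff' measurableSet_Ioo).2 (Filter.Eventually.of_forall fun s hs => ?_)
      have h0 : 0 ≤ (b - s) * H s ^ 2 :=
        mul_nonneg (by linarith [hs.2]) (sq_nonneg _)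
      rw [Real.norm_of_nonneg h0]
      exact key s hs
  calc (∫ s in Ioo a b, (b - s) * H s ^ 2) ≤ ∫ s in Ioo a b, V * H s :=
        setIntegral_mono_on hintf hintg measurableSet_Ioo key
    _ = V * V := by rw [integral_const_mul]
    _ = V ^ 2 := by ring

lemma main_aux (H : ℝ → ℝ) (hmono : MonotoneOn H (Ico (0 : ℝ) 1))
    (hpos : ∀ t ∈ Ico (0 : ℝ) 1, 0 ≤ H t)
    (hint : IntegrableOn H (Ico (0 : ℝ) 1))
    (I : ℝ) (hI : I = ∫ t in (0 : ℝ)..1, H t)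
    (n : ℕ) (hn : 1 ≤ n) (t : ℕ → ℝ)
    (hpart : IsPartition n t) (hmem : ∀ i ≤ n, t i ∈ Icc (0 : ℝ) 1)
    (hval : ∀ i ≤ n, (∫ s in (0 : ℝ)..(t i), H s) = (i / n) * I) :
    Real.sqrt (partErr H n t) ≤ I / Real.sqrt n := by
  have hintIcc : IntegrableOn H (Icc (0 : ℝ) 1) := (integrableOn_Icc_iff_integrableOn_Ico enorm_ne_top).2 hint
  have hn0 : (0 : ℝ) < n := by exact_mod_cast hn
  have hII : ∀ {x y : ℝ}, 0 ≤ x → y ≤ 1 → x ≤ y → IntervalIntegrable H volume x y := by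
    intro x y hx hy hxy
    exact (hintIcc.mono_set (by rw [uIcc_of_le hxy]; exact Icc_subset_Icc hx hy)).intervalIntegrable
  have hFsub : ∀ {x y : ℝ}, 0 ≤ x → x ≤ y → y ≤ 1 →
      (∫ s in (0:ℝ)..y, H s) - (∫ s in (0:ℝ)..x, H s) = ∫ s in Ioo x y, H s := by
    intro x y hx hxy hy
    rw [intervalIntegral.integral_interval_sub_left (hII le_rfl hy (by linarith))
      (hII le_rfl (by linarith) hx), intervalIntegral.integral_of_le hxy,
      integral_Ioc_eq_integral_Ioo]
  have hI0 : 0 ≤ I := by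
    rw [hI, intervalIntegral.integral_of_le zero_le_one, integral_Ioc_eq_integral_Ioo]
    exact setIntegral_nonneg measurableSet_Ioo (fun u hu => hpos u ⟨le_of_lt hu.1, hu.2⟩)
  have hbound : partErr H n t ≤ I ^ 2 / n := by
    have hterm : ∀ i ∈ Finset.range n,
        (∫ s in (t i)..(t (i+1)), (t (i+1) - s) * H s ^ 2) ≤ (I / n) ^ 2 := by
      intro i hi
      rw [Finset.mem_range] at hi
      have hmi : t i ∈ Icc (0:ℝ) 1 := hmem i (le_of_lt hi)
      have hmi1 : t (i+1) ∈ Icc (0:ℝ) 1 := hmem (i+1) hi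
      have hab : t i ≤ t (i+1) := le_of_lt (hpart.2.2 i hi)
      have hVi : (∫ s in Ioo (t i) (t (i+1)), H s) = I / n := by
        rw [← hFsub hmi.1 hab hmi1.2, hval i (le_of_lt hi), hval (i+1) hi]
        push_cast
        field_simp
        ring
      rw [intervalIntegral.integral_of_le hab, integral_Ioc_eq_integral_Ioo]
      calc (∫ s in Ioo (t i) (t (i+1)), (t (i+1) - s) * H s ^ 2)
          ≤ (∫ s in Ioo (t i) (t (i+1)), H s) ^ 2 :=
            piece_bound H hmono hpos hintIcc _ _ hmi.1 hab hmi1.2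
        _ = (I / n) ^ 2 := by rw [hVi]
    calc partErr H n t ≤ ∑ i ∈ Finset.range n, (I / n) ^ 2 := Finset.sum_le_sum hterm
      _ = n * (I / n) ^ 2 := by rw [Finset.sum_const, Finset.card_range, nsmul_eq_mul]
      _ = I ^ 2 / n := by field_simp
  have h1 : Real.sqrt (partErr H n t) ≤ Real.sqrt (I ^ 2 / n) := Real.sqrt_le_sqrt hbound
  have h2 : Real.sqrt (I ^ 2 / n) = I / Real.sqrt n := by
    rw [Real.sqrt_div (sq_nonneg I), Real.sqrt_sq hI0]
  linarith [h2 ▸ h1]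

theorem stmt0 (H : ℝ → ℝ) (hmono : MonotoneOn H (Ico (0 : ℝ) 1))
    (hpos : ∀ t ∈ Ico (0 : ℝ) 1, 0 ≤ H t)
    (hint : IntegrableOn H (Ico (0 : ℝ) 1))
    (I : ℝ) (hI : I = ∫ t in (0 : ℝ)..1, H t)
    (n : ℕ) (hn : 1 ≤ n) :
    ∃ t : ℕ → ℝ, IsPartition n t ∧
      (∀ i ≤ n, ∫ s in (0 : ℝ)..(t i), H s = (i / n) * I) ∧
      Real.sqrt (partErr H n t) ≤ I / Real.sqrt n := by
  have hintIcc : IntegrableOn H (Icc (0 : ℝ) 1) := (integrableOn_Icc_iff_integrableOn_Ico enorm_ne_top).2 hint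
  have hn0 : (0 : ℝ) < n := by exact_mod_cast hn
  set F : ℝ → ℝ := fun x => ∫ s in (0:ℝ)..x, H s with hFdef
  have hII : ∀ {x y : ℝ}, 0 ≤ x → y ≤ 1 → x ≤ y → IntervalIntegrable H volume x y := by
    intro x y hx hy hxy
    exact (hintIcc.mono_set (by rw [uIcc_of_le hxy]; exact Icc_subset_Icc hx hy)).intervalIntegrable
  have hFsub : ∀ {x y : ℝ}, 0 ≤ x → x ≤ y → y ≤ 1 →
      F y - F x = ∫ s in Ioo x y, H s := by
    intro x y hx hxy hy
    rw [hFdef]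
    rw [intervalIntegral.integral_interval_sub_left (hII le_rfl hy (by linarith))
      (hII le_rfl (by linarith) hx), intervalIntegral.integral_of_le hxy,
      integral_Ioc_eq_integral_Ioo]
  have hFmono : MonotoneOn F (Icc (0:ℝ) 1) := by
    intro x hx y hy hxy
    have := hFsub hx.1 hxy hy.2
    have h0 : 0 ≤ ∫ s in Ioo x y, H s :=
      setIntegral_nonneg measurableSet_Ioo
        (fun u hu => hpos u ⟨le_trans hx.1 (le_of_lt hu.1), lt_of_lt_of_le hu.2 hy.2⟩)
    linarith
  have hF0 : F 0 = 0 := intervalIntegral.integral_same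
  have hF1 : F 1 = I := hI.symm
  have hI0 : 0 ≤ I := by
    have := hFmono (left_mem_Icc.2 zero_le_one) (right_mem_Icc.2 zero_le_one) zero_le_one
    rw [hF0, hF1] at this; exact this
  have hFcont : ContinuousOn F (Icc (0:ℝ) 1) := by
    have := intervalIntegral.continuousOn_primitive_interval
      (f := H) (a := (0:ℝ)) (b := 1) (μ := volume)
      (by rw [uIcc_of_le zero_le_one]; exact hintIcc)
    rwa [uIcc_of_le zero_le_one] at this
  -- construct the partition
  obtain ⟨t, hpart, hmem, hval⟩ :
      ∃ t : ℕ → ℝ, IsPartition n t ∧ (∀ i ≤ n, t i ∈ Icc (0:ℝ) 1) ∧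
        (∀ i ≤ n, F (t i) = (i / n) * I) := by
    rcases eq_or_lt_of_le hI0 with hIz | hIpos
    · -- I = 0 : uniform partition
      refine ⟨fun i => (i : ℝ) / n, ⟨by simp, by field_simp, fun i hi => by
        apply div_lt_div_of_pos_right ?_ hn0
        exact_mod_cast Nat.lt_succ_self i⟩, fun i hi => ?_, fun i hi => ?_⟩
      · constructor
        · positivity
        · rw [div_le_one hn0]; exact_mod_cast hi
      · have hmem : (i : ℝ) / n ∈ Icc (0:ℝ) 1 :=
          ⟨by positivity, by rw [div_le_one hn0]; exact_mod_cast hi⟩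
        have h1 := hFmono (left_mem_Icc.2 zero_le_one) hmem hmem.1
        have h2 := hFmono hmem (right_mem_Icc.2 zero_le_one) hmem.2
        rw [hF0] at h1; rw [hF1, ← hIz] at h2
        rw [← hIz]
        have : F ((i:ℝ)/n) = 0 := le_antisymm h2 h1
        rw [this]; ring
    · -- I > 0 : intermediate value theorem
      have hIVT : ∀ i : ℕ, i ≤ n → ∃ x, x ∈ Icc (0:ℝ) 1 ∧ F x = (i / n) * I := by
        intro i hi
        have hle1 : (i:ℝ)/n ≤ 1 := by rw [div_le_one hn0]; exact_mod_cast hi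
        have hge0 : (0:ℝ) ≤ (i:ℝ)/n := by positivity
        have hc : ((i:ℝ) / n) * I ∈ Icc (F 0) (F 1) := by
          rw [hF0, hF1]
          exact ⟨by positivity, by nlinarith⟩
        obtain ⟨x, hx, hFx⟩ := intermediate_value_Icc zero_le_one hFcont hc
        exact ⟨x, hx, hFx⟩
      classical
      set t : ℕ → ℝ := fun i =>
        if i = 0 then 0 else if n ≤ i then 1 else
          if h : ∃ x, x ∈ Icc (0:ℝ) 1 ∧ F x = (i / n) * I then h.choose else 0 with htdef
      have hprop : ∀ i ≤ n, t i ∈ Icc (0:ℝ) 1 ∧ F (t i) = (i / n) * I := by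
        intro i hi
        rcases Nat.eq_zero_or_pos i with h0 | h0
        · subst h0
          simp only [htdef, if_pos rfl]
          exact ⟨⟨le_rfl, zero_le_one⟩, by rw [hF0]; simp⟩
        rcases eq_or_lt_of_le hi with hin | hin
        · subst hin
          have : ¬ (i = 0) := Nat.pos_iff_ne_zero.1 h0
          simp only [htdef, if_neg this, if_pos le_rfl]
          refine ⟨⟨zero_le_one, le_rfl⟩, ?_⟩
          rw [hF1, div_self (ne_of_gt hn0)]; ring
        · have h1 : ¬ (i = 0) := Nat.pos_iff_ne_zero.1 h0
          have h2 : ¬ (n ≤ i) := not_le.2 hin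
          have hex := hIVT i hi
          simp only [htdef, if_neg h1, if_neg h2, dif_pos hex]
          exact ⟨hex.choose_spec.1, hex.choose_spec.2⟩
      refine ⟨t, ⟨?_, ?_, ?_⟩, fun i hi => (hprop i hi).1, fun i hi => (hprop i hi).2⟩
      · simp [htdef]
      · have := (hprop n le_rfl).2
        simp only [htdef, if_neg (Nat.pos_iff_ne_zero.1 (lt_of_lt_of_le Nat.one_pos hn)),
          if_pos le_rfl]
      · intro i hi
        have hvi := (hprop i (le_of_lt hi)).2
        have hvi1 := (hprop (i+1) hi).2
        have hlt : F (t i) < F (t (i+1)) := by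
          rw [hvi, hvi1]
          refine mul_lt_mul_of_pos_right ?_ hIpos
          apply div_lt_div_of_pos_right ?_ hn0
          exact_mod_cast Nat.lt_succ_self i
        by_contra hle
        push_neg at hle
        have := hFmono (hprop (i+1) hi).1 (hprop i (le_of_lt hi)).1 hle
        linarith
  exact ⟨t, hpart, hval, main_aux H hmono hpos hint I hI n hn t hpart hmem hval⟩
end

section
/- Let H : [0,1) → [0,∞) be increasing. Then for all n ≥ 2, Aₙ(H)² ≤ inf_{T ∈ (0,1)} [ (∫₀ᵀ H(t) dt)² / (n−1) + ∫_T¹ (1−t) H(t)² dt ]. -/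
open MeasureTheory Set

lemma key_interval (H : ℝ → ℝ) (hmono : MonotoneOn H (Ico (0 : ℝ) 1))
    (hpos : ∀ t ∈ Ico (0 : ℝ) 1, 0 ≤ H t) {T a b : ℝ} (hT1 : T < 1)
    (hint : IntegrableOn H (Icc (0 : ℝ) T))
    (ha : 0 ≤ a) (hab : a ≤ b) (hbT : b ≤ T) :
    (∫ s in a..b, (b - s) * H s ^ 2) ≤ (∫ s in a..b, H s) ^ 2 := by
  have hsub : ∀ {x y : ℝ}, 0 ≤ x → x ≤ y → y ≤ T → IntervalIntegrable H volume x y := by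
    intro x y hx hxy hyT
    rw [intervalIntegrable_iff_integrableOn_Icc_of_le hxy]
    exact hint.mono_set (Icc_subset_Icc hx hyT)
  have hTmem : T ∈ Ico (0 : ℝ) 1 := ⟨le_trans ha (hab.trans hbT), hT1⟩
  set K := ∫ s in a..b, H s with hKdef
  have hmemIco : ∀ s ∈ Icc a b, s ∈ Ico (0 : ℝ) 1 := fun s hs =>
    ⟨le_trans ha hs.1, lt_of_le_of_lt (hs.2.trans hbT) hT1⟩
  have hK : 0 ≤ K := intervalIntegral.integral_nonneg hab fun u hu => hpos u (hmemIco u hu)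
  -- pointwise bound
  have hpt : ∀ s ∈ Icc a b, (b - s) * H s ^ 2 ≤ H s * K := by
    intro s hs
    have hs01 := hmemIco s hs
    have hHs : 0 ≤ H s := hpos s hs01
    have h1 : (b - s) * H s ≤ ∫ u in s..b, H u := by
      have := intervalIntegral.integral_mono_on (μ := volume) hs.2
        (intervalIntegrable_const (c := H s)) (hsub hs01.1 hs.2 hbT)
        (fun u hu => hmono hs01 (hmemIco u ⟨hs.1.trans hu.1, hu.2⟩) hu.1)
      simpa [smul_eq_mul] using this
    have h2 : (∫ u in s..b, H u) ≤ K := by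
      have hadd := intervalIntegral.integral_add_adjacent_intervals
        (hsub ha hs.1 (hs.2.trans hbT)) (hsub hs01.1 hs.2 hbT)
      have h3 : 0 ≤ ∫ u in a..s, H u :=
        intervalIntegral.integral_nonneg hs.1 fun u hu =>
          hpos u (hmemIco u ⟨hu.1, hu.2.trans hs.2⟩)
      rw [hKdef, ← hadd]; linarith
    nlinarith [mul_le_mul_of_nonneg_right (h1.trans h2) hHs]
  -- integrability of the lhs integrand
  have hHmeas : AEStronglyMeasurable H (volume.restrict (Icc a b)) :=
    hint.aestronglyMeasurable.mono_measure
      (Measure.restrict_mono (Icc_subset_Icc ha hbT) le_rfl)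
  have hfmeas : AEStronglyMeasurable (fun s => (b - s) * H s ^ 2) (volume.restrict (Icc a b)) :=
    ((continuous_const.sub continuous_id).aestronglyMeasurable).mul (hHmeas.pow 2)
  have hgint : IntegrableOn (fun s => ((b - a) * H T) * H s) (Icc a b) :=
    ((hint.mono_set (Icc_subset_Icc ha hbT)).const_mul _)
  have hfint : IntegrableOn (fun s => (b - s) * H s ^ 2) (Icc a b) := by
    refine hgint.integrable.mono hfmeas ?_
    refine (ae_restrict_iff' measurableSet_Icc).2 (ae_of_all _ fun s hs => ?_)
    have hs01 := hmemIco s hs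
    have hHs : 0 ≤ H s := hpos s hs01
    have hHsT : H s ≤ H T := hmono hs01 hTmem (hs.2.trans hbT)
    rw [Real.norm_eq_abs, Real.norm_eq_abs, abs_of_nonneg (by nlinarith [hs.1, hs.2] : (0:ℝ) ≤ (b - s) * H s ^ 2), abs_of_nonneg (mul_nonneg (mul_nonneg (sub_nonneg.2 hab) (hpos T hTmem)) hHs : (0:ℝ) ≤ (b - a) * H T * H s)]
    nlinarith [mul_le_mul (by linarith [hs.1] : b - s ≤ b - a)
      (mul_le_mul_of_nonneg_right hHsT hHs) (mul_nonneg hHs hHs)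
      (by linarith : (0:ℝ) ≤ b - a), sq_nonneg (H s)]
  have hfii : IntervalIntegrable (fun s => (b - s) * H s ^ 2) volume a b := by
    rw [intervalIntegrable_iff_integrableOn_Icc_of_le hab]; exact hfint
  have hgii : IntervalIntegrable (fun s => H s * K) volume a b :=
    (hsub ha hab hbT).mul_const K
  calc (∫ s in a..b, (b - s) * H s ^ 2) ≤ ∫ s in a..b, H s * K :=
        intervalIntegral.integral_mono_on hab hfii hgii hpt
    _ = K * K := by rw [intervalIntegral.integral_mul_const]
    _ = K ^ 2 := (sq K).symm



/-- Construction of an equal-mass partition of `[0,T]` into `m` pieces. -/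
lemma exists_equal_partition (H : ℝ → ℝ) (hpos : ∀ t ∈ Ico (0 : ℝ) 1, 0 ≤ H t)
    {T : ℝ} (hT : T ∈ Ioo (0 : ℝ) 1) (hint : IntegrableOn H (Icc (0 : ℝ) T))
    (m : ℕ) (hm : 1 ≤ m) :
    ∃ t : ℕ → ℝ, t 0 = 0 ∧ t m = T ∧ (∀ i, m < i → t i = 1) ∧
      (∀ i ≤ m, t i ∈ Icc (0 : ℝ) T) ∧ (∀ i < m, t i < t (i + 1)) ∧
      (∀ i < m, (∫ s in t i..t (i + 1), H s) = (∫ s in (0:ℝ)..T, H s) / m) := by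
  have hT0 : (0:ℝ) ≤ T := hT.1.le
  have hsub : ∀ {x y : ℝ}, 0 ≤ x → x ≤ y → y ≤ T → IntervalIntegrable H volume x y := by
    intro x y hx hxy hyT
    rw [intervalIntegrable_iff_integrableOn_Icc_of_le hxy]
    exact hint.mono_set (Icc_subset_Icc hx hyT)
  set F : ℝ → ℝ := fun x => ∫ s in (0:ℝ)..x, H s with hF
  have hF0 : F 0 = 0 := intervalIntegral.integral_same
  have hFcont : ContinuousOn F (Icc 0 T) := by
    have := intervalIntegral.continuousOn_primitive_interval (a := (0:ℝ)) (b := T)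
      (μ := volume) (f := H) (by rwa [uIcc_of_le hT0])
    rwa [uIcc_of_le hT0] at this
  have hFdiff : ∀ {x y : ℝ}, 0 ≤ x → x ≤ y → y ≤ T →
      F y - F x = ∫ s in x..y, H s := by
    intro x y hx hxy hyT
    have := intervalIntegral.integral_add_adjacent_intervals
      (hsub le_rfl hx (hxy.trans hyT)) (hsub hx hxy hyT)
    simp only [hF]; linarith [this]
  have hFmono : MonotoneOn F (Icc 0 T) := by
    intro x hx y hy hxy
    have h := hFdiff hx.1 hxy hy.2
    have h2 : 0 ≤ ∫ s in x..y, H s :=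
      intervalIntegral.integral_nonneg hxy fun u hu =>
        hpos u ⟨hx.1.trans hu.1, lt_of_le_of_lt (hu.2.trans hy.2) hT.2⟩
    linarith
  set I := ∫ s in (0:ℝ)..T, H s with hI
  have hI0 : 0 ≤ I :=
    intervalIntegral.integral_nonneg hT0 fun u hu =>
      hpos u ⟨hu.1, lt_of_le_of_lt hu.2 hT.2⟩
  have hm0 : (0:ℝ) < m := by exact_mod_cast hm
  rcases eq_or_lt_of_le hI0 with hIzero | hIpos
  · -- I = 0 : uniform partition
    refine ⟨fun i => if i ≤ m then (i : ℝ) * T / m else 1, by simp, by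
      field_simp; simp, fun i hi => by simp [Nat.not_le.mpr hi], fun i hi => ?_, fun i hi => ?_, fun i hi => ?_⟩
    · simp only [if_pos hi]
      constructor
      · positivity
      · rw [div_le_iff₀ hm0]
        have : (i:ℝ) ≤ m := by exact_mod_cast hi
        nlinarith
    · simp only [if_pos hi.le, if_pos (Nat.succ_le_of_lt hi)]
      push_cast
      have : (i:ℝ) < m := by exact_mod_cast hi
      rw [div_lt_div_iff₀ hm0 hm0]
      nlinarith [hT.1]
    · have hmem : ∀ j ≤ m, ((j:ℝ) * T / m) ∈ Icc (0:ℝ) T := by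
        intro j hj
        constructor
        · positivity
        · rw [div_le_iff₀ hm0]
          have : (j:ℝ) ≤ m := by exact_mod_cast hj
          nlinarith
      simp only [if_pos hi.le, if_pos (Nat.succ_le_of_lt hi)]
      have h1 := hmem i hi.le
      have h2 := hmem (i+1) (Nat.succ_le_of_lt hi)
      have hle : (i:ℝ) * T / m ≤ (i+1:ℕ) * T / m := by
        gcongr
        exact_mod_cast Nat.le_succ i
      have hd := hFdiff h1.1 hle h2.2
      have hFub := hFmono (left_mem_Icc.2 hT0) h1 h1.1
      have hFub2 := hFmono (left_mem_Icc.2 hT0) h2 h2.1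
      have hFlb := hFmono h1 (right_mem_Icc.2 hT0) h1.2
      have hFlb2 := hFmono h2 (right_mem_Icc.2 hT0) h2.2
      rw [hF0] at hFub hFub2
      have hFT : F T = I := rfl
      rw [hFT, ← hIzero] at hFlb hFlb2
      rw [← hd, ← hIzero, zero_div]
      push_cast at hFlb hFlb2 hFub hFub2 ⊢
      linarith
  · -- I > 0 : mass partition via sSup
    set c := I / m with hc
    have hc0 : 0 < c := div_pos hIpos hm0
    set t : ℕ → ℝ := fun i =>
      if i = 0 then 0 else if i < m then sSup {s ∈ Icc (0:ℝ) T | F s ≤ i * c}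
      else if i = m then T else 1 with ht
    have hFT : F T = I := rfl
    have hScompact : ∀ i : ℕ, IsCompact {s ∈ Icc (0:ℝ) T | F s ≤ i * c} := by
      intro i
      exact IsCompact.of_isClosed_subset (isCompact_Icc (a := (0:ℝ)) (b := T))
        (hFcont.preimage_isClosed_of_isClosed isClosed_Icc isClosed_Iic)
        (fun s hs => hs.1)
    have hSne : ∀ i : ℕ, ({s ∈ Icc (0:ℝ) T | F s ≤ i * c}).Nonempty := by
      intro i
      exact ⟨0, ⟨left_mem_Icc.2 hT0, by rw [hF0]; positivity⟩⟩
    have hmem : ∀ i ≤ m, t i ∈ Icc (0:ℝ) T := by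
      intro i hi
      rcases Nat.eq_zero_or_pos i with h0 | h1
      · simp [ht, h0, left_mem_Icc.2 hT0]
      rcases lt_or_eq_of_le hi with him | him
      · have := (hScompact i).sSup_mem (hSne i)
        simp only [ht, if_neg (Nat.pos_iff_ne_zero.mp h1), if_pos him]
        exact this.1
      · have hmne : m ≠ 0 := by omega
        subst him
        simp [ht, hmne, hT0]
    have hFt : ∀ i ≤ m, F (t i) = i * c := by
      intro i hi
      rcases Nat.eq_zero_or_pos i with h0 | h1
      · simp [ht, h0, hF0]
      rcases lt_or_eq_of_le hi with him | him
      · have hti : t i = sSup {s ∈ Icc (0:ℝ) T | F s ≤ i * c} := by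
          simp [ht, Nat.pos_iff_ne_zero.mp h1, him]
        have hmem' := (hScompact i).sSup_mem (hSne i)
        rw [← hti] at hmem'
        -- IVT gives a point with F s = i * c
        have hic : (i:ℝ) * c ∈ Icc (F 0) (F T) := by
          rw [hF0, hFT]
          refine ⟨by positivity, ?_⟩
          have him' : (i:ℝ) ≤ m := by exact_mod_cast hi
          calc (i:ℝ) * c ≤ m * c := by nlinarith [hc0.le]
            _ = I := by rw [hc]; field_simp
        obtain ⟨s, hsmem, hsF⟩ := intermediate_value_Icc hT0 hFcont hic
        have hsle : s ≤ t i := by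
          rw [hti]
          exact le_csSup (hScompact i).bddAbove ⟨hsmem, le_of_eq hsF⟩
        have hle := hFmono hsmem hmem'.1 hsle
        exact le_antisymm hmem'.2 (hsF ▸ hle)
      · have hmne : m ≠ 0 := by omega
        subst him
        have hti : t i = T := by simp [ht, hmne]
        rw [hti, hFT, hc]; field_simp
    have hstrict : ∀ i < m, t i < t (i + 1) := by
      intro i hi
      have h1 := hmem i hi.le
      have h2 := hmem (i+1) (Nat.succ_le_of_lt hi)
      have hf1 := hFt i hi.le
      have hf2 := hFt (i+1) (Nat.succ_le_of_lt hi)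
      by_contra hcon
      push_neg at hcon
      have := hFmono h2 h1 hcon
      rw [hf1, hf2] at this
      push_cast at this
      nlinarith
    refine ⟨t, by simp [ht], by
        have hmne : m ≠ 0 := by omega
        simp [ht, hmne], fun i hi => by
        have h1 : i ≠ 0 := by omega
        have h2 : ¬ i < m := by omega
        have h3 : i ≠ m := by omega
        simp [ht, h1, h2, h3], hmem, hstrict, fun i hi => ?_⟩
    have h1 := hmem i hi.le
    have h2 := hmem (i+1) (Nat.succ_le_of_lt hi)
    have hd := hFdiff h1.1 (hstrict i hi).le h2.2
    rw [hFt i hi.le, hFt (i+1) (Nat.succ_le_of_lt hi)] at hd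
    rw [← hd, hc]
    push_cast
    ring

lemma An_sq_le (H : ℝ → ℝ) (n : ℕ) (t : ℕ → ℝ) (hp : IsPartition n t)
    (hnn : 0 ≤ partErr H n t) : An H n ^ 2 ≤ partErr H n t := by
  have hbdd : BddBelow { x | ∃ t : ℕ → ℝ, IsPartition n t ∧ x = Real.sqrt (partErr H n t) } :=
    ⟨0, fun x ⟨t', _, hx⟩ => hx ▸ Real.sqrt_nonneg _⟩
  have hne : { x | ∃ t : ℕ → ℝ, IsPartition n t ∧ x = Real.sqrt (partErr H n t) }.Nonempty :=
    ⟨_, t, hp, rfl⟩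
  have h1 : An H n ≤ Real.sqrt (partErr H n t) := csInf_le hbdd ⟨t, hp, rfl⟩
  have h0 : 0 ≤ An H n := le_csInf hne fun x ⟨t', _, hx⟩ => hx ▸ Real.sqrt_nonneg _
  calc An H n ^ 2 ≤ Real.sqrt (partErr H n t) ^ 2 := by gcongr
    _ = partErr H n t := Real.sq_sqrt hnn

theorem stmt4 (H : ℝ → ℝ) (hmono : MonotoneOn H (Ico (0 : ℝ) 1))
    (hpos : ∀ t ∈ Ico (0 : ℝ) 1, 0 ≤ H t)
    (n : ℕ) (hn : 2 ≤ n) (T : ℝ) (hT : T ∈ Ioo (0 : ℝ) 1)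
    (hint : IntegrableOn H (Icc (0 : ℝ) T)) :
    An H n ^ 2 ≤ (∫ t in (0 : ℝ)..T, H t) ^ 2 / (n - 1)
      + ∫ t in T..(1 : ℝ), (1 - t) * H t ^ 2 := by
  set m := n - 1 with hmdef
  have hm : 1 ≤ m := by omega
  have hn' : n = m + 1 := by omega
  obtain ⟨t, ht0, htm, htgt, hmem, hstrict, hintv⟩ :=
    exists_equal_partition H hpos hT hint m hm
  have htn : t n = 1 := htgt n (by omega)
  have hpart : IsPartition n t := by
    refine ⟨ht0, htn, fun i hi => ?_⟩
    rcases lt_or_eq_of_le (by omega : i ≤ m) with h | h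
    · exact hstrict i h
    · rw [h, htm, htgt (m+1) (by omega)]
      exact hT.2
  have hm0 : (0:ℝ) < m := by exact_mod_cast hm
  set I := ∫ s in (0:ℝ)..T, H s with hI
  -- nonnegativity of partErr
  have hterm_nonneg : ∀ i < n, 0 ≤ ∫ s in t i..t (i+1), (t (i+1) - s) * H s ^ 2 := by
    intro i hi
    refine intervalIntegral.integral_nonneg (hpart.2.2 i hi).le fun u hu => ?_
    exact mul_nonneg (by linarith [hu.2]) (sq_nonneg _)
  have hnn : 0 ≤ partErr H n t :=
    Finset.sum_nonneg fun i hi => hterm_nonneg i (Finset.mem_range.mp hi)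
  refine le_trans (An_sq_le H n t hpart hnn) ?_
  have hsplit : partErr H n t =
      (∑ i ∈ Finset.range m, ∫ s in t i..t (i + 1), (t (i + 1) - s) * H s ^ 2)
        + ∫ s in T..(1:ℝ), (1 - s) * H s ^ 2 := by
    rw [partErr, hn', Finset.sum_range_succ, htm, htgt (m+1) (by omega)]
  rw [hsplit]
  have hcast : ((n:ℝ) - 1) = (m:ℝ) := by
    rw [hmdef]
    push_cast [Nat.cast_sub (by omega : 1 ≤ n)]
    ring
  rw [hcast]
  have hbound : ∀ i ∈ Finset.range m,
      (∫ s in t i..t (i + 1), (t (i + 1) - s) * H s ^ 2) ≤ I ^ 2 / m ^ 2 := by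
    intro i hi
    rw [Finset.mem_range] at hi
    have h1 := hmem i hi.le
    have h2 := hmem (i+1) (Nat.succ_le_of_lt hi)
    calc (∫ s in t i..t (i + 1), (t (i + 1) - s) * H s ^ 2)
        ≤ (∫ s in t i..t (i + 1), H s) ^ 2 :=
          key_interval H hmono hpos hT.2 hint h1.1 (hstrict i hi).le h2.2
      _ = I ^ 2 / m ^ 2 := by rw [hintv i hi, div_pow]
  have hsum : (∑ i ∈ Finset.range m, ∫ s in t i..t (i + 1), (t (i + 1) - s) * H s ^ 2)
      ≤ I ^ 2 / m := by
    calc (∑ i ∈ Finset.range m, ∫ s in t i..t (i + 1), (t (i + 1) - s) * H s ^ 2)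
        ≤ ∑ _i ∈ Finset.range m, I ^ 2 / m ^ 2 := Finset.sum_le_sum hbound
      _ = m * (I ^ 2 / m ^ 2) := by rw [Finset.sum_const, Finset.card_range]; ring
      _ = I ^ 2 / m := by field_simp
  linarith
end

section
/- Let β ∈ (0,1). There exists a constant c ≥ 1 such that for all t ∈ [0,1), (1/c) · (1 − log(1−t))^{−(1+β)} / (1−t)² ≤ ∫₁^∞ z^{−β−2} (1−t)^{1/z − 2} dz ≤ c · (1 − log(1−t))^{−(1+β)} / (1−t)². -/
open MeasureTheory Set

lemma aux_pow_exp {p x : ℝ} (hp : 1 ≤ p) (hx : 0 ≤ x) :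
    (1 + x) ^ p ≤ (2 * p) ^ p * Real.exp x := by
  have hp0 : 0 < p := by linarith
  have h1 : 1 + x ≤ 2 * p * Real.exp (x / p) := by
    have h2 : x / p + 1 ≤ Real.exp (x / p) := Real.add_one_le_exp _
    have h3 : 2 * p * (x / p + 1) ≤ 2 * p * Real.exp (x / p) :=
      mul_le_mul_of_nonneg_left h2 (by linarith)
    have h4 : 2 * p * (x / p + 1) = 2 * x + 2 * p := by field_simp
    nlinarith
  calc (1 + x) ^ p ≤ (2 * p * Real.exp (x / p)) ^ p :=
        Real.rpow_le_rpow (by linarith) h1 hp0.le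
    _ = (2 * p) ^ p * Real.exp (x / p) ^ p :=
        Real.mul_rpow (by linarith) (Real.exp_nonneg _)
    _ = (2 * p) ^ p * Real.exp x := by
        rw [← Real.exp_mul, div_mul_cancel₀ _ hp0.ne']

set_option maxHeartbeats 2000000 in
theorem stmt5 (β : ℝ) (hβ : β ∈ Ioo (0 : ℝ) 1) :
    ∃ c : ℝ, 1 ≤ c ∧ ∀ t ∈ Ico (0 : ℝ) 1,
      (1 / c) * ((1 - Real.log (1 - t)) ^ (-(1 + β)) / (1 - t) ^ 2) ≤
          (∫ z in Ici (1 : ℝ), z ^ (-β - 2) * (1 - t) ^ (1 / z - 2)) ∧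
        (∫ z in Ici (1 : ℝ), z ^ (-β - 2) * (1 - t) ^ (1 / z - 2)) ≤
          c * ((1 - Real.log (1 - t)) ^ (-(1 + β)) / (1 - t) ^ 2) := by
  obtain ⟨hβ0, hβ1⟩ := hβ
  obtain ⟨p, hp_def⟩ : ∃ p : ℝ, p = β + 3/2 := ⟨_, rfl⟩
  have hp1 : 1 ≤ p := by rw [hp_def]; linarith
  obtain ⟨K, hK_def⟩ : ∃ K : ℝ, K = (2 * p) ^ p := ⟨_, rfl⟩
  have hK1 : 1 ≤ K := by
    rw [hK_def]
    calc (1:ℝ) = 1 ^ p := (Real.one_rpow p).symm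
      _ ≤ (2 * p) ^ p := Real.rpow_le_rpow zero_le_one (by linarith) (by linarith)
  refine ⟨2 * K + 25, by linarith, ?_⟩
  rintro t ⟨ht0, ht1⟩
  obtain ⟨s, hs_def⟩ : ∃ s : ℝ, s = 1 - t := ⟨_, rfl⟩
  rw [← hs_def]
  have hs : 0 < s := by rw [hs_def]; linarith
  have hs1 : s ≤ 1 := by rw [hs_def]; linarith
  obtain ⟨L, hL_def⟩ : ∃ L : ℝ, L = -Real.log s := ⟨_, rfl⟩
  have hlogs : Real.log s = -L := by rw [hL_def]; ring
  have hL0 : 0 ≤ L := by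
    have := Real.log_nonpos hs.le hs1
    rw [hL_def]; linarith
  obtain ⟨a, ha_def⟩ : ∃ a : ℝ, a = 1 + L := ⟨_, rfl⟩
  have ha1 : 1 ≤ a := by rw [ha_def]; linarith
  have ha0 : 0 < a := by linarith
  have hlog : 1 - Real.log s = a := by rw [hlogs, ha_def]; ring
  obtain ⟨f, hf_def⟩ : ∃ f : ℝ → ℝ, f = fun z => z ^ (-β - 2) * s ^ (1/z - 2) := ⟨_, rfl⟩
  rw [← hf_def]
  -- key pointwise formula
  have key : ∀ z : ℝ, 0 < z → s ^ (1/z - 2 : ℝ) = Real.exp (-(L/z)) / s ^ 2 := by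
    intro z hz
    have hexp2 : Real.exp (2 * L) = (s ^ 2)⁻¹ := by
      rw [show (2:ℝ) * L = -(2 * Real.log s) by rw [hlogs]; ring, Real.exp_neg,
        show (2:ℝ) * Real.log s = Real.log s + Real.log s by ring, Real.exp_add,
        Real.exp_log hs, sq]
    rw [Real.rpow_def_of_pos hs, hlogs,
      show -L * (1/z - 2) = -(L/z) + 2 * L by ring,
      Real.exp_add, hexp2]
    ring
  have hf_nonneg : ∀ z : ℝ, 0 ≤ z → 0 ≤ f z := by
    intro z hz
    rw [hf_def]
    exact mul_nonneg (Real.rpow_nonneg hz _) (Real.rpow_nonneg hs.le _)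
  have hne : ∀ x ∈ Ioi (1:ℝ), x ≠ 0 := fun x hx => ne_of_gt (lt_trans one_pos hx)
  have hf_cont : ContinuousOn f (Ioi 1) := by
    rw [hf_def]
    apply ContinuousOn.mul
    · exact continuousOn_id.rpow_const (fun x hx => Or.inl (hne x hx))
    · exact ContinuousOn.rpow continuousOn_const
        ((continuousOn_const.div continuousOn_id hne).sub continuousOn_const)
        (fun x _ => Or.inl hs.ne')
  have hs2 : s ^ ((-2 : ℝ)) = (s ^ 2)⁻¹ := by
    rw [Real.rpow_neg hs.le, show ((2:ℝ)) = ((2:ℕ):ℝ) by norm_num, Real.rpow_natCast]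
  have hf_le : ∀ z : ℝ, 0 < z → f z ≤ (s ^ 2)⁻¹ * z ^ (-β - 2) := by
    intro z hz
    rw [hf_def]
    simp only
    have h1 : s ^ (1/z - 2 : ℝ) ≤ s ^ ((-2 : ℝ)) :=
      Real.rpow_le_rpow_of_exponent_ge hs hs1
        (by have := one_div_pos.mpr hz; linarith)
    rw [hs2] at h1
    calc z ^ (-β - 2) * s ^ (1/z - 2 : ℝ) ≤ z ^ (-β - 2) * (s ^ 2)⁻¹ :=
          mul_le_mul_of_nonneg_left h1 (Real.rpow_nonneg hz.le _)
      _ = (s ^ 2)⁻¹ * z ^ (-β - 2) := mul_comm _ _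
  have h_rpow_int : IntegrableOn (fun z : ℝ => z ^ (-β - 2)) (Ioi 1) :=
    integrableOn_Ioi_rpow_of_lt (by linarith) one_pos
  have hf_int : IntegrableOn f (Ici 1) := by
    rw [integrableOn_Ici_iff_integrableOn_Ioi]
    apply Integrable.mono' (h_rpow_int.const_mul ((s ^ 2)⁻¹))
      (hf_cont.aestronglyMeasurable measurableSet_Ioi)
    filter_upwards [ae_restrict_mem measurableSet_Ioi] with z hz
    have hz0 : (0:ℝ) < z := lt_trans one_pos hz
    rw [Real.norm_eq_abs, abs_of_nonneg (hf_nonneg z hz0.le)]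
    exact hf_le z hz0

  -- splitting
  have hs2pos : (0:ℝ) < s ^ 2 := pow_pos hs 2
  have hK0 : (0:ℝ) < K := lt_of_lt_of_le one_pos hK1
  have haP : (0:ℝ) < a ^ p := Real.rpow_pos_of_pos ha0 p
  have hsub1 : Ioc (1:ℝ) a ⊆ Ici 1 := fun x hx => le_of_lt hx.1
  have hsub2 : Ioi a ⊆ Ici (1:ℝ) := fun x hx => le_trans ha1 (le_of_lt hx)
  have hsplit : ∫ z in Ici (1:ℝ), f z = (∫ z in Ioc 1 a, f z) + ∫ z in Ioi a, f z := by
    rw [integral_Ici_eq_integral_Ioi, ← Ioc_union_Ioi_eq_Ioi ha1,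
      setIntegral_union (Ioc_disjoint_Ioi le_rfl) measurableSet_Ioi
        (hf_int.mono_set hsub1) (hf_int.mono_set hsub2)]
  -- pointwise exponential bound
  have hexp_le : ∀ z : ℝ, 1 ≤ z → Real.exp (-(L/z)) ≤ K * (z ^ p / a ^ p) := by
    intro z hz
    have hz0 : (0:ℝ) < z := lt_of_lt_of_le one_pos hz
    have hx0 : 0 ≤ L / z := div_nonneg hL0 hz0.le
    have h1 : a / z ≤ 1 + L / z := by
      rw [ha_def, add_div]
      have h1z : 1 / z ≤ 1 := by rw [div_le_one hz0]; exact hz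
      linarith
    have h2 : (a / z) ^ p ≤ K * Real.exp (L / z) := by
      calc (a / z) ^ p ≤ (1 + L / z) ^ p :=
            Real.rpow_le_rpow (by positivity) h1 (by linarith)
        _ ≤ K * Real.exp (L / z) := by rw [hK_def]; exact aux_pow_exp hp1 hx0
    have hA0 : (0:ℝ) < (a / z) ^ p := Real.rpow_pos_of_pos (by positivity) p
    have h3 : (Real.exp (L/z))⁻¹ ≤ K / ((a / z) ^ p) := by
      rw [inv_eq_one_div, div_le_div_iff₀ (Real.exp_pos _) hA0]
      nlinarith [h2]
    have h4 : K / ((a / z) ^ p) = K * (z ^ p / a ^ p) := by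
      rw [Real.div_rpow ha0.le hz0.le, div_div_eq_mul_div, mul_div_assoc]
    rw [Real.exp_neg]
    rw [h4] at h3
    exact h3
  -- upper bound on Ioc 1 a
  have h12 : a ^ ((1:ℝ)/2) / a ^ p = a ^ (-(1+β)) := by
    rw [← Real.rpow_sub ha0]
    congr 1
    rw [hp_def]; ring
  have hf_le2 : ∀ z ∈ Ioc (1:ℝ) a, f z ≤ (K / (a ^ p * s ^ 2)) * z ^ (-(1:ℝ)/2) := by
    intro z hz
    have hz1 : (1:ℝ) < z := hz.1
    have hz0 : (0:ℝ) < z := lt_trans one_pos hz1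
    have hzz : z ^ (-β - 2) * z ^ p = z ^ (-(1:ℝ)/2) := by
      rw [← Real.rpow_add hz0]
      congr 1
      rw [hp_def]; ring
    have h4 : f z ≤ z ^ (-β-2) * ((K * (z ^ p / a ^ p)) / s ^ 2) := by
      simp only [hf_def]
      rw [key z hz0]
      exact mul_le_mul_of_nonneg_left
        ((div_le_div_iff_of_pos_right hs2pos).mpr (hexp_le z hz1.le)) (Real.rpow_nonneg hz0.le _)
    refine le_trans h4 (le_of_eq ?_)
    rw [← hzz]
    field_simp
  have hint_half : IntegrableOn (fun z : ℝ => z ^ (-(1:ℝ)/2)) (Ioc 0 a) := by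
    have h := intervalIntegral.intervalIntegrable_rpow' (a := 0) (b := a) (r := -(1:ℝ)/2) (by norm_num)
    rwa [intervalIntegrable_iff_integrableOn_Ioc_of_le ha0.le] at h
  have hval_half : ∫ z in Ioc (0:ℝ) a, z ^ (-(1:ℝ)/2) = 2 * a ^ ((1:ℝ)/2) := by
    rw [← intervalIntegral.integral_of_le ha0.le,
      integral_rpow (Or.inl (by norm_num)),
      show (-(1:ℝ)/2 + 1) = 1/2 by norm_num,
      Real.zero_rpow (by norm_num : (1:ℝ)/2 ≠ 0)]
    ring
  have hub1 : ∫ z in Ioc (1:ℝ) a, f z ≤ 2 * K * (a ^ (-(1+β)) / s ^ 2) := by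
    have hCint : IntegrableOn (fun z : ℝ => (K / (a ^ p * s ^ 2)) * z ^ (-(1:ℝ)/2)) (Ioc 0 a) :=
      hint_half.const_mul _
    calc ∫ z in Ioc (1:ℝ) a, f z
        ≤ ∫ z in Ioc (1:ℝ) a, (K / (a ^ p * s ^ 2)) * z ^ (-(1:ℝ)/2) :=
          setIntegral_mono_on (hf_int.mono_set hsub1)
            (hCint.mono_set (Ioc_subset_Ioc_left zero_le_one)) measurableSet_Ioc hf_le2
      _ ≤ ∫ z in Ioc (0:ℝ) a, (K / (a ^ p * s ^ 2)) * z ^ (-(1:ℝ)/2) := by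
          apply setIntegral_mono_set hCint
          · filter_upwards [ae_restrict_mem measurableSet_Ioc] with z hz
            exact mul_nonneg (div_nonneg hK0.le (mul_pos haP hs2pos).le)
              (Real.rpow_nonneg hz.1.le _)
          · exact HasSubset.Subset.eventuallyLE (Ioc_subset_Ioc_left zero_le_one)
      _ = (K / (a ^ p * s ^ 2)) * (2 * a ^ ((1:ℝ)/2)) := by
          rw [MeasureTheory.integral_const_mul, hval_half]
      _ = 2 * K * (a ^ (-(1+β)) / s ^ 2) := by
          rw [← h12]
          field_simp
  -- upper bound on Ioi a
  have h_rpow_int_a : IntegrableOn (fun z : ℝ => z ^ (-β - 2)) (Ioi a) :=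
    integrableOn_Ioi_rpow_of_lt (by linarith) ha0
  have hub2 : ∫ z in Ioi a, f z ≤ a ^ (-(1+β)) / s ^ 2 := by
    have hle : ∀ z ∈ Ioi a, f z ≤ (s ^ 2)⁻¹ * z ^ (-β - 2) := fun z hz =>
      hf_le z (lt_of_lt_of_le one_pos (le_trans ha1 (le_of_lt hz)))
    calc ∫ z in Ioi a, f z ≤ ∫ z in Ioi a, (s ^ 2)⁻¹ * z ^ (-β - 2) :=
          setIntegral_mono_on (hf_int.mono_set hsub2) (h_rpow_int_a.const_mul _)
            measurableSet_Ioi hle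
      _ = (s ^ 2)⁻¹ * (a ^ (-(1+β)) / (1+β)) := by
          rw [MeasureTheory.integral_const_mul, integral_Ioi_rpow_of_lt (by linarith) ha0,
            show (-β - 2 + 1 : ℝ) = -(1+β) by ring, neg_div_neg_eq]
      _ ≤ a ^ (-(1+β)) / s ^ 2 := by
          have h0 : 0 ≤ a ^ (-(1+β)) := Real.rpow_nonneg ha0.le _
          have h1 : a ^ (-(1+β)) / (1+β) ≤ a ^ (-(1+β)) := div_le_self h0 (by linarith)
          calc (s ^ 2)⁻¹ * (a ^ (-(1+β)) / (1+β)) ≤ (s ^ 2)⁻¹ * a ^ (-(1+β)) :=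
                mul_le_mul_of_nonneg_left h1 (inv_nonneg.mpr hs2pos.le)
            _ = a ^ (-(1+β)) / s ^ 2 := by rw [div_eq_mul_inv, mul_comm]
  -- lower bound
  have hIcc_sub : Icc a (2*a) ⊆ Ici (1:ℝ) := fun x hx => le_trans ha1 hx.1
  have hlb1 : ∫ z in Icc a (2*a), f z ≤ ∫ z in Ici (1:ℝ), f z := by
    apply setIntegral_mono_set hf_int
    · filter_upwards [ae_restrict_mem measurableSet_Ici] with z hz
      exact hf_nonneg z (le_trans zero_le_one hz)
    · exact HasSubset.Subset.eventuallyLE hIcc_sub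
  have hm : ∀ z ∈ Icc a (2*a), (2*a) ^ (-β-2) * Real.exp (-1) / s ^ 2 ≤ f z := by
    intro z hz
    have hz0 : (0:ℝ) < z := lt_of_lt_of_le ha0 hz.1
    have h1 : (2*a) ^ (-β - 2) ≤ z ^ (-β - 2) :=
      Real.rpow_le_rpow_of_nonpos hz0 hz.2 (by linarith)
    have h2 : Real.exp (-(1:ℝ)) ≤ Real.exp (-(L/z)) := by
      apply Real.exp_le_exp.mpr
      have hLz : L / z ≤ 1 := by
        rw [div_le_one hz0]
        calc L ≤ a := by rw [ha_def]; linarith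
          _ ≤ z := hz.1
      linarith
    have heq : f z = z ^ (-β-2) * Real.exp (-(L/z)) / s ^ 2 := by
      simp only [hf_def]
      rw [key z hz0, mul_div_assoc]
    rw [heq]
    gcongr
  have hvol : (volume (Icc a (2*a))).toReal = a := by
    rw [Real.volume_Icc, ENNReal.toReal_ofReal (by linarith)]
    ring
  have hlb2 : (2*a) ^ (-β-2) * Real.exp (-1) / s ^ 2 * a ≤ ∫ z in Icc a (2*a), f z := by
    have h := setIntegral_ge_of_const_le_real measurableSet_Icc
      (by rw [Real.volume_Icc]; exact ENNReal.ofReal_ne_top) hm (hf_int.mono_set hIcc_sub)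
    rwa [measureReal_def, hvol] at h
  have ha_pow : a ^ (-β-2:ℝ) * a = a ^ (-(1+β)) := by
    rw [← Real.rpow_add_one ha0.ne']
    congr 1
    ring
  have hfinal_lb : 1/(2*K+25) * (a ^ (-(1+β)) / s ^ 2) ≤
      (2*a) ^ (-β-2) * Real.exp (-1) / s ^ 2 * a := by
    have h2b : (1:ℝ)/8 ≤ (2:ℝ) ^ (-β-2:ℝ) := by
      have h8 : (2:ℝ) ^ (β+2:ℝ) ≤ 8 := by
        calc (2:ℝ) ^ (β+2:ℝ) ≤ (2:ℝ) ^ (3:ℝ) :=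
              Real.rpow_le_rpow_of_exponent_le one_le_two (by linarith)
          _ = 8 := by
              rw [show (3:ℝ) = ((3:ℕ):ℝ) by norm_num, Real.rpow_natCast]; norm_num
      have hpos : (0:ℝ) < (2:ℝ) ^ (β+2:ℝ) := Real.rpow_pos_of_pos two_pos _
      rw [show (-β-2:ℝ) = -(β+2) by ring, Real.rpow_neg (by norm_num : (0:ℝ) ≤ 2)]
      calc (1:ℝ)/8 = 8⁻¹ := one_div 8
        _ ≤ ((2:ℝ) ^ (β+2:ℝ))⁻¹ := inv_anti₀ hpos h8
    have he : (1:ℝ)/3 ≤ Real.exp (-1) := by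
      rw [Real.exp_neg]
      have h1 : Real.exp 1 ≤ 3 := by
        have := Real.exp_one_lt_d9; linarith
      calc (1:ℝ)/3 = 3⁻¹ := one_div 3
        _ ≤ (Real.exp 1)⁻¹ := inv_anti₀ (Real.exp_pos 1) h1
    have hconst : 1/(2*K+25) ≤ (2:ℝ) ^ (-β-2:ℝ) * Real.exp (-1) := by
      have hK25 : (24:ℝ) ≤ 2*K+25 := by linarith
      have h1 : 1/(2*K+25) ≤ 1/24 := by
        apply one_div_le_one_div_of_le (by norm_num) hK25
      nlinarith [h2b, he]
    have hX0 : 0 ≤ a ^ (-(1+β)) / s ^ 2 :=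
      div_nonneg (Real.rpow_nonneg ha0.le _) hs2pos.le
    calc 1/(2*K+25) * (a ^ (-(1+β)) / s ^ 2)
        ≤ ((2:ℝ) ^ (-β-2:ℝ) * Real.exp (-1)) * (a ^ (-(1+β)) / s ^ 2) :=
          mul_le_mul_of_nonneg_right hconst hX0
      _ = (2*a) ^ (-β-2) * Real.exp (-1) / s ^ 2 * a := by
          rw [Real.mul_rpow (by norm_num : (0:ℝ) ≤ 2) ha0.le, ← ha_pow]
          ring
  -- conclusion
  rw [hlog]
  have hX0 : 0 ≤ a ^ (-(1+β)) / s ^ 2 :=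
    div_nonneg (Real.rpow_nonneg ha0.le _) hs2pos.le
  constructor
  · calc 1/(2*K+25) * (a ^ (-(1+β)) / s ^ 2)
        ≤ (2*a) ^ (-β-2) * Real.exp (-1) / s ^ 2 * a := hfinal_lb
      _ ≤ ∫ z in Icc a (2*a), f z := hlb2
      _ ≤ ∫ z in Ici (1:ℝ), f z := hlb1
  · calc ∫ z in Ici (1:ℝ), f z = (∫ z in Ioc 1 a, f z) + ∫ z in Ioi a, f z := hsplit
      _ ≤ 2 * K * (a ^ (-(1+β)) / s ^ 2) + a ^ (-(1+β)) / s ^ 2 := add_le_add hub1 hub2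
      _ ≤ (2*K+25) * (a ^ (-(1+β)) / s ^ 2) := by nlinarith [hX0]
end

section
/- Let θ ∈ [1,2) and define H_θ(t) = √((2−θ)(1−t)^{−θ}) for t ∈ [0,1). Then for all n ≥ 1 and every partition 0 = t₀ < ⋯ < tₙ = 1, one has ∑_{i=1}^n ∫_{t_{i-1}}^{t_i} (tᵢ − t) H_θ(t)² dt ≥ (θ−1)^{n−1}. -/
open MeasureTheory Set

lemma calcLast {θ a : ℝ} (hθ2 : θ < 2) (ha : a < 1) :
    ∫ s in a..(1:ℝ), (1 - s) * ((2 - θ) * (1 - s) ^ (-θ)) = (1 - a) ^ (2 - θ) := by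
  have h1 : (∫ s in a..(1:ℝ), (1 - s) * ((2 - θ) * (1 - s) ^ (-θ)))
      = ∫ u in (0:ℝ)..(1 - a), u * ((2 - θ) * u ^ (-θ)) := by
    have := intervalIntegral.integral_comp_sub_left
      (fun u : ℝ => u * ((2 - θ) * u ^ (-θ))) 1 (a := a) (b := 1)
    simpa using this
  rw [h1]
  have hx : (0:ℝ) < 1 - a := by linarith
  have h2 : ∀ u ∈ Set.uIoc (0:ℝ) (1 - a), u * ((2 - θ) * u ^ (-θ)) = (2 - θ) * u ^ (1 - θ) := by
    intro u hu
    rw [Set.uIoc_of_le hx.le, Set.mem_Ioc] at hu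
    rw [show (1:ℝ) - θ = 1 + (-θ) by ring, Real.rpow_add hu.1, Real.rpow_one]
    ring
  rw [intervalIntegral.integral_congr_ae (MeasureTheory.ae_of_all _ h2),
    intervalIntegral.integral_const_mul,
    integral_rpow (Or.inl (by linarith : (-1:ℝ) < 1 - θ))]
  rw [show (1:ℝ) - θ + 1 = 2 - θ by ring, Real.zero_rpow (by linarith)]
  rw [sub_zero, mul_comm, div_mul_cancel₀ _ (by linarith : (2:ℝ) - θ ≠ 0)]

lemma calcMid {θ a b : ℝ} (hθ1 : 1 < θ) (hθ2 : θ < 2) (hab : a < b) (hb : b < 1) :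
    ∫ s in a..b, (b - s) * ((2 - θ) * (1 - s) ^ (-θ))
      = (1 - a) ^ (2 - θ) - (1 - b) ^ (2 - θ) / (θ - 1)
        + ((2 - θ) / (θ - 1)) * (1 - b) * (1 - a) ^ (1 - θ) := by
  set y := 1 - b with hy
  set X := 1 - a with hxd
  have hy0 : 0 < y := by simp [hy]; linarith
  have hyx : y < X := by simp [hy, hxd]; linarith
  have h1 : (∫ s in a..b, (b - s) * ((2 - θ) * (1 - s) ^ (-θ)))
      = ∫ u in y..X, (u - y) * ((2 - θ) * u ^ (-θ)) := by
    rw [← intervalIntegral.integral_comp_sub_left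
      (fun u : ℝ => (u - y) * ((2 - θ) * u ^ (-θ))) 1]
    apply intervalIntegral.integral_congr
    intro s _
    simp only [hy]
    ring_nf
  rw [h1]
  have h0 : (0:ℝ) ∉ Set.uIcc y X := by
    rw [Set.uIcc_of_le hyx.le, Set.mem_Icc]
    push_neg
    intro h; linarith
  have h2 : ∀ u ∈ Set.uIoc y X, (u - y) * ((2 - θ) * u ^ (-θ))
      = (2 - θ) * u ^ (1 - θ) - ((2 - θ) * y) * u ^ (-θ) := by
    intro u hu
    rw [Set.uIoc_of_le hyx.le, Set.mem_Ioc] at hu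
    have hu0 : 0 < u := lt_trans hy0 hu.1
    rw [show (1:ℝ) - θ = 1 + (-θ) by ring, Real.rpow_add hu0, Real.rpow_one]
    ring
  rw [intervalIntegral.integral_congr_ae (MeasureTheory.ae_of_all _ h2)]
  have hi1 : IntervalIntegrable (fun u : ℝ => u ^ (1 - θ)) volume y X :=
    intervalIntegral.intervalIntegrable_rpow (Or.inr h0)
  have hi2 : IntervalIntegrable (fun u : ℝ => u ^ (-θ)) volume y X :=
    intervalIntegral.intervalIntegrable_rpow (Or.inr h0)
  rw [intervalIntegral.integral_sub (hi1.const_mul _) (hi2.const_mul _),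
    intervalIntegral.integral_const_mul, intervalIntegral.integral_const_mul,
    integral_rpow (Or.inl (by linarith : (-1:ℝ) < 1 - θ)),
    integral_rpow (Or.inr ⟨by intro h; apply absurd h; simp; linarith, h0⟩)]
  have e1 : (1:ℝ) - θ + 1 = 2 - θ := by ring
  have e2 : -θ + 1 = 1 - θ := by ring
  rw [e1, e2]
  have hyy : y * y ^ ((1:ℝ) - θ) = y ^ ((2:ℝ) - θ) := by
    rw [show (2:ℝ) - θ = 1 + (1 - θ) by ring, Real.rpow_add hy0, Real.rpow_one]
  have hθ1' : θ - 1 ≠ 0 := by linarith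
  have h1θ' : (1:ℝ) - θ ≠ 0 := by linarith
  have hθ2' : (2:ℝ) - θ ≠ 0 := by linarith
  rw [← hyy]
  field_simp
  ring

lemma keyIneq {κ x y c : ℝ} (hκ0 : 0 < κ) (hκ1 : κ < 1) (hy : 0 < y) (hyx : y ≤ x)
    (hc0 : 0 < c) (hc1 : c ≤ 1) :
    c * κ * x ^ (1 - κ) ≤
      x ^ (1 - κ) - y ^ (1 - κ) / κ + ((1 - κ) / κ) * y * x ^ (-κ) + c * y ^ (1 - κ) := by
  have hx : 0 < x := lt_of_lt_of_le hy hyx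
  set z : ℝ := y / x with hz
  have hz0 : 0 ≤ z := div_nonneg hy.le hx.le
  have hAM : z ^ (1 - κ) ≤ κ + (1 - κ) * z := by
    have := Real.geom_mean_le_arith_mean2_weighted (by linarith : (0:ℝ) ≤ 1 - κ) hκ0.le
      hz0 zero_le_one (by ring)
    simpa [Real.one_rpow, add_comm] using this
  have hzx : z * x = y := div_mul_cancel₀ _ hx.ne'
  have hyk : y ^ (1 - κ) = z ^ (1 - κ) * x ^ (1 - κ) := by
    rw [← Real.mul_rpow hz0 hx.le, hzx]
  have hyX : y * x ^ (-κ) = z * x ^ (1 - κ) := by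
    rw [← hzx, show (1:ℝ) - κ = 1 + (-κ) by ring, Real.rpow_add hx, Real.rpow_one]
    ring
  rw [hyk, mul_assoc ((1 - κ) / κ), hyX]
  set X := x ^ (1 - κ) with hX
  have hX0 : 0 < X := Real.rpow_pos_of_pos hx _
  set Z := z ^ (1 - κ) with hZ
  have hZ0 : 0 ≤ Z := Real.rpow_nonneg hz0 _
  have hcκ : (0:ℝ) ≤ 1 - c * κ := by nlinarith
  have key : (1 - c * κ) * Z ≤ κ * (1 - c * κ) + (1 - κ) * z := by
    nlinarith [mul_le_mul_of_nonneg_left hAM hcκ,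
      mul_nonneg (mul_nonneg hc0.le hκ0.le) (mul_nonneg (by linarith : (0:ℝ) ≤ 1 - κ) hz0)]
  rw [← sub_nonneg]
  have expand : X - Z * X / κ + (1 - κ) / κ * (z * X) + c * (Z * X) - c * κ * X
      = ((κ * (1 - c * κ) + (1 - κ) * z - (1 - c * κ) * Z) * X) / κ := by
    field_simp
    ring
  rw [expand]
  exact div_nonneg (mul_nonneg (by linarith) hX0.le) hκ0.le

lemma chainLe {t : ℕ → ℝ} {m : ℕ} (h : ∀ i < m, t i < t (i + 1)) :
    ∀ {i j : ℕ}, i ≤ j → j ≤ m → t i ≤ t j := by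
  intro i j hij hjm
  induction j, hij using Nat.le_induction with
  | base => exact le_refl _
  | succ j hij ih => exact le_trans (ih (by omega)) (h j (by omega)).le

lemma mainInd {θ : ℝ} (hθ1 : 1 < θ) (hθ2 : θ < 2) :
    ∀ k : ℕ, 1 ≤ k → ∀ t : ℕ → ℝ, (∀ i < k, t i < t (i + 1)) → t k = 1 →
    (θ - 1) ^ (k - 1) * (1 - t 0) ^ (2 - θ)
      ≤ ∑ i ∈ Finset.range k,
          ∫ s in t i..t (i + 1), (t (i + 1) - s) * ((2 - θ) * (1 - s) ^ (-θ)) := by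
  intro k hk
  induction k, hk using Nat.le_induction with
  | base =>
    intro t hinc hend
    have h01 : t 0 < 1 := hend ▸ hinc 0 (by omega)
    rw [Finset.sum_range_one, hend, calcLast hθ2 h01]
    simp
  | succ k hk ih =>
    intro t hinc hend
    have h01 : t 0 < t 1 := hinc 0 (by omega)
    have h1k : t 1 < 1 := by
      have h1 : t 1 ≤ t k := chainLe hinc hk (by omega)
      have h2 : t k < t (k + 1) := hinc k (by omega)
      linarith [hend ▸ h2]
    have ihs := ih (fun i => t (i + 1)) (fun i hi => hinc (i + 1) (by omega))
      (by simpa using hend)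
    rw [Finset.sum_range_succ']
    have hc0 : (0:ℝ) < (θ - 1) ^ (k - 1) := pow_pos (by linarith) _
    have hc1 : (θ - 1) ^ (k - 1) ≤ 1 := pow_le_one₀ (by linarith) (by linarith)
    have hkey := keyIneq (κ := θ - 1) (x := 1 - t 0) (y := 1 - t 1) (c := (θ - 1) ^ (k - 1))
      (by linarith) (by linarith) (by linarith) (by linarith) hc0 hc1
    rw [show (1:ℝ) - (θ - 1) = 2 - θ by ring, show -(θ - 1) = 1 - θ by ring] at hkey
    have hmid := calcMid hθ1 hθ2 h01 h1k
    have hpow : (θ - 1) ^ (k - 1) * (θ - 1) = (θ - 1) ^ (k + 1 - 1) := by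
      rw [show k + 1 - 1 = (k - 1) + 1 by omega, pow_succ]
    rw [hpow] at hkey
    norm_num at ihs hkey ⊢
    linarith [hkey, ihs, hmid]

theorem stmt7 (θ : ℝ) (hθ : θ ∈ Ico (1 : ℝ) 2) (n : ℕ) (hn : 1 ≤ n)
    (t : ℕ → ℝ) (ht : IsPartition n t) :
    (θ - 1) ^ (n - 1) ≤
      ∑ i ∈ Finset.range n,
        ∫ s in (t i)..(t (i + 1)), (t (i + 1) - s) * ((2 - θ) * (1 - s) ^ (-θ)) := by
  obtain ⟨ht0, htn, hinc⟩ := ht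
  rcases eq_or_lt_of_le hθ.1 with heq | hgt
  · subst heq
    rcases eq_or_lt_of_le hn with h1 | h2
    · subst h1
      rw [Finset.sum_range_one, htn, calcLast (by norm_num) (by rw [ht0]; norm_num),
        ht0]
      norm_num
    · have hz : ((1:ℝ) - 1) ^ (n - 1) = 0 := by
        rw [sub_self]
        exact zero_pow (by omega)
      rw [hz]
      apply Finset.sum_nonneg
      intro i hi
      have hi' : i < n := Finset.mem_range.1 hi
      apply intervalIntegral.integral_nonneg (le_of_lt (hinc i hi'))
      intro u hu
      have hu1 : u ≤ 1 := by
        have h2 : t (i + 1) ≤ t n := chainLe hinc (by omega) (le_refl n)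
        rw [htn] at h2
        exact le_trans hu.2 h2
      have : (0:ℝ) ≤ t (i + 1) - u := by linarith [hu.2]
      have h3 : (0:ℝ) ≤ (1 - u) ^ (-(1:ℝ)) := Real.rpow_nonneg (by linarith) _
      nlinarith [h3]
  · have h := mainInd hgt hθ.2 n hn t hinc htn
    rw [ht0] at h
    simpa using h
end

section
/- Let β ∈ (0,1) and H : [0,1) → [0,∞) be increasing. If there is c₁ ≥ 1 with Aₙ(H+1) ≥ 1/(c₁√(n^β)) for all n ∈ ℕ, then there is c₂ ≥ 1 with Aₙ(H) ≥ 1/(c₂√(n^β)) for all n ∈ ℕ. -/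
open MeasureTheory Set

private lemma pmono {t : ℕ → ℝ} {N : ℕ} (h : ∀ i < N, t i < t (i + 1)) :
    ∀ {i j : ℕ}, i ≤ j → j ≤ N → t i ≤ t j := by
  intro i j hij hjN
  induction j with
  | zero => exact Nat.le_zero.mp hij ▸ le_rfl
  | succ j ih =>
    rcases Nat.eq_or_lt_of_le hij with rfl | hlt
    · exact le_rfl
    · exact le_trans (ih (Nat.lt_succ_iff.mp hlt) (le_trans (Nat.le_succ j) hjN))
        (le_of_lt (h j (Nat.lt_of_lt_of_le (Nat.lt_succ_self j) hjN)))

private lemma equal_subdiv_le (G : ℝ → ℝ)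
    (hInt : ∀ w x y : ℝ, 0 ≤ x → x ≤ y → y ≤ w → w ≤ 1 →
      IntervalIntegrable (fun s => (w - s) * G s ^ 2) volume x y)
    {c d : ℝ} (hc : 0 ≤ c) (hcd : c ≤ d) (hd : d ≤ 1) {m : ℕ} (hm : 1 ≤ m) :
    ∑ r ∈ Finset.range m, (∫ s in (c + (r : ℝ) * ((d - c) / m))..(c + ((r : ℝ) + 1) * ((d - c) / m)),
        ((c + ((r : ℝ) + 1) * ((d - c) / m)) - s) * G s ^ 2)
      ≤ ∫ s in c..d, (d - s) * G s ^ 2 := by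
  set δ := (d - c) / m with hδ
  have hm0 : (0 : ℝ) < m := by exact_mod_cast hm
  have hδ0 : 0 ≤ δ := div_nonneg (by linarith) hm0.le
  set p : ℕ → ℝ := fun r => c + r * δ with hp
  have hpmono : ∀ r r' : ℕ, r ≤ r' → p r ≤ p r' := by
    intro r r' hrr'
    have : (r : ℝ) ≤ r' := by exact_mod_cast hrr'
    simp only [hp]; nlinarith
  have hpm : p m = d := by simp only [hp, hδ]; field_simp; ring
  have hbound : ∀ r : ℕ, r ≤ m → 0 ≤ p r ∧ p r ≤ d := by
    intro r hr
    refine ⟨by simp only [hp]; positivity, ?_⟩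
    calc p r ≤ p m := hpmono r m hr
    _ = d := hpm
  have hterm : ∀ r ∈ Finset.range m,
      (∫ s in (p r)..(p (r + 1)), (p (r + 1) - s) * G s ^ 2)
        ≤ ∫ s in (p r)..(p (r + 1)), (d - s) * G s ^ 2 := by
    intro r hr
    have hr' : r + 1 ≤ m := Finset.mem_range.mp hr
    have h1 := hbound r (le_trans (Nat.le_succ r) hr')
    have h2 := hbound (r + 1) hr'
    refine intervalIntegral.integral_mono_on (hpmono r (r + 1) (Nat.le_succ r))
      (hInt (p (r + 1)) (p r) (p (r + 1)) h1.1 (hpmono r (r + 1) (Nat.le_succ r)) le_rfl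
        (le_trans h2.2 hd))
      (hInt d (p r) (p (r + 1)) h1.1 (hpmono r (r + 1) (Nat.le_succ r)) h2.2 hd) ?_
    intro x hx
    have : p (r + 1) ≤ d := h2.2
    nlinarith [sq_nonneg (G x)]
  have hsum : ∑ r ∈ Finset.range m, (∫ s in (p r)..(p (r + 1)), (d - s) * G s ^ 2)
      = ∫ s in c..d, (d - s) * G s ^ 2 := by
    have := intervalIntegral.sum_integral_adjacent_intervals (μ := volume) (a := p)
      (f := fun s => (d - s) * G s ^ 2) (n := m) (fun k hk => by
        have h1 := hbound k (le_of_lt hk)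
        have h2 := hbound (k + 1) hk
        exact hInt d (p k) (p (k + 1)) h1.1 (hpmono k (k + 1) (Nat.le_succ k)) h2.2 hd)
    rw [this]
    have hp0 : p 0 = c := by simp [hp]
    rw [hp0, hpm]
  have hcast : ∀ r : ℕ, c + ((r : ℝ) + 1) * δ = p (r + 1) := by
    intro r; simp only [hp]; push_cast; ring
  simp only [hcast]
  calc ∑ r ∈ Finset.range m, (∫ s in (p r)..(p (r + 1)), (p (r + 1) - s) * G s ^ 2)
      ≤ ∑ r ∈ Finset.range m, (∫ s in (p r)..(p (r + 1)), (d - s) * G s ^ 2) :=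
        Finset.sum_le_sum hterm
    _ = ∫ s in c..d, (d - s) * G s ^ 2 := hsum

private lemma plus_one_le (H : ℝ → ℝ)
    (hIntH : ∀ w x y : ℝ, 0 ≤ x → x ≤ y → y ≤ w → w ≤ 1 →
      IntervalIntegrable (fun s => (w - s) * H s ^ 2) volume x y)
    (hIntH1 : ∀ w x y : ℝ, 0 ≤ x → x ≤ y → y ≤ w → w ≤ 1 →
      IntervalIntegrable (fun s => (w - s) * (H s + 1) ^ 2) volume x y)
    {a b : ℝ} (h0 : 0 ≤ a) (hab : a ≤ b) (hb : b ≤ 1) :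
    (∫ s in a..b, (b - s) * (H s + 1) ^ 2)
      ≤ 2 * (∫ s in a..b, (b - s) * H s ^ 2) + (b - a) ^ 2 := by
  have hι : IntervalIntegrable (fun s : ℝ => 2 * ((b - s) * H s ^ 2) + (2 * b - 2 * s))
      volume a b := by
    apply IntervalIntegrable.add
    · exact (hIntH b a b h0 hab le_rfl hb).const_mul 2
    · exact (Continuous.intervalIntegrable (by continuity) a b)
  have hmono : (∫ s in a..b, (b - s) * (H s + 1) ^ 2)
      ≤ ∫ s in a..b, (2 * ((b - s) * H s ^ 2) + (2 * b - 2 * s)) := by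
    refine intervalIntegral.integral_mono_on hab (hIntH1 b a b h0 hab le_rfl hb) hι ?_
    intro x hx
    have hbx : 0 ≤ b - x := by linarith [hx.2]
    nlinarith [sq_nonneg (H x - 1), sq_nonneg (H x)]
  have hsplit : (∫ s in a..b, (2 * ((b - s) * H s ^ 2) + (2 * b - 2 * s)))
      = 2 * (∫ s in a..b, (b - s) * H s ^ 2) + (b - a) ^ 2 := by
    rw [intervalIntegral.integral_add ((hIntH b a b h0 hab le_rfl hb).const_mul 2)
        (Continuous.intervalIntegrable (by continuity) a b),
      intervalIntegral.integral_const_mul]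
    congr 1
    have : (∫ s in a..b, (2 * b - 2 * s)) = (∫ s in a..b, (2*b : ℝ)) - ∫ s in a..b, 2 * s := by
      rw [← intervalIntegral.integral_sub (intervalIntegrable_const)
        ((Continuous.intervalIntegrable (by continuity) a b))]
    rw [this, intervalIntegral.integral_const]
    have h2 : (∫ s in a..b, 2 * s) = 2 * ∫ s in a..b, (s:ℝ) := intervalIntegral.integral_const_mul 2 _
    rw [h2, integral_id]
    simp only [smul_eq_mul]
    ring
  linarith [hmono, hsplit.le, hsplit.ge]

private lemma refine_exists (H : ℝ → ℝ)
    (hInt : ∀ w x y : ℝ, 0 ≤ x → x ≤ y → y ≤ w → w ≤ 1 →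
      IntervalIntegrable (fun s => (w - s) * H s ^ 2) volume x y)
    {n : ℕ} {τ : ℕ → ℝ} (hτ0 : τ 0 = 0) (hτn : τ n = 1)
    (hτ : ∀ i < n, τ i < τ (i + 1)) (M : ℕ) (hM : 1 ≤ M) :
    ∀ k, k ≤ n → ∃ (N : ℕ) (t : ℕ → ℝ), t 0 = 0 ∧ t N = τ k ∧
      (∀ j < N, t j < t (j + 1)) ∧ (∀ j < N, t (j + 1) - t j ≤ 1 / M) ∧
      k ≤ N ∧ ((N : ℝ) ≤ M * τ k + k) ∧
      partErr H N t ≤ partErr H k τ := by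
  intro k
  induction k with
  | zero =>
    intro _
    refine ⟨0, fun _ => 0, rfl, hτ0.symm, by omega, by omega, le_rfl, by simp [hτ0], ?_⟩
    simp [partErr]
  | succ k ih =>
    intro hkn
    obtain ⟨N, t, ht0, htN, hinc, hgap, hkN, hNle, hle⟩ := ih (le_trans (Nat.le_succ k) hkn)
    have hM0 : (0 : ℝ) < M := by exact_mod_cast hM
    set c := τ k with hc
    set d := τ (k + 1) with hd
    have hcd : c < d := hτ k (by omega)
    have hc0 : 0 ≤ c := by
      have := pmono hτ (Nat.zero_le k) (le_trans (Nat.le_succ k) hkn)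
      rw [hτ0] at this; exact this
    have hd1 : d ≤ 1 := by
      have := pmono hτ hkn le_rfl
      rw [hτn] at this; exact this
    set ℓ := d - c with hℓ
    have hℓ0 : 0 < ℓ := by simp only [hℓ]; linarith
    set m := ⌈ℓ * M⌉₊ with hm
    have hm1 : 1 ≤ m := Nat.ceil_pos.mpr (by positivity)
    have hmR : (0 : ℝ) < m := by exact_mod_cast hm1
    have hmge : ℓ * M ≤ m := Nat.le_ceil _
    have hmle : (m : ℝ) ≤ ℓ * M + 1 := le_of_lt (Nat.ceil_lt_add_one (by positivity))
    set δ := ℓ / m with hδ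
    have hδ0 : 0 < δ := by positivity
    have hδM : δ ≤ 1 / M := by
      rw [hδ, div_le_div_iff₀ hmR hM0]
      calc ℓ * M ≤ m := hmge
        _ = 1 * m := (one_mul _).symm
    set t' : ℕ → ℝ := fun j => if j ≤ N then t j else if j ≤ N + m then c + ((j : ℝ) - N) * δ else d
      with ht'
    have key : ∀ j, N ≤ j → j ≤ N + m → t' j = c + ((j : ℝ) - N) * δ := by
      intro j hNj hjm
      rcases Nat.eq_or_lt_of_le hNj with rfl | hlt
      · simp only [ht', le_rfl, if_pos]
        rw [htN]; ring
      · simp only [ht']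
        rw [if_neg (by omega), if_pos hjm]
    have keyend : t' (N + m) = d := by
      rw [key (N + m) (by omega) le_rfl]
      push_cast
      rw [hδ]
      field_simp
      rw [hℓ]; ring
    refine ⟨N + m, t', ?_, ?_, ?_, ?_, by omega, ?_, ?_⟩
    · simp only [ht', if_pos (Nat.zero_le N)]; exact ht0
    · rw [keyend]
    · -- strict increase
      intro j hj
      rcases lt_or_ge j N with hjN | hjN
      · have e1 : t' j = t j := by simp only [ht', if_pos hjN.le]
        have e2 : t' (j + 1) = t (j + 1) := by simp only [ht', if_pos (by omega : j + 1 ≤ N)]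
        rw [e1, e2]; exact hinc j hjN
      · rw [key j hjN (by omega), key (j + 1) (by omega) (by omega)]
        push_cast
        have : ((j : ℝ) - N) < ((j : ℝ) + 1 - N) := by linarith
        nlinarith
    · -- gaps
      intro j hj
      rcases lt_or_ge j N with hjN | hjN
      · have e1 : t' j = t j := by simp only [ht', if_pos hjN.le]
        have e2 : t' (j + 1) = t (j + 1) := by simp only [ht', if_pos (by omega : j + 1 ≤ N)]
        rw [e1, e2]; exact hgap j hjN
      · rw [key j hjN (by omega), key (j + 1) (by omega) (by omega)]
        push_cast
        calc c + ((j : ℝ) + 1 - N) * δ - (c + ((j : ℝ) - N) * δ) = δ := by ring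
          _ ≤ 1 / M := hδM
    · -- cardinality bound
      push_cast
      have : (N : ℝ) ≤ M * c + k := by rw [hc]; exact hNle
      calc (N : ℝ) + m ≤ (M * c + k) + (ℓ * M + 1) := by linarith
        _ = M * d + (k + 1) := by rw [hℓ]; ring
    · -- partErr inequality
      have hsplit : partErr H (N + m) t'
          = (∑ j ∈ Finset.range N, ∫ s in (t' j)..(t' (j + 1)), (t' (j + 1) - s) * H s ^ 2)
          + ∑ r ∈ Finset.range m,
              ∫ s in (t' (N + r))..(t' (N + r + 1)), (t' (N + r + 1) - s) * H s ^ 2 := by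
        rw [partErr, Finset.sum_range_add]
      have hfirst : (∑ j ∈ Finset.range N, ∫ s in (t' j)..(t' (j + 1)), (t' (j + 1) - s) * H s ^ 2)
          = partErr H N t := by
        rw [partErr]
        refine Finset.sum_congr rfl ?_
        intro j hj
        have hjN := Finset.mem_range.mp hj
        have e1 : t' j = t j := by simp only [ht', if_pos hjN.le]
        have e2 : t' (j + 1) = t (j + 1) := by simp only [ht', if_pos (by omega : j + 1 ≤ N)]
        rw [e1, e2]
      have hsecond : (∑ r ∈ Finset.range m,
            ∫ s in (t' (N + r))..(t' (N + r + 1)), (t' (N + r + 1) - s) * H s ^ 2)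
          ≤ ∫ s in c..d, (d - s) * H s ^ 2 := by
        have hrepr : ∀ r : ℕ, r ≤ m → t' (N + r) = c + (r : ℝ) * ((d - c) / m) := by
          intro r hr
          rw [key (N + r) (by omega) (by omega)]
          push_cast
          rw [hδ, hℓ]
          ring
        have hrepr2 : ∀ r : ℕ, r < m → t' (N + r + 1) = c + ((r : ℝ) + 1) * ((d - c) / m) := by
          intro r hr
          rw [show N + r + 1 = N + (r + 1) by ring, hrepr (r + 1) hr]
          push_cast
          ring
        have := equal_subdiv_le H hInt hc0 hcd.le hd1 hm1
        refine le_trans (le_of_eq (Finset.sum_congr rfl ?_)) this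
        intro r hr
        have hrm := Finset.mem_range.mp hr
        rw [hrepr r hrm.le, hrepr2 r hrm]
      have hlast : partErr H (k + 1) τ = partErr H k τ + ∫ s in c..d, (d - s) * H s ^ 2 := by
        rw [partErr, partErr, Finset.sum_range_succ]
      rw [hsplit, hfirst, hlast]
      exact add_le_add hle hsecond

set_option maxHeartbeats 2000000 in
theorem stmt10 (β : ℝ) (hβ : β ∈ Ioo (0 : ℝ) 1)
    (H : ℝ → ℝ) (hmono : MonotoneOn H (Ico (0 : ℝ) 1))
    (hpos : ∀ t ∈ Ico (0 : ℝ) 1, 0 ≤ H t)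
    (c₁ : ℝ) (hc₁ : 1 ≤ c₁)
    (h : ∀ n : ℕ, 1 ≤ n → 1 / (c₁ * Real.sqrt ((n : ℝ) ^ β)) ≤ An (fun t => H t + 1) n) :
    ∃ c₂ : ℝ, 1 ≤ c₂ ∧ ∀ n : ℕ, 1 ≤ n → 1 / (c₂ * Real.sqrt ((n : ℝ) ^ β)) ≤ An H n := by
  obtain ⟨hβ0, hβ1⟩ := hβ
  have hc₁0 : 0 < c₁ := lt_of_lt_of_le one_pos hc₁
  -- Step 1: the hypothesis at n = 1 gives integrability of (1-s)(H s + 1)^2 on [0,1]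
  have hA1 : (1 : ℝ) / c₁ ≤ Real.sqrt (∫ s in (0:ℝ)..1, (1 - s) * (H s + 1) ^ 2) := by
    have h1 := h 1 le_rfl
    have e1 : ((1 : ℕ) : ℝ) ^ β = 1 := by norm_num
    rw [e1, Real.sqrt_one, mul_one] at h1
    have hAeq : An (fun t => H t + 1) 1
        = Real.sqrt (∫ s in (0:ℝ)..1, (1 - s) * (H s + 1) ^ 2) := by
      have hset : { x | ∃ t : ℕ → ℝ, IsPartition 1 t ∧
          x = Real.sqrt (partErr (fun t => H t + 1) 1 t) }
          = {Real.sqrt (∫ s in (0:ℝ)..1, (1 - s) * (H s + 1) ^ 2)} := by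
        ext x
        simp only [mem_setOf_eq, mem_singleton_iff]
        constructor
        · rintro ⟨t, ⟨h0, h1', _⟩, rfl⟩
          rw [partErr, Finset.sum_range_one, h0, h1']
        · rintro rfl
          refine ⟨fun j => (j : ℝ), ⟨by norm_num, by norm_num, ?_⟩, ?_⟩
          · intro i _
            have : ((i : ℕ) : ℝ) < ((i + 1 : ℕ) : ℝ) := by exact_mod_cast Nat.lt_succ_self i
            exact this
          · rw [partErr, Finset.sum_range_one]
            norm_num
      rw [An, hset, csInf_singleton]
    rw [← hAeq]; exact h1
  have hbase : IntervalIntegrable (fun s => (1 - s) * (H s + 1) ^ 2) volume 0 1 := by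
    by_contra hcon
    rw [intervalIntegral.integral_undef hcon, Real.sqrt_zero] at hA1
    have : (0 : ℝ) < 1 / c₁ := by positivity
    linarith
  -- Step 2: measurability of H
  have hmeasIco : AEMeasurable H (volume.restrict (Ico (0:ℝ) 1)) :=
    aemeasurable_restrict_of_monotoneOn measurableSet_Ico hmono
  have hmeasI : ∀ x y : ℝ, 0 ≤ x → x ≤ y → y ≤ 1 → AEMeasurable H (volume.restrict (Set.uIoc x y)) := by
    intro x y hx hxy hy
    rw [uIoc_of_le hxy, Measure.restrict_congr_set (Ioc_ae_eq_Icc.trans Ico_ae_eq_Icc.symm)]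
    exact hmeasIco.mono_measure (Measure.restrict_mono (Ico_subset_Ico hx hy) le_rfl)
  -- Step 3: master integrability
  have master : ∀ G : ℝ → ℝ, (∀ s ∈ Ico (0:ℝ) 1, 0 ≤ G s ∧ G s ≤ H s + 1) →
      (∀ x y : ℝ, 0 ≤ x → x ≤ y → y ≤ 1 → AEMeasurable G (volume.restrict (Set.uIoc x y))) →
      ∀ w x y : ℝ, 0 ≤ x → x ≤ y → y ≤ w → w ≤ 1 →
      IntervalIntegrable (fun s => (w - s) * G s ^ 2) volume x y := by
    intro G hG hGmeas w x y hx hxy hyw hw1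
    have hsub : Set.uIcc x y ⊆ Set.uIcc (0:ℝ) 1 := by
      rw [uIcc_of_le hxy, uIcc_of_le (zero_le_one)]
      exact Icc_subset_Icc hx (le_trans hyw hw1)
    have hbase' : IntervalIntegrable (fun s => (1 - s) * (H s + 1) ^ 2) volume x y :=
      hbase.mono_set hsub
    refine hbase'.mono_fun ?_ ?_
    · exact ((aemeasurable_const.sub aemeasurable_id').mul
        ((hGmeas x y hx hxy (le_trans hyw hw1)).pow_const 2)).aestronglyMeasurable
    · rw [uIoc_of_le hxy]
      refine Filter.eventually_of_mem (self_mem_ae_restrict measurableSet_Ioc) ?_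
      intro s hs
      simp only [Real.norm_eq_abs]
      rcases lt_or_ge s 1 with hs1 | hs1
      · have hsIco : s ∈ Ico (0:ℝ) 1 := ⟨le_trans hx hs.1.le, hs1⟩
        obtain ⟨hG0, hGle⟩ := hG s hsIco
        have h1 : 0 ≤ w - s ∧ w - s ≤ 1 - s := ⟨by linarith [hs.2], by linarith⟩
        have hH0 : 0 ≤ H s := hpos s hsIco
        rw [abs_of_nonneg (by nlinarith [sq_nonneg (G s)]),
          abs_of_nonneg (by nlinarith [sq_nonneg (H s + 1)])]
        have : G s ^ 2 ≤ (H s + 1) ^ 2 := by nlinarith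
        nlinarith [sq_nonneg (G s)]
      · have hws : w - s = 0 := le_antisymm (by linarith) (by linarith [hs.2])
        rw [hws, zero_mul, abs_zero]
        positivity
  have hIntH : ∀ w x y : ℝ, 0 ≤ x → x ≤ y → y ≤ w → w ≤ 1 →
      IntervalIntegrable (fun s => (w - s) * H s ^ 2) volume x y :=
    master H (fun s hs => ⟨hpos s hs, by linarith⟩) hmeasI
  have hIntH1 : ∀ w x y : ℝ, 0 ≤ x → x ≤ y → y ≤ w → w ≤ 1 →
      IntervalIntegrable (fun s => (w - s) * (H s + 1) ^ 2) volume x y :=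
    master (fun s => H s + 1)
      (fun s hs => ⟨show (0:ℝ) ≤ H s + 1 by linarith [hpos s hs], le_rfl⟩)
      (fun x y hx hxy hy => (hmeasI x y hx hxy hy).add_const 1)
  -- Step 4: main argument
  obtain ⟨n₀, hn₀1, hn₀ge⟩ : ∃ n₀ : ℕ, 1 ≤ n₀ ∧ (4 * c₁ ^ 2) ^ ((1:ℝ) / (1 - β)) ≤ (n₀:ℝ) :=
    ⟨max 1 ⌈(4 * c₁ ^ 2) ^ ((1:ℝ) / (1 - β))⌉₊, le_max_left _ _, by
      calc (4 * c₁ ^ 2) ^ ((1:ℝ) / (1 - β))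
          ≤ (⌈(4 * c₁ ^ 2) ^ ((1:ℝ) / (1 - β))⌉₊ : ℝ) := Nat.le_ceil _
        _ ≤ _ := by exact_mod_cast le_max_right 1 _⟩
  have hn₀R : (1:ℝ) ≤ (n₀:ℝ) := by exact_mod_cast hn₀1
  have hn₀β : (1:ℝ) ≤ (n₀:ℝ) ^ β := by
    calc (1:ℝ) = 1 ^ β := (Real.one_rpow β).symm
    _ ≤ (n₀:ℝ) ^ β := Real.rpow_le_rpow zero_le_one hn₀R hβ0.le
  refine ⟨Real.sqrt (8 * c₁ ^ 2 * (n₀:ℝ) ^ β), ?_, ?_⟩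
  · rw [show (1:ℝ) = Real.sqrt 1 from Real.sqrt_one.symm]
    apply Real.sqrt_le_sqrt
    nlinarith
  intro n hn
  have hnR : (1:ℝ) ≤ (n:ℝ) := by exact_mod_cast hn
  have hnpos : (0:ℝ) < (n:ℝ) := by linarith
  -- key bound for each partition
  have key : ∀ τ : ℕ → ℝ, IsPartition n τ →
      1 / (8 * c₁ ^ 2 * (n₀:ℝ) ^ β * (n:ℝ) ^ β) ≤ partErr H n τ := by
    rintro τ ⟨ht0, htn, hinc⟩
    obtain ⟨M, hnM, hn₀M, hMle⟩ : ∃ M : ℕ, n ≤ M ∧ n₀ ≤ M ∧ (M:ℝ) ≤ (n₀:ℝ) * (n:ℝ) := by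
      refine ⟨max n n₀, le_max_left _ _, le_max_right _ _, ?_⟩
      have hcast : ((max n n₀ : ℕ):ℝ) = max (n:ℝ) (n₀:ℝ) := by simp [Nat.cast_max]
      rw [hcast]
      apply max_le <;> nlinarith
    have hM1 : 1 ≤ M := le_trans hn hnM
    have hMR : (1:ℝ) ≤ (M:ℝ) := by exact_mod_cast hM1
    have hMpos : (0:ℝ) < (M:ℝ) := by linarith
    obtain ⟨N, t, ht'0, ht'N, hinc', hgap, hnN, hNle, hple⟩ :=
      refine_exists H hIntH ht0 htn hinc M hM1 n le_rfl
    rw [htn] at ht'N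
    rw [htn, mul_one] at hNle
    have hN1 : 1 ≤ N := le_trans hn hnN
    have hNpos : (0:ℝ) < (N:ℝ) := by exact_mod_cast hN1
    -- (a) lower bound for partErr (H+1) on t
    have hP0 : 0 ≤ partErr (fun s => H s + 1) N t := by
      apply Finset.sum_nonneg
      intro j hj
      have hjN := Finset.mem_range.mp hj
      apply intervalIntegral.integral_nonneg (le_of_lt (hinc' j hjN))
      intro s hs
      have h0t : 0 ≤ t (j + 1) - s := by linarith [hs.2]
      positivity
    have hNβ0 : (0:ℝ) < (N:ℝ) ^ β := Real.rpow_pos_of_pos hNpos β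
    have hlow : 1 / (c₁ ^ 2 * (N:ℝ) ^ β) ≤ partErr (fun s => H s + 1) N t := by
      have h2 := h N hN1
      have h3 : An (fun s => H s + 1) N ≤ Real.sqrt (partErr (fun s => H s + 1) N t) :=
        csInf_le ⟨0, fun x ⟨u, _, hx⟩ => hx ▸ Real.sqrt_nonneg _⟩
          ⟨t, ⟨ht'0, ht'N, hinc'⟩, rfl⟩
      have h4 := le_trans h2 h3
      have hu0 : (0:ℝ) ≤ 1 / (c₁ * Real.sqrt ((N:ℝ) ^ β)) := by positivity
      have h5 := mul_self_le_mul_self hu0 h4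
      rw [Real.mul_self_sqrt hP0] at h5
      calc 1 / (c₁ ^ 2 * (N:ℝ) ^ β)
          = (1 / (c₁ * Real.sqrt ((N:ℝ) ^ β))) * (1 / (c₁ * Real.sqrt ((N:ℝ) ^ β))) := by
            rw [div_mul_div_comm, one_mul, mul_mul_mul_comm,
              Real.mul_self_sqrt hNβ0.le]
            ring_nf
        _ ≤ partErr (fun s => H s + 1) N t := h5
    -- (b) endpoints of t lie in [0,1]
    have hbnds : ∀ j, j ≤ N → 0 ≤ t j ∧ t j ≤ 1 := by
      intro j hj
      constructor
      · have := pmono hinc' (Nat.zero_le j) hj; rw [ht'0] at this; exact this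
      · have := pmono hinc' hj le_rfl; rw [ht'N] at this; exact this
    -- (c) upper bound: partErr (H+1) ≤ 2 partErr H + 1/M
    have hup : partErr (fun s => H s + 1) N t ≤ 2 * partErr H N t + 1 / M := by
      have hterm : ∀ j ∈ Finset.range N,
          (∫ s in (t j)..(t (j + 1)), (t (j + 1) - s) * (H s + 1) ^ 2)
          ≤ 2 * (∫ s in (t j)..(t (j + 1)), (t (j + 1) - s) * H s ^ 2)
              + (t (j + 1) - t j) ^ 2 := by
        intro j hj
        have hjN := Finset.mem_range.mp hj
        exact plus_one_le H hIntH hIntH1 (hbnds j hjN.le).1 (hinc' j hjN).le (hbnds (j + 1) hjN).2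
      have hsq : ∀ j ∈ Finset.range N, (t (j + 1) - t j) ^ 2 ≤ (1 / M) * (t (j + 1) - t j) := by
        intro j hj
        have hjN := Finset.mem_range.mp hj
        have h1 := hgap j hjN
        have h2 := (hinc' j hjN).le
        nlinarith
      have hsum2 : ∑ j ∈ Finset.range N, (t (j + 1) - t j) ^ 2 ≤ 1 / M := by
        calc ∑ j ∈ Finset.range N, (t (j + 1) - t j) ^ 2
            ≤ ∑ j ∈ Finset.range N, (1 / (M:ℝ)) * (t (j + 1) - t j) := Finset.sum_le_sum hsq
          _ = (1 / (M:ℝ)) * (t N - t 0) := by rw [← Finset.mul_sum, Finset.sum_range_sub t]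
          _ = 1 / M := by rw [ht'N, ht'0]; ring
      calc partErr (fun s => H s + 1) N t
          ≤ ∑ j ∈ Finset.range N, (2 * (∫ s in (t j)..(t (j + 1)), (t (j + 1) - s) * H s ^ 2)
              + (t (j + 1) - t j) ^ 2) := Finset.sum_le_sum hterm
        _ = 2 * partErr H N t + ∑ j ∈ Finset.range N, (t (j + 1) - t j) ^ 2 := by
            rw [Finset.sum_add_distrib, ← Finset.mul_sum, partErr]
        _ ≤ 2 * partErr H N t + 1 / M := by linarith
    -- (d) rpow arithmetic
    have hMβpos : (0:ℝ) < (M:ℝ) ^ β := Real.rpow_pos_of_pos hMpos β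
    have hNle2 : (N:ℝ) ≤ 2 * M := by
      have : (n:ℝ) ≤ (M:ℝ) := by exact_mod_cast hnM
      linarith
    have hNβle : ((N:ℝ)) ^ β ≤ 2 * (M:ℝ) ^ β := by
      calc ((N:ℝ)) ^ β ≤ (2 * (M:ℝ)) ^ β :=
            Real.rpow_le_rpow (Nat.cast_nonneg N) hNle2 hβ0.le
        _ = 2 ^ β * (M:ℝ) ^ β := Real.mul_rpow (by norm_num) hMpos.le
        _ ≤ 2 * (M:ℝ) ^ β := by
            have h2β : (2:ℝ) ^ β ≤ 2 ^ (1:ℝ) :=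
              Real.rpow_le_rpow_of_exponent_le (by norm_num) hβ1.le
            rw [Real.rpow_one] at h2β
            nlinarith
    have hstep1 : 1 / (2 * c₁ ^ 2 * (M:ℝ) ^ β) ≤ 2 * partErr H N t + 1 / M := by
      refine le_trans ?_ (le_trans hlow hup)
      apply one_div_le_one_div_of_le
      · positivity
      · nlinarith [sq_nonneg c₁]
    have h4c : (0:ℝ) ≤ 4 * c₁ ^ 2 := by positivity
    have hβne : (1:ℝ) - β ≠ 0 := by linarith
    have hMbig : 4 * c₁ ^ 2 ≤ (M:ℝ) ^ ((1:ℝ) - β) := by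
      have h1 : ((4 * c₁ ^ 2) ^ ((1:ℝ) / (1 - β)) : ℝ) ≤ (M:ℝ) := by
        calc ((4 * c₁ ^ 2) ^ ((1:ℝ) / (1 - β)) : ℝ)
            ≤ (n₀:ℝ) := hn₀ge
          _ ≤ (M:ℝ) := by exact_mod_cast hn₀M
      calc 4 * c₁ ^ 2 = (4 * c₁ ^ 2) ^ (((1:ℝ) / (1 - β)) * (1 - β)) := by
            rw [one_div_mul_cancel hβne, Real.rpow_one]
        _ = ((4 * c₁ ^ 2) ^ ((1:ℝ) / (1 - β))) ^ ((1:ℝ) - β) := Real.rpow_mul h4c _ _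
        _ ≤ (M:ℝ) ^ ((1:ℝ) - β) := Real.rpow_le_rpow (Real.rpow_nonneg h4c _) h1 (by linarith)
    have hMsplit : (M:ℝ) = (M:ℝ) ^ ((1:ℝ) - β) * (M:ℝ) ^ β := by
      rw [← Real.rpow_add hMpos, sub_add_cancel, Real.rpow_one]
    have hstep2 : 1 / (M:ℝ) ≤ 1 / (4 * c₁ ^ 2 * (M:ℝ) ^ β) := by
      apply one_div_le_one_div_of_le
      · positivity
      · calc 4 * c₁ ^ 2 * (M:ℝ) ^ β ≤ (M:ℝ) ^ ((1:ℝ) - β) * (M:ℝ) ^ β :=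
              mul_le_mul_of_nonneg_right hMbig hMβpos.le
          _ = (M:ℝ) := hMsplit.symm
    have hstep3 : 1 / (8 * c₁ ^ 2 * (M:ℝ) ^ β) ≤ partErr H N t := by
      have e : 1 / (2 * c₁ ^ 2 * (M:ℝ) ^ β) - 1 / (4 * c₁ ^ 2 * (M:ℝ) ^ β)
          = 2 * (1 / (8 * c₁ ^ 2 * (M:ℝ) ^ β)) := by
        field_simp
        ring
      linarith
    have hMprod : (M:ℝ) ^ β ≤ (n₀:ℝ) ^ β * (n:ℝ) ^ β := by
      calc (M:ℝ) ^ β ≤ ((n₀:ℝ) * (n:ℝ)) ^ β :=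
            Real.rpow_le_rpow hMpos.le hMle hβ0.le
        _ = (n₀:ℝ) ^ β * (n:ℝ) ^ β := Real.mul_rpow (by positivity) (by positivity)
    refine le_trans ?_ (le_trans hstep3 hple)
    apply one_div_le_one_div_of_le
    · positivity
    · nlinarith [sq_nonneg c₁, hMβpos]
  -- conclude
  have hnβpos : (0:ℝ) < (n:ℝ) ^ β := Real.rpow_pos_of_pos hnpos β
  apply le_csInf
  · refine ⟨_, ⟨fun j => (j:ℝ) / (n:ℝ), ⟨by simp, by field_simp, fun i _ => ?_⟩, rfl⟩⟩
    rw [div_lt_div_iff₀ hnpos hnpos]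
    have : ((i:ℕ):ℝ) < ((i + 1:ℕ):ℝ) := by exact_mod_cast Nat.lt_succ_self i
    push_cast at this ⊢
    nlinarith
  · rintro x ⟨τ, hτ, rfl⟩
    have hkey := key τ hτ
    have hsq := Real.sqrt_le_sqrt hkey
    refine le_trans ?_ hsq
    have e2 : Real.sqrt (8 * c₁ ^ 2 * (n₀:ℝ) ^ β) * Real.sqrt ((n:ℝ) ^ β)
        = Real.sqrt (8 * c₁ ^ 2 * (n₀:ℝ) ^ β * (n:ℝ) ^ β) := by
      rw [← Real.sqrt_mul (by positivity)]
    have e3 : (1:ℝ) / Real.sqrt (8 * c₁ ^ 2 * (n₀:ℝ) ^ β * (n:ℝ) ^ β)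
        = Real.sqrt (1 / (8 * c₁ ^ 2 * (n₀:ℝ) ^ β * (n:ℝ) ^ β)) := by
      rw [one_div, one_div, Real.sqrt_inv]
    rw [e2, e3]
end

section
/- For any nonnegative measurable functions G, H : [0,1) → [0,∞) and n ∈ ℕ, one has A_{2n−1}(G+H)² ≤ 2[Aₙ(G)² + Aₙ(H)²]. -/
open MeasureTheory Set

open scoped ENNReal
open scoped ENNReal

noncomputable def wJ (f : ℝ → ℝ) (a b : ℝ) : ℝ≥0∞ :=
  ∫⁻ s in Ioc a b, ENNReal.ofReal ((b - s) * f s ^ 2)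

lemma wJ_meas {f : ℝ → ℝ} (hf : Measurable f) (b : ℝ) :
    Measurable (fun s => ENNReal.ofReal ((b - s) * f s ^ 2)) := by
  apply Measurable.ennreal_ofReal
  exact ((measurable_const.sub measurable_id).mul ((hf.pow measurable_const)))

lemma int_eq {f : ℝ → ℝ} (hf : Measurable f) {a b : ℝ} (hab : a ≤ b) :
    (∫ s in a..b, (b - s) * f s ^ 2) = (wJ f a b).toReal := by
  rw [intervalIntegral.integral_of_le hab, wJ]
  apply integral_eq_lintegral_of_nonneg_ae
  · filter_upwards [ae_restrict_mem measurableSet_Ioc] with s hs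
    exact mul_nonneg (by simp [sub_nonneg, hs.2]) (sq_nonneg _)
  · exact (((measurable_const.sub measurable_id).mul (hf.pow measurable_const))).aestronglyMeasurable

lemma wJ_mono (f : ℝ → ℝ) {a b a' b' : ℝ} (ha : a' ≤ a) (hb : b ≤ b') :
    wJ f a b ≤ wJ f a' b' := by
  refine lintegral_mono' (Measure.restrict_mono (Ioc_subset_Ioc ha hb) le_rfl) ?_
  intro s
  exact ENNReal.ofReal_le_ofReal (mul_le_mul_of_nonneg_right (by linarith) (sq_nonneg _))

lemma lint_split (g : ℝ → ℝ≥0∞) {a x b : ℝ} (hax : a ≤ x) (hxb : x ≤ b) :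
    ∫⁻ s in Ioc a b, g s = (∫⁻ s in Ioc a x, g s) + ∫⁻ s in Ioc x b, g s := by
  rw [← Ioc_union_Ioc_eq_Ioc hax hxb, lintegral_union measurableSet_Ioc]
  rw [Set.Ioc_disjoint_Ioc]
  simp [hax, le_refl]

lemma wJ_split_le (f : ℝ → ℝ) {a x b : ℝ} (hax : a ≤ x) (hxb : x ≤ b) :
    wJ f a x + wJ f x b ≤ wJ f a b := by
  simp only [wJ]
  rw [lint_split (fun s => ENNReal.ofReal ((b - s) * f s ^ 2)) hax hxb]
  gcongr


section
variable {G H : ℝ → ℝ}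


lemma ofReal_GH (c s g h : ℝ) :
    ENNReal.ofReal ((c - s) * (g + h) ^ 2)
      ≤ 2 * ENNReal.ofReal ((c - s) * g ^ 2) + 2 * ENNReal.ofReal ((c - s) * h ^ 2) := by
  rcases le_or_gt (c - s) 0 with hcs | hcs
  · rw [ENNReal.ofReal_of_nonpos (mul_nonpos_of_nonpos_of_nonneg hcs (sq_nonneg _))]
    exact zero_le
  · calc ENNReal.ofReal ((c - s) * (g + h) ^ 2)
        ≤ ENNReal.ofReal (2 * ((c - s) * g ^ 2) + 2 * ((c - s) * h ^ 2)) := by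
          apply ENNReal.ofReal_le_ofReal; nlinarith [sq_nonneg (g - h)]
      _ ≤ ENNReal.ofReal (2 * ((c - s) * g ^ 2)) + ENNReal.ofReal (2 * ((c - s) * h ^ 2)) :=
          ENNReal.ofReal_add_le
      _ = 2 * ENNReal.ofReal ((c - s) * g ^ 2) + 2 * ENNReal.ofReal ((c - s) * h ^ 2) := by
          rw [ENNReal.ofReal_mul (p := 2) (by norm_num), ENNReal.ofReal_mul (p := 2) (by norm_num)]
          norm_num

lemma wJ_GH (hGm : Measurable G) (hHm : Measurable H) (a c : ℝ) :
    wJ (fun s => G s + H s) a c ≤ 2 * wJ G a c + 2 * wJ H a c := by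
  simp only [wJ]
  calc ∫⁻ s in Ioc a c, ENNReal.ofReal ((c - s) * (G s + H s) ^ 2)
      ≤ ∫⁻ s in Ioc a c, (2 * ENNReal.ofReal ((c - s) * G s ^ 2)
          + 2 * ENNReal.ofReal ((c - s) * H s ^ 2)) :=
        lintegral_mono fun s => ofReal_GH c s (G s) (H s)
    _ = 2 * (∫⁻ s in Ioc a c, ENNReal.ofReal ((c - s) * G s ^ 2))
          + 2 * ∫⁻ s in Ioc a c, ENNReal.ofReal ((c - s) * H s ^ 2) := by
        rw [lintegral_add_left]
        · rw [lintegral_const_mul, lintegral_const_mul]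
          · exact Measurable.ennreal_ofReal
              ((measurable_const.sub measurable_id).mul (hHm.pow measurable_const))
          · exact Measurable.ennreal_ofReal
              ((measurable_const.sub measurable_id).mul (hGm.pow measurable_const))
        · exact (Measurable.ennreal_ofReal
              ((measurable_const.sub measurable_id).mul (hGm.pow measurable_const))).const_mul 2

lemma ae_ne_one : ∀ᵐ s : ℝ, s ≠ 1 := by
  rw [MeasureTheory.ae_iff]
  simpa using Real.volume_singleton (a := (1:ℝ))

/-- contagion: if a bad interval `[p,q]` for `F` sits inside `[a,c] ⊆ [0,1]`
and `F, F'` are nonneg on `[0,1)`, with `F + F' ≥ F`, then `[a,c]` is bad for the sum. -/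
lemma wJ_top {F F' : ℝ → ℝ} (hFpos : ∀ s ∈ Ico (0:ℝ) 1, 0 ≤ F s)
    (hF'pos : ∀ s ∈ Ico (0:ℝ) 1, 0 ≤ F' s)
    {a p q c : ℝ} (h0 : 0 ≤ a) (hap : a ≤ p) (hpq : p < q) (hqc : q ≤ c) (hc1 : c ≤ 1)
    (htop : wJ F p q = ⊤) : wJ (fun s => F s + F' s) a c = ⊤ := by
  rw [eq_top_iff, ← htop]
  calc wJ F p q = ∫⁻ s in Ioc p q, ENNReal.ofReal ((q - s) * F s ^ 2) := rfl
    _ ≤ ∫⁻ s in Ioc p q, ENNReal.ofReal ((c - s) * (F s + F' s) ^ 2) := by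
        apply lintegral_mono_ae
        filter_upwards [ae_restrict_mem measurableSet_Ioc, ae_restrict_of_ae ae_ne_one]
          with s hs hs1
        have hs0 : 0 ≤ s := le_trans (le_trans h0 hap) hs.1.le
        have hslt : s < 1 := lt_of_le_of_ne (le_trans (le_trans hs.2 hqc) hc1) hs1
        have hF := hFpos s ⟨hs0, hslt⟩
        have hF' := hF'pos s ⟨hs0, hslt⟩
        apply ENNReal.ofReal_le_ofReal
        have h1 : q - s ≤ c - s := by linarith
        have h2 : F s ^ 2 ≤ (F s + F' s) ^ 2 := by nlinarith
        have h3 : (0:ℝ) ≤ q - s := by linarith [hs.2]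
        nlinarith
    _ ≤ wJ (fun s => F s + F' s) a c := by
        refine lintegral_mono' (Measure.restrict_mono (Ioc_subset_Ioc hap hqc) le_rfl) le_rfl



lemma shrink_core {g : ℝ → ℝ≥0∞} (hg : Measurable g) {a b : ℝ} (hab : a < b)
    (hfin : (∫⁻ s in Ioc a b, g s) ≠ ⊤) {ε : ℝ≥0∞} (hε : 0 < ε) (S : ℕ → Set ℝ)
    (hanti : Antitone S) (hSm : ∀ k, MeasurableSet (S k)) (hS0 : S 0 ⊆ Ioc a b)
    (hnull : volume (⋂ k, S k) = 0) :
    ∃ N, (∫⁻ s in S N, g s) ≤ ε := by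
  set ν := volume.withDensity g with hν
  have hνI : ∀ A : Set ℝ, MeasurableSet A → ν A = ∫⁻ s in A, g s := fun A hA =>
    withDensity_apply g hA
  have htend : Filter.Tendsto (ν ∘ S) Filter.atTop (nhds (ν (⋂ k, S k))) := by
    apply tendsto_measure_iInter_atTop (fun k => (hSm k).nullMeasurableSet) hanti
    refine ⟨0, ?_⟩
    rw [hνI _ (hSm 0)]
    intro h
    apply hfin
    rw [eq_top_iff, ← h]
    exact lintegral_mono' (Measure.restrict_mono hS0 le_rfl) le_rfl
  have hz : ν (⋂ k, S k) = 0 := by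
    rw [hνI _ (MeasurableSet.iInter hSm), Measure.restrict_eq_zero.mpr hnull,
      lintegral_zero_measure]
  rw [hz] at htend
  obtain ⟨N, hN⟩ := ENNReal.tendsto_atTop_zero.mp htend ε hε
  exact ⟨N, by rw [← hνI _ (hSm N)]; exact hN N le_rfl⟩

lemma shrinkL {g : ℝ → ℝ≥0∞} (hg : Measurable g) {a b : ℝ} (hab : a < b)
    (hfin : (∫⁻ s in Ioc a b, g s) ≠ ⊤) {ε : ℝ≥0∞} (hε : 0 < ε) :
    ∃ x, a < x ∧ x < b ∧ (∫⁻ s in Ioc a x, g s) ≤ ε := by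
  have hba : (0:ℝ) < b - a := by linarith
  obtain ⟨N, hN⟩ := shrink_core hg hab hfin hε (fun k => Ioc a (a + (b - a) / (k + 2)))
    (fun k l hkl => Ioc_subset_Ioc le_rfl (by
      have hc : (k:ℝ) + 2 ≤ (l:ℝ) + 2 := by
        have := (Nat.cast_le (α := ℝ)).mpr hkl; linarith
      gcongr))
    (fun k => measurableSet_Ioc)
    (Ioc_subset_Ioc le_rfl (by
      have : (b - a) / (0 + 2) ≤ b - a := by rw [div_le_iff₀ (by norm_num)]; nlinarith
      linarith))
    (by
      convert measure_empty (μ := volume) (α := ℝ)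
      ext s
      simp only [mem_iInter, mem_empty_iff_false, iff_false, mem_Ioc, not_forall]
      by_cases hsa : a < s
      · obtain ⟨k, hk⟩ := exists_nat_gt ((b - a) / (s - a))
        refine ⟨k, ?_⟩
        rw [not_and_or, not_le]
        right
        have hsa' : (0:ℝ) < s - a := by linarith
        have h1 : (b - a) / (s - a) < (k:ℝ) + 2 := by linarith
        have h2 : (b - a) / ((k:ℝ) + 2) < s - a := by
          rw [div_lt_iff₀ (by positivity)]
          rw [div_lt_iff₀ hsa'] at h1
          nlinarith
        linarith
      · exact ⟨0, by rw [not_and_or]; left; exact hsa⟩)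
  refine ⟨a + (b - a) / (N + 2), ?_, ?_, hN⟩
  · have : (0:ℝ) < (b - a) / (N + 2) := by positivity
    linarith
  · have := div_lt_self hba (by push_cast; linarith : (1:ℝ) < (N:ℝ) + 2)
    linarith

lemma shrinkR {g : ℝ → ℝ≥0∞} (hg : Measurable g) {a b : ℝ} (hab : a < b)
    (hfin : (∫⁻ s in Ioc a b, g s) ≠ ⊤) {ε : ℝ≥0∞} (hε : 0 < ε) :
    ∃ x, a < x ∧ x < b ∧ (∫⁻ s in Ioc x b, g s) ≤ ε := by
  have hba : (0:ℝ) < b - a := by linarith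
  obtain ⟨N, hN⟩ := shrink_core hg hab hfin hε (fun k => Ioc (b - (b - a) / (k + 2)) b)
    (fun k l hkl => Ioc_subset_Ioc (by
      have hc : (k:ℝ) + 2 ≤ (l:ℝ) + 2 := by
        have := (Nat.cast_le (α := ℝ)).mpr hkl; linarith
      have : (b - a) / ((l:ℝ) + 2) ≤ (b - a) / ((k:ℝ) + 2) := by gcongr
      linarith) le_rfl)
    (fun k => measurableSet_Ioc)
    (Ioc_subset_Ioc (by
      have : (b - a) / ((0:ℕ) + 2) ≤ b - a := by
        rw [div_le_iff₀ (by push_cast; norm_num)]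
        push_cast; nlinarith
      linarith) le_rfl)
    (by
      have : (⋂ k, Ioc (b - (b - a) / ((k:ℕ) + 2)) b) ⊆ {b} := by
        intro s hs
        simp only [mem_iInter, mem_Ioc] at hs
        simp only [mem_singleton_iff]
        by_contra hsb
        have hsb' : s < b := lt_of_le_of_ne (hs 0).2 hsb
        obtain ⟨k, hk⟩ := exists_nat_gt ((b - a) / (b - s))
        have hbs : (0:ℝ) < b - s := by linarith
        have h1 : (b - a) / (b - s) < (k:ℝ) + 2 := by linarith
        have h2 : (b - a) / ((k:ℝ) + 2) < b - s := by
          rw [div_lt_iff₀ (by positivity)]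
          rw [div_lt_iff₀ hbs] at h1
          nlinarith
        have := (hs k).1
        linarith
      exact measure_mono_null this Real.volume_singleton)
  refine ⟨b - (b - a) / (N + 2), ?_, ?_, hN⟩
  · have := div_lt_self hba (by push_cast; linarith : (1:ℝ) < (N:ℝ) + 2)
    linarith
  · have : (0:ℝ) < (b - a) / (N + 2) := by positivity
    linarith

lemma split {f : ℝ → ℝ} (hf : Measurable f) {a c : ℝ} (hac : a < c) {ε : ℝ} (hε : 0 < ε) :
    ∃ x, a < x ∧ x < c ∧
      (wJ f a x).toReal + (wJ f x c).toReal ≤ (wJ f a c).toReal + ε := by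
  set x₀ := (a + c) / 2 with hx₀
  have hax₀ : a < x₀ := by simp only [hx₀]; linarith
  have hx₀c : x₀ < c := by simp only [hx₀]; linarith
  by_cases htop : wJ f a c = ⊤
  swap
  · -- finite case
    refine ⟨x₀, hax₀, hx₀c, ?_⟩
    have h1 : wJ f a x₀ + wJ f x₀ c ≤ wJ f a c := wJ_split_le f hax₀.le hx₀c.le
    have hfin1 : wJ f a x₀ ≠ ⊤ :=
      ne_top_of_le_ne_top htop (le_trans le_self_add h1)
    have hfin2 : wJ f x₀ c ≠ ⊤ :=
      ne_top_of_le_ne_top htop (le_trans le_add_self h1)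
    have := ENNReal.toReal_mono htop h1
    rw [ENNReal.toReal_add hfin1 hfin2] at this
    linarith
  · -- top case: show we can get total ≤ ε
    rw [htop, ENNReal.toReal_top, zero_add]
    have hofε : (0:ℝ≥0∞) < ENNReal.ofReal ε := by simp [hε]
    by_cases hL : wJ f a x₀ = ⊤ <;> by_cases hR : wJ f x₀ c = ⊤
    · exact ⟨x₀, hax₀, hx₀c, by rw [hL, hR]; simp [hε.le]⟩
    · -- left ⊤, right finite: shrink from the right
      obtain ⟨x, hx1, hx2, hx3⟩ := shrinkR (wJ_meas hf c) hx₀c (by exact hR) hofε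
      refine ⟨x, hax₀.trans hx1, hx2, ?_⟩
      have hLx : wJ f a x = ⊤ := by
        rw [eq_top_iff, ← hL]; exact wJ_mono f le_rfl hx1.le
      rw [hLx, ENNReal.toReal_top, zero_add]
      calc (wJ f x c).toReal ≤ (ENNReal.ofReal ε).toReal := ENNReal.toReal_mono (by simp) hx3
        _ = ε := ENNReal.toReal_ofReal hε.le
    · -- left finite, right ⊤: shrink from the left
      obtain ⟨x, hx1, hx2, hx3⟩ := shrinkL (wJ_meas hf x₀) hax₀ (by exact hL) hofε
      refine ⟨x, hx1, hx2.trans hx₀c, ?_⟩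
      have hRx : wJ f x c = ⊤ := by
        rw [eq_top_iff, ← hR]; exact wJ_mono f hx2.le le_rfl
      rw [hRx, ENNReal.toReal_top, add_zero]
      have hwx : wJ f a x ≤ ∫⁻ s in Ioc a x, ENNReal.ofReal ((x₀ - s) * f s ^ 2) := by
        refine lintegral_mono fun s => ENNReal.ofReal_le_ofReal ?_
        exact mul_le_mul_of_nonneg_right (by linarith) (sq_nonneg _)
      calc (wJ f a x).toReal ≤ (ENNReal.ofReal ε).toReal :=
            ENNReal.toReal_mono (by simp) (le_trans hwx hx3)
        _ = ε := ENNReal.toReal_ofReal hε.le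
    · -- both finite: mass concentrates at x₀ from the left
      have hg2m : Measurable (fun s => ENNReal.ofReal (f s ^ 2)) :=
        (hf.pow measurable_const).ennreal_ofReal
      have hsplit : wJ f a c
          = (∫⁻ s in Ioc a x₀, ENNReal.ofReal ((c - s) * f s ^ 2)) + wJ f x₀ c :=
        lint_split _ hax₀.le hx₀c.le
      have hK : (∫⁻ s in Ioc a x₀, ENNReal.ofReal ((c - s) * f s ^ 2)) = ⊤ := by
        by_contra hK
        exact (ENNReal.add_ne_top.mpr ⟨hK, hR⟩) (hsplit ▸ htop)
      have hpt : ∀ s, ENNReal.ofReal ((c - s) * f s ^ 2)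
          ≤ ENNReal.ofReal ((x₀ - s) * f s ^ 2)
            + ENNReal.ofReal (c - x₀) * ENNReal.ofReal (f s ^ 2) := by
        intro s
        rw [← ENNReal.ofReal_mul (by linarith : (0:ℝ) ≤ c - x₀)]
        calc ENNReal.ofReal ((c - s) * f s ^ 2)
            = ENNReal.ofReal ((x₀ - s) * f s ^ 2 + (c - x₀) * f s ^ 2) := by congr 1; ring
          _ ≤ _ := ENNReal.ofReal_add_le
      have hsum : (⊤:ℝ≥0∞) ≤ wJ f a x₀
          + ENNReal.ofReal (c - x₀) * ∫⁻ s in Ioc a x₀, ENNReal.ofReal (f s ^ 2) := by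
        rw [← hK]
        calc (∫⁻ s in Ioc a x₀, ENNReal.ofReal ((c - s) * f s ^ 2))
            ≤ ∫⁻ s in Ioc a x₀, (ENNReal.ofReal ((x₀ - s) * f s ^ 2)
                + ENNReal.ofReal (c - x₀) * ENNReal.ofReal (f s ^ 2)) :=
              lintegral_mono hpt
          _ = _ := by
              rw [lintegral_add_left (wJ_meas hf x₀), lintegral_const_mul _ hg2m]
              rfl
      have h2 : ENNReal.ofReal (c - x₀) * (∫⁻ s in Ioc a x₀, ENNReal.ofReal (f s ^ 2)) = ⊤ := by
        rcases ENNReal.add_eq_top.mp (top_le_iff.mp hsum) with h | h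
        · exact absurd h hL
        · exact h
      have hg2 : (∫⁻ s in Ioc a x₀, ENNReal.ofReal (f s ^ 2)) = ⊤ := by
        rcases ENNReal.mul_eq_top.mp h2 with ⟨_, h⟩ | ⟨h, _⟩
        · exact h
        · exact absurd h ENNReal.ofReal_ne_top
      have hxc_top : ∀ x, a < x → x < x₀ → wJ f x c = ⊤ := by
        intro x hax hxx₀
        have hfinax : (∫⁻ s in Ioc a x, ENNReal.ofReal (f s ^ 2)) ≠ ⊤ := by
          intro htop'
          apply hL
          rw [eq_top_iff]
          calc (⊤:ℝ≥0∞) = ENNReal.ofReal (x₀ - x)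
                * ∫⁻ s in Ioc a x, ENNReal.ofReal (f s ^ 2) := by
                    rw [htop', ENNReal.mul_top]
                    simp only [ne_eq, ENNReal.ofReal_eq_zero, not_le]
                    linarith
            _ = ∫⁻ s in Ioc a x, ENNReal.ofReal (x₀ - x) * ENNReal.ofReal (f s ^ 2) := by
              rw [lintegral_const_mul _ hg2m]
            _ ≤ ∫⁻ s in Ioc a x, ENNReal.ofReal ((x₀ - s) * f s ^ 2) := by
              apply lintegral_mono_ae
              filter_upwards [ae_restrict_mem measurableSet_Ioc] with s hs
              rw [← ENNReal.ofReal_mul (by linarith : (0:ℝ) ≤ x₀ - x)]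
              apply ENNReal.ofReal_le_ofReal
              have := hs.2
              nlinarith [sq_nonneg (f s)]
            _ ≤ wJ f a x₀ :=
              lintegral_mono' (Measure.restrict_mono (Ioc_subset_Ioc le_rfl hxx₀.le) le_rfl)
                le_rfl
        have hmid : (∫⁻ s in Ioc x x₀, ENNReal.ofReal (f s ^ 2)) = ⊤ := by
          have hsp := lint_split (fun s => ENNReal.ofReal (f s ^ 2)) hax.le hxx₀.le
          rw [hsp] at hg2
          rcases ENNReal.add_eq_top.mp hg2 with h | h
          · exact absurd h hfinax
          · exact h
        rw [eq_top_iff]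
        calc (⊤:ℝ≥0∞) = ENNReal.ofReal (c - x₀)
              * ∫⁻ s in Ioc x x₀, ENNReal.ofReal (f s ^ 2) := by
                  rw [hmid, ENNReal.mul_top]
                  simp only [ne_eq, ENNReal.ofReal_eq_zero, not_le]
                  linarith
          _ = ∫⁻ s in Ioc x x₀, ENNReal.ofReal (c - x₀) * ENNReal.ofReal (f s ^ 2) := by
            rw [lintegral_const_mul _ hg2m]
          _ ≤ ∫⁻ s in Ioc x x₀, ENNReal.ofReal ((c - s) * f s ^ 2) := by
            apply lintegral_mono_ae
            filter_upwards [ae_restrict_mem measurableSet_Ioc] with s hs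
            rw [← ENNReal.ofReal_mul (by linarith : (0:ℝ) ≤ c - x₀)]
            apply ENNReal.ofReal_le_ofReal
            have := hs.2
            nlinarith [sq_nonneg (f s)]
          _ ≤ wJ f x c :=
            lintegral_mono' (Measure.restrict_mono (Ioc_subset_Ioc le_rfl hx₀c.le) le_rfl)
              le_rfl
      obtain ⟨x, hx1, hx2, hx3⟩ := shrinkL (wJ_meas hf x₀) hax₀ (by exact hL) hofε
      refine ⟨x, hx1, hx2.trans hx₀c, ?_⟩
      rw [hxc_top x hx1 hx2, ENNReal.toReal_top, add_zero]
      have hwx : wJ f a x ≤ ∫⁻ s in Ioc a x, ENNReal.ofReal ((x₀ - s) * f s ^ 2) := by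
        refine lintegral_mono fun s => ENNReal.ofReal_le_ofReal ?_
        exact mul_le_mul_of_nonneg_right (by linarith) (sq_nonneg _)
      calc (wJ f a x).toReal ≤ (ENNReal.ofReal ε).toReal :=
            ENNReal.toReal_mono (by simp) (le_trans hwx hx3)
        _ = ε := ENNReal.toReal_ofReal hε.le

lemma part_mono {m : ℕ} {t : ℕ → ℝ} (h : ∀ i < m, t i < t (i + 1)) :
    ∀ {i j}, i ≤ j → j ≤ m → t i ≤ t j := by
  intro i j hij hjm
  induction j with
  | zero => simpa [Nat.le_zero.mp hij]
  | succ k ih =>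
    rcases Nat.lt_or_ge i (k+1) with hik | hik
    · have : t i ≤ t k := ih (Nat.lt_succ_iff.mp hik) (by omega)
      exact le_trans this (h k (by omega)).le
    · have : i = k + 1 := by omega
      simp [this]

lemma part_bounds {m : ℕ} {t : ℕ → ℝ} (ht : IsPartition m t) {i : ℕ} (hi : i ≤ m) :
    0 ≤ t i ∧ t i ≤ 1 := by
  constructor
  · have := part_mono ht.2.2 (Nat.zero_le i) hi
    rw [ht.1] at this; exact this
  · have := part_mono ht.2.2 hi le_rfl
    rw [ht.2.1] at this; exact this

lemma partErr_eq {f : ℝ → ℝ} (hf : Measurable f) {m : ℕ} {t : ℕ → ℝ}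
    (ht : ∀ i < m, t i < t (i + 1)) :
    partErr f m t = ∑ i ∈ Finset.range m, (wJ f (t i) (t (i + 1))).toReal := by
  refine Finset.sum_congr rfl fun i hi => ?_
  exact int_eq hf (ht i (Finset.mem_range.mp hi)).le

lemma partErr_nonneg {f : ℝ → ℝ} (hf : Measurable f) {m : ℕ} {t : ℕ → ℝ}
    (ht : ∀ i < m, t i < t (i + 1)) : 0 ≤ partErr f m t := by
  rw [partErr_eq hf ht]
  exact Finset.sum_nonneg fun i _ => ENNReal.toReal_nonneg

lemma pad_one {f : ℝ → ℝ} (hf : Measurable f) {m : ℕ} {t : ℕ → ℝ} (hm : 1 ≤ m)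
    (ht : IsPartition m t) {ε : ℝ} (hε : 0 < ε) :
    ∃ t', IsPartition (m + 1) t' ∧ partErr f (m + 1) t' ≤ partErr f m t + ε := by
  obtain ⟨k, rfl⟩ : ∃ k, m = k + 1 := ⟨m - 1, by omega⟩
  have h01 : t 0 < t 1 := ht.2.2 0 (by omega)
  obtain ⟨x, hx1, hx2, hx3⟩ := split hf h01 hε
  set t' : ℕ → ℝ := fun i => if i = 0 then t 0 else if i = 1 then x else t (i - 1)
    with ht'def
  have ht'e : ∀ j, 2 ≤ j → t' j = t (j - 1) := by
    intro j hj
    simp only [ht'def]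
    rw [if_neg (by omega), if_neg (by omega)]
  have ht'0 : t' 0 = t 0 := by simp [ht'def]
  have ht'1 : t' 1 = x := by simp [ht'def]
  have hP22 : ∀ i < k + 1 + 1, t' i < t' (i + 1) := by
    intro i hi
    rcases Nat.eq_zero_or_pos i with rfl | hi0
    · rw [ht'0, ht'1]; exact hx1
    rcases Nat.eq_or_lt_of_le hi0 with rfl | hi1
    · rw [ht'1, ht'e 2 le_rfl]; exact hx2
    · rw [ht'e i (by omega), ht'e (i+1) (by omega)]
      have e5 : i + 1 - 1 = i - 1 + 1 := by omega
      rw [e5]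
      exact ht.2.2 (i - 1) (by omega)
  refine ⟨t', ⟨by rw [ht'0]; exact ht.1, by rw [ht'e (k+1+1) (by omega)]; exact ht.2.1, hP22⟩, ?_⟩
  rw [partErr_eq hf hP22, partErr_eq hf ht.2.2]
  rw [Finset.sum_range_succ' (fun i => (wJ f (t' i) (t' (i+1))).toReal) (k+1),
    Finset.sum_range_succ' (fun i => (wJ f (t' (i+1)) (t' (i+1+1))).toReal) k,
    Finset.sum_range_succ' (fun i => (wJ f (t i) (t (i+1))).toReal) k]
  have hcongr : ∀ i, (wJ f (t' (i+1+1)) (t' (i+1+1+1))).toReal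
      = (wJ f (t (i+1)) (t (i+1+1))).toReal := by
    intro i
    rw [ht'e (i+1+1) (by omega), ht'e (i+1+1+1) (by omega)]
    norm_num
  simp only [hcongr, ht'0, ht'1, ht'e 2 le_rfl]
  have h0 : t 0 = 0 := ht.1
  linarith

lemma pad {f : ℝ → ℝ} (hf : Measurable f) (k : ℕ) {m : ℕ} {t : ℕ → ℝ} (hm : 1 ≤ m)
    (ht : IsPartition m t) {ε : ℝ} (hε : 0 < ε) :
    ∃ t', IsPartition (m + k) t' ∧ partErr f (m + k) t' ≤ partErr f m t + k * ε := by
  induction k with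
  | zero => exact ⟨t, ht, by simp⟩
  | succ j ih =>
    obtain ⟨t'', h1, h2⟩ := ih
    obtain ⟨t', h3, h4⟩ := pad_one hf (by omega) h1 hε
    refine ⟨t', h3, ?_⟩
    push_cast
    have h5 : partErr f (m + (j + 1)) t' ≤ partErr f (m + j) t'' + ε := h4
    linarith

lemma group {F : ℝ → ℝ} (hFm : Measurable F) {n m : ℕ} {g t : ℕ → ℝ}
    (htm : ∀ i < m, t i < t (i + 1))
    (S : Finset ℕ) (hS : S ⊆ Finset.range m) (j : ℕ → ℕ)
    (hj : ∀ i ∈ S, j i < n ∧ g (j i) ≤ t i ∧ t (i+1) ≤ g (j i + 1)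
      ∧ wJ F (g (j i)) (g (j i + 1)) ≠ ⊤) :
    ∑ i ∈ S, (wJ F (t i) (t (i + 1))).toReal
      ≤ ∑ k ∈ Finset.range n, (wJ F (g k) (g (k + 1))).toReal := by
  classical
  rw [← Finset.sum_fiberwise_of_maps_to (g := j) (t := Finset.range n)
    (fun i hi => Finset.mem_range.mpr (hj i hi).1)]
  apply Finset.sum_le_sum
  intro k hk
  set ν := volume.withDensity (fun s => ENNReal.ofReal ((g (k+1) - s) * F s ^ 2)) with hν
  by_cases hne : (S.filter (fun i => j i = k)).Nonempty
  swap
  · rw [Finset.not_nonempty_iff_eq_empty.mp hne]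
    simp [ENNReal.toReal_nonneg]
  obtain ⟨i₀, hi₀⟩ := hne
  have hi₀S := Finset.mem_filter.mp hi₀
  have hgood : wJ F (g k) (g (k+1)) ≠ ⊤ := by
    have h := (hj i₀ hi₀S.1).2.2.2
    rwa [hi₀S.2] at h
  have hbound : ∀ i ∈ S.filter (fun i => j i = k),
      wJ F (t i) (t (i+1)) ≤ ν (Ioc (t i) (t (i+1))) := by
    intro i hi
    rw [hν, withDensity_apply _ measurableSet_Ioc]
    refine lintegral_mono_ae ?_
    filter_upwards [ae_restrict_mem measurableSet_Ioc] with s hs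
    apply ENNReal.ofReal_le_ofReal
    have hins := Finset.mem_filter.mp hi
    have h1 : t (i+1) ≤ g (k+1) := by
      have h := (hj i hins.1).2.2.1
      rwa [hins.2] at h
    exact mul_le_mul_of_nonneg_right (by linarith) (sq_nonneg _)
  have hdisj : ((S.filter (fun i => j i = k)) : Set ℕ).PairwiseDisjoint
      (fun i => Ioc (t i) (t (i+1))) := by
    have key : ∀ p q, p < m → q < m → p < q →
        Disjoint (Ioc (t p) (t (p+1))) (Ioc (t q) (t (q+1))) := by
      intro p q hpm hqm hpq
      rw [Set.Ioc_disjoint_Ioc]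
      have h : t (p+1) ≤ t q := part_mono htm hpq hqm.le
      calc min (t (p+1)) (t (q+1)) ≤ t (p+1) := min_le_left _ _
        _ ≤ t q := h
        _ ≤ max (t p) (t q) := le_max_right _ _
    intro p hp q hq hpq
    simp only [Finset.coe_filter, mem_setOf_eq] at hp hq
    have hpm : p < m := Finset.mem_range.mp (hS hp.1)
    have hqm : q < m := Finset.mem_range.mp (hS hq.1)
    rcases lt_or_gt_of_ne hpq with h | h
    · exact key p q hpm hqm h
    · exact (key q p hqm hpm h).symm
  have hsumENN : ∑ i ∈ S.filter (fun i => j i = k), wJ F (t i) (t (i+1))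
      ≤ wJ F (g k) (g (k+1)) := by
    calc ∑ i ∈ S.filter (fun i => j i = k), wJ F (t i) (t (i+1))
        ≤ ∑ i ∈ S.filter (fun i => j i = k), ν (Ioc (t i) (t (i+1))) :=
          Finset.sum_le_sum hbound
      _ = ν (⋃ i ∈ S.filter (fun i => j i = k), Ioc (t i) (t (i+1))) :=
          (measure_biUnion_finset hdisj (fun b _ => measurableSet_Ioc)).symm
      _ ≤ ν (Ioc (g k) (g (k+1))) := by
          apply measure_mono
          refine Set.iUnion₂_subset fun i hi => ?_
          have hins := Finset.mem_filter.mp hi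
          have h2 := (hj i hins.1).2.1
          have h3 := (hj i hins.1).2.2.1
          rw [hins.2] at h2 h3
          exact Ioc_subset_Ioc h2 h3
      _ = wJ F (g k) (g (k+1)) := by
          rw [hν, withDensity_apply _ measurableSet_Ioc]
          rfl
  have hfin : ∀ i ∈ S.filter (fun i => j i = k), wJ F (t i) (t (i+1)) ≠ ⊤ := by
    intro i hi
    refine ne_top_of_le_ne_top hgood (le_trans ?_ hsumENN)
    exact Finset.single_le_sum (f := fun i => wJ F (t i) (t (i+1))) (fun p _ => zero_le) hi
  calc ∑ i ∈ S.filter (fun i => j i = k), (wJ F (t i) (t (i+1))).toReal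
      = (∑ i ∈ S.filter (fun i => j i = k), wJ F (t i) (t (i+1))).toReal :=
        (ENNReal.toReal_sum hfin).symm
    _ ≤ (wJ F (g k) (g (k+1))).toReal := ENNReal.toReal_mono hgood hsumENN

lemma find_good {F : ℝ → ℝ} {n : ℕ} {g : ℕ → ℝ} (hg : IsPartition n g)
    {a c : ℝ} (hac : a < c) (ha0 : 0 ≤ a) (hc1 : c ≤ 1)
    (hnover : ∀ j < n, wJ F (g j) (g (j+1)) = ⊤ → ¬ (g j < c ∧ a < g (j+1)))
    (hnomid : ∀ j ≤ n, ¬ (a < g j ∧ g j < c)) :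
    ∃ jG, jG < n ∧ g jG ≤ a ∧ c ≤ g (jG+1) ∧ wJ F (g jG) (g (jG+1)) ≠ ⊤ := by
  classical
  have hdec : DecidablePred (fun j => g j ≤ a) := fun _ => Classical.dec _
  set jG := @Nat.findGreatest (fun j => g j ≤ a) hdec n with hjGdef
  have h1 : g jG ≤ a := by
    rw [hjGdef]
    exact @Nat.findGreatest_spec 0 (fun j => g j ≤ a) hdec n (Nat.zero_le n)
      (by show g 0 ≤ a; rw [hg.1]; exact ha0)
  have hjGn : jG ≤ n := by
    rw [hjGdef]; exact @Nat.findGreatest_le (fun j => g j ≤ a) hdec n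
  have hjGlt : jG < n := by
    rcases Nat.lt_or_ge jG n with h | h
    · exact h
    · exfalso
      have : jG = n := le_antisymm hjGn h
      rw [this, hg.2.1] at h1
      linarith
  have h2 : a < g (jG + 1) := by
    by_contra h2'
    push_neg at h2'
    exact @Nat.findGreatest_is_greatest (jG + 1) (fun j => g j ≤ a) hdec n
      (by rw [← hjGdef]; omega) (by omega) h2'
  have h3 : c ≤ g (jG + 1) := by
    by_contra h3'
    push_neg at h3'
    exact hnomid (jG + 1) (by omega) ⟨h2, h3'⟩
  refine ⟨jG, hjGlt, h1, h3, fun htop => ?_⟩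
  exact hnover jG hjGlt htop ⟨lt_of_le_of_lt h1 hac, lt_of_lt_of_le hac h3⟩

lemma heart {G H : ℝ → ℝ} (hGm : Measurable G) (hHm : Measurable H)
    (hGpos : ∀ s ∈ Ico (0:ℝ) 1, 0 ≤ G s) (hHpos : ∀ s ∈ Ico (0:ℝ) 1, 0 ≤ H s)
    {n : ℕ} (hn : 1 ≤ n) {g h : ℕ → ℝ} (hg : IsPartition n g) (hh : IsPartition n h) :
    ∃ m t, 1 ≤ m ∧ m ≤ 2 * n - 1 ∧ IsPartition m t ∧
      partErr (fun s => G s + H s) m t ≤ 2 * partErr G n g + 2 * partErr H n h := by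
  classical
  set Bad : ℝ → ℝ → Prop := fun p q =>
    (∃ i < n, p = g i ∧ q = g (i+1) ∧ wJ G p q = ⊤) ∨
    (∃ i < n, p = h i ∧ q = h (i+1) ∧ wJ H p q = ⊤) with hBaddef
  set U : ℝ → Prop := fun x => ∃ p q, Bad p q ∧ p < x ∧ x < q with hUdef
  set M : Finset ℝ :=
    ((Finset.range (n+1)).image g) ∪ ((Finset.range (n+1)).image h) with hMdef
  set Q : Finset ℝ := M.filter (fun x => ¬ U x) with hQdef
  have hBadlt : ∀ p q, Bad p q → 0 ≤ p ∧ p < q ∧ q ≤ 1 := by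
    intro p q hB
    rcases hB with ⟨i, hi, rfl, rfl, _⟩ | ⟨i, hi, rfl, rfl, _⟩
    · exact ⟨(part_bounds hg hi.le).1, hg.2.2 i hi, (part_bounds hg (by omega)).2⟩
    · exact ⟨(part_bounds hh hi.le).1, hh.2.2 i hi, (part_bounds hh (by omega)).2⟩
  have hMmem : ∀ x ∈ M, 0 ≤ x ∧ x ≤ 1 := by
    intro x hx
    rw [hMdef, Finset.mem_union] at hx
    rcases hx with hx | hx
    · obtain ⟨i, hi, rfl⟩ := Finset.mem_image.mp hx
      exact part_bounds hg (Nat.lt_succ_iff.mp (Finset.mem_range.mp hi))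
    · obtain ⟨i, hi, rfl⟩ := Finset.mem_image.mp hx
      exact part_bounds hh (Nat.lt_succ_iff.mp (Finset.mem_range.mp hi))
  have hgM : ∀ i, i ≤ n → g i ∈ M := by
    intro i hi
    rw [hMdef, Finset.mem_union]
    exact Or.inl (Finset.mem_image.mpr ⟨i, Finset.mem_range.mpr (by omega), rfl⟩)
  have hhM : ∀ i, i ≤ n → h i ∈ M := by
    intro i hi
    rw [hMdef, Finset.mem_union]
    exact Or.inr (Finset.mem_image.mpr ⟨i, Finset.mem_range.mpr (by omega), rfl⟩)
  have h0Q : (0:ℝ) ∈ Q := by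
    rw [hQdef, Finset.mem_filter]
    refine ⟨hg.1 ▸ hgM 0 (by omega), ?_⟩
    rintro ⟨p, q, hB, hp, hq⟩
    exact absurd hp (not_lt.mpr (hBadlt p q hB).1)
  have h1Q : (1:ℝ) ∈ Q := by
    rw [hQdef, Finset.mem_filter]
    refine ⟨hg.2.1 ▸ hgM n le_rfl, ?_⟩
    rintro ⟨p, q, hB, hp, hq⟩
    exact absurd hq (not_lt.mpr (hBadlt p q hB).2.2)
  have hQmem : ∀ x ∈ Q, 0 ≤ x ∧ x ≤ 1 := fun x hx =>
    hMmem x (Finset.mem_filter.mp hx).1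
  have hQnotU : ∀ x ∈ Q, ¬ U x := fun x hx => (Finset.mem_filter.mp hx).2
  -- cardinality bound
  have hQcard : Q.card ≤ 2 * n := by
    have h01G : ({0, 1} : Finset ℝ) ⊆ (Finset.range (n+1)).image g := by
      intro x hx
      rcases Finset.mem_insert.mp hx with rfl | hx
      · exact Finset.mem_image.mpr ⟨0, Finset.mem_range.mpr (by omega), hg.1⟩
      · rw [Finset.mem_singleton.mp hx]
        exact Finset.mem_image.mpr ⟨n, Finset.mem_range.mpr (by omega), hg.2.1⟩
    have h01H : ({0, 1} : Finset ℝ) ⊆ (Finset.range (n+1)).image h := by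
      intro x hx
      rcases Finset.mem_insert.mp hx with rfl | hx
      · exact Finset.mem_image.mpr ⟨0, Finset.mem_range.mpr (by omega), hh.1⟩
      · rw [Finset.mem_singleton.mp hx]
        exact Finset.mem_image.mpr ⟨n, Finset.mem_range.mpr (by omega), hh.2.1⟩
    have hMcard : M.card ≤ 2 * n := by
      rw [hMdef]
      set A := (Finset.range (n+1)).image g
      set B := (Finset.range (n+1)).image h
      have e1 : A ∪ B = A ∪ (B \ A) := by
        rw [Finset.union_sdiff_self_eq_union]
      rw [e1, Finset.card_union_of_disjoint Finset.disjoint_sdiff]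
      have hA : A.card ≤ n + 1 :=
        le_trans (Finset.card_image_le) (by simp)
      have hBA : (B \ A).card ≤ n - 1 := by
        have hsub : B \ A ⊆ B \ {0, 1} := Finset.sdiff_subset_sdiff le_rfl h01G
        have := Finset.card_le_card hsub
        rw [Finset.card_sdiff_of_subset h01H] at this
        have hB2 : B.card ≤ n + 1 := le_trans (Finset.card_image_le) (by simp)
        have hc2 : ({0,1} : Finset ℝ).card = 2 := by
          rw [Finset.card_insert_of_notMem (by norm_num), Finset.card_singleton]
        omega
      omega
    exact le_trans (Finset.card_filter_le M _) hMcard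
  have hN2 : 2 ≤ Q.card := by
    have hsub : ({0, 1} : Finset ℝ) ⊆ Q := by
      intro x hx
      rcases Finset.mem_insert.mp hx with rfl | hx
      · exact h0Q
      · rw [Finset.mem_singleton.mp hx]; exact h1Q
    have := Finset.card_le_card hsub
    have hc2 : ({0,1} : Finset ℝ).card = 2 := by
      rw [Finset.card_insert_of_notMem (by norm_num), Finset.card_singleton]
    omega
  -- the sorted enumeration of Q
  set N := Q.card with hNdef
  set e := Q.orderIsoOfFin rfl with hedef
  set t : ℕ → ℝ := fun i => if hi : i < N then (e ⟨i, hi⟩ : ℝ) else 1 with htdef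
  set m := N - 1 with hmdef
  have hmN : m < N := by omega
  have ht_mem : ∀ i, i < N → t i ∈ Q := by
    intro i hi
    simp only [htdef]
    rw [dif_pos hi]
    exact (e ⟨i, hi⟩).2
  have ht_lt : ∀ i j (hi : i < N) (hj : j < N), i < j → t i < t j := by
    intro i j hi hj hij
    simp only [htdef]
    rw [dif_pos hi, dif_pos hj]
    have : (⟨i, hi⟩ : Fin N) < ⟨j, hj⟩ := hij
    exact (e.lt_iff_lt.mpr this)
  have ht_strict : ∀ i < m, t i < t (i + 1) := fun i hi =>
    ht_lt i (i+1) (by omega) (by omega) (by omega)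
  have ht0 : t 0 = 0 := by
    obtain ⟨k, hk⟩ := e.surjective ⟨0, h0Q⟩
    have hle : t 0 ≤ 0 := by
      simp only [htdef]; rw [dif_pos (by omega : 0 < N)]
      have : (⟨0, by omega⟩ : Fin N) ≤ k := by
        rcases k with ⟨kv, hkv⟩; exact Fin.mk_le_mk.mpr (by omega)
      have := e.le_iff_le.mpr this
      rw [hk] at this
      exact this
    have hge : 0 ≤ t 0 := (hQmem _ (ht_mem 0 (by omega))).1
    linarith
  have htm : t m = 1 := by
    obtain ⟨k, hk⟩ := e.surjective ⟨1, h1Q⟩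
    have hge : 1 ≤ t m := by
      simp only [htdef]; rw [dif_pos hmN]
      have : k ≤ (⟨m, hmN⟩ : Fin N) := by
        rcases k with ⟨kv, hkv⟩; exact Fin.mk_le_mk.mpr (by omega)
      have := e.le_iff_le.mpr this
      rw [hk] at this
      exact this
    have hle : t m ≤ 1 := (hQmem _ (ht_mem m hmN)).2
    linarith
  have hconsec : ∀ i, i < m → ∀ y ∈ Q, ¬ (t i < y ∧ y < t (i + 1)) := by
    intro i hi y hy ⟨hy1, hy2⟩
    obtain ⟨k, hk⟩ := e.surjective ⟨y, hy⟩
    have hik : (⟨i, by omega⟩ : Fin N) < k := by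
      apply e.lt_iff_lt.mp
      rw [hk]
      simp only [htdef] at hy1
      rw [dif_pos (by omega : i < N)] at hy1
      exact hy1
    have hki : k < (⟨i + 1, by omega⟩ : Fin N) := by
      apply e.lt_iff_lt.mp
      rw [hk]
      simp only [htdef] at hy2
      rw [dif_pos (by omega : i + 1 < N)] at hy2
      exact hy2
    rcases k with ⟨kv, hkv⟩
    rw [Fin.mk_lt_mk] at hik hki
    omega
  have hP : IsPartition m t := ⟨ht0, htm, ht_strict⟩
  have hdich : ∀ i, i < m → wJ (fun s => G s + H s) (t i) (t (i+1)) ≠ ⊤ →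
      (∃ jG, jG < n ∧ g jG ≤ t i ∧ t (i+1) ≤ g (jG+1) ∧ wJ G (g jG) (g (jG+1)) ≠ ⊤) ∧
      (∃ jH, jH < n ∧ h jH ≤ t i ∧ t (i+1) ≤ h (jH+1) ∧ wJ H (h jH) (h (jH+1)) ≠ ⊤) := by
    intro i him hfinGH
    have hac : t i < t (i+1) := ht_strict i him
    have ha01 := hQmem _ (ht_mem i (by omega))
    have hc01 := hQmem _ (ht_mem (i+1) (by omega))
    have hnov : ∀ p q, Bad p q → ¬ (p < t (i+1) ∧ t i < q) := by
      rintro p q hB ⟨hpc, haq⟩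
      have hapq : t i ≤ p := by
        by_contra hw
        push_neg at hw
        exact hQnotU _ (ht_mem i (by omega)) ⟨p, q, hB, hw, haq⟩
      have hqc : q ≤ t (i+1) := by
        by_contra hw
        push_neg at hw
        exact hQnotU _ (ht_mem (i+1) (by omega)) ⟨p, q, hB, hpc, hw⟩
      apply hfinGH
      obtain ⟨h0p, hpq, hq1⟩ := hBadlt p q hB
      rcases hB with ⟨j, hj, rfl, rfl, htop⟩ | ⟨j, hj, rfl, rfl, htop⟩
      · exact wJ_top hGpos hHpos ha01.1 hapq hpq hqc hc01.2 htop
      · have heq : (fun s => G s + H s) = fun s => H s + G s :=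
          funext fun s => add_comm _ _
        rw [heq]
        exact wJ_top hHpos hGpos ha01.1 hapq hpq hqc hc01.2 htop
    have hnomid : ∀ x ∈ M, ¬ (t i < x ∧ x < t (i+1)) := by
      rintro x hxM ⟨hx1, hx2⟩
      by_cases hxQ : x ∈ Q
      · exact hconsec i him x hxQ ⟨hx1, hx2⟩
      · have hUx : U x := by
          by_contra hUx
          exact hxQ (Finset.mem_filter.mpr ⟨hxM, hUx⟩)
        obtain ⟨p, q, hB, hp, hq⟩ := hUx
        exact hnov p q hB ⟨lt_trans hp hx2, lt_trans hx1 hq⟩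
    constructor
    · exact find_good hg hac ha01.1 hc01.2
        (fun j hj htop => hnov (g j) (g (j+1)) (Or.inl ⟨j, hj, rfl, rfl, htop⟩))
        (fun j hj hmid => hnomid (g j) (hgM j hj) hmid)
    · exact find_good hh hac ha01.1 hc01.2
        (fun j hj htop => hnov (h j) (h (j+1)) (Or.inr ⟨j, hj, rfl, rfl, htop⟩))
        (fun j hj hmid => hnomid (h j) (hhM j hj) hmid)
  refine ⟨m, t, by omega, by omega, hP, ?_⟩
  have hGHm : Measurable fun s => G s + H s := hGm.add hHm
  rw [partErr_eq hGHm ht_strict, partErr_eq hGm hg.2.2, partErr_eq hHm hh.2.2]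
  set S := (Finset.range m).filter
    (fun i => wJ (fun s => G s + H s) (t i) (t (i+1)) ≠ ⊤) with hSdef
  have hsplitsum : ∑ i ∈ Finset.range m, (wJ (fun s => G s + H s) (t i) (t (i+1))).toReal
      = ∑ i ∈ S, (wJ (fun s => G s + H s) (t i) (t (i+1))).toReal := by
    rw [hSdef]
    rw [← Finset.sum_filter_add_sum_filter_not (Finset.range m)
      (fun i => wJ (fun s => G s + H s) (t i) (t (i+1)) ≠ ⊤)]
    have hz : ∑ i ∈ (Finset.range m).filter
        (fun i => ¬ wJ (fun s => G s + H s) (t i) (t (i+1)) ≠ ⊤),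
        (wJ (fun s => G s + H s) (t i) (t (i+1))).toReal = 0 := by
      refine Finset.sum_eq_zero fun i hi => ?_
      have hmem := (Finset.mem_filter.mp hi).2
      push_neg at hmem
      rw [hmem]
      simp
    rw [hz, add_zero]
  rw [hsplitsum]
  have hdichS : ∀ i ∈ S, _ := fun i hi =>
    hdich i (Finset.mem_range.mp (Finset.mem_filter.mp hi).1) (Finset.mem_filter.mp hi).2
  have hchG : ∀ i ∈ S, ∃ jG, jG < n ∧ g jG ≤ t i ∧ t (i+1) ≤ g (jG+1)
      ∧ wJ G (g jG) (g (jG+1)) ≠ ⊤ := fun i hi => (hdichS i hi).1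
  have hchH : ∀ i ∈ S, ∃ jH, jH < n ∧ h jH ≤ t i ∧ t (i+1) ≤ h (jH+1)
      ∧ wJ H (h jH) (h (jH+1)) ≠ ⊤ := fun i hi => (hdichS i hi).2
  choose! jGf hjG1 hjG2 hjG3 hjG4 using hchG
  choose! jHf hjH1 hjH2 hjH3 hjH4 using hchH
  have hper : ∀ i ∈ S, (wJ (fun s => G s + H s) (t i) (t (i+1))).toReal
      ≤ 2 * (wJ G (t i) (t (i+1))).toReal + 2 * (wJ H (t i) (t (i+1))).toReal := by
    intro i hi
    have hGfin : wJ G (t i) (t (i+1)) ≠ ⊤ :=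
      ne_top_of_le_ne_top (hjG4 i hi) (wJ_mono G (hjG2 i hi) (hjG3 i hi))
    have hHfin : wJ H (t i) (t (i+1)) ≠ ⊤ :=
      ne_top_of_le_ne_top (hjH4 i hi) (wJ_mono H (hjH2 i hi) (hjH3 i hi))
    have hle := wJ_GH hGm hHm (t i) (t (i+1))
    have hG2 : 2 * wJ G (t i) (t (i+1)) ≠ ⊤ :=
      ENNReal.mul_ne_top (by simp) hGfin
    have hH2 : 2 * wJ H (t i) (t (i+1)) ≠ ⊤ :=
      ENNReal.mul_ne_top (by simp) hHfin
    have hrhs : 2 * wJ G (t i) (t (i+1)) + 2 * wJ H (t i) (t (i+1)) ≠ ⊤ :=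
      ENNReal.add_ne_top.mpr ⟨hG2, hH2⟩
    calc (wJ (fun s => G s + H s) (t i) (t (i+1))).toReal
        ≤ (2 * wJ G (t i) (t (i+1)) + 2 * wJ H (t i) (t (i+1))).toReal :=
          ENNReal.toReal_mono hrhs hle
      _ = 2 * (wJ G (t i) (t (i+1))).toReal + 2 * (wJ H (t i) (t (i+1))).toReal := by
          rw [ENNReal.toReal_add hG2 hH2, ENNReal.toReal_mul, ENNReal.toReal_mul]
          simp
  calc ∑ i ∈ S, (wJ (fun s => G s + H s) (t i) (t (i+1))).toReal
      ≤ ∑ i ∈ S, (2 * (wJ G (t i) (t (i+1))).toReal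
          + 2 * (wJ H (t i) (t (i+1))).toReal) :=
        Finset.sum_le_sum hper
    _ = 2 * (∑ i ∈ S, (wJ G (t i) (t (i+1))).toReal)
        + 2 * ∑ i ∈ S, (wJ H (t i) (t (i+1))).toReal := by
        rw [Finset.sum_add_distrib, Finset.mul_sum, Finset.mul_sum]
    _ ≤ 2 * (∑ k ∈ Finset.range n, (wJ G (g k) (g (k+1))).toReal)
        + 2 * ∑ k ∈ Finset.range n, (wJ H (h k) (h (k+1))).toReal := by
        gcongr
        · exact group hGm ht_strict S (Finset.filter_subset _ _) jGf
            (fun i hi => ⟨hjG1 i hi, hjG2 i hi, hjG3 i hi, hjG4 i hi⟩)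
        · exact group hHm ht_strict S (Finset.filter_subset _ _) jHf
            (fun i hi => ⟨hjH1 i hi, hjH2 i hi, hjH3 i hi, hjH4 i hi⟩)

lemma An_set_nonempty (f : ℝ → ℝ) (m : ℕ) (hm : 1 ≤ m) :
    { x | ∃ t : ℕ → ℝ, IsPartition m t ∧ x = Real.sqrt (partErr f m t) }.Nonempty := by
  have hmp : (0:ℝ) < m := by exact_mod_cast hm
  refine ⟨_, ⟨fun i => (i : ℝ) / m, ⟨?_, ?_, ?_⟩, rfl⟩⟩
  · simp
  · field_simp
  · intro i hi
    rw [div_lt_div_iff_of_pos_right hmp]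
    push_cast
    linarith

lemma An_nonneg (f : ℝ → ℝ) (m : ℕ) : 0 ≤ An f m := by
  apply Real.sInf_nonneg
  rintro x ⟨t, ht, rfl⟩
  exact Real.sqrt_nonneg _

lemma An_le (f : ℝ → ℝ) {m : ℕ} {t : ℕ → ℝ} (ht : IsPartition m t) :
    An f m ≤ Real.sqrt (partErr f m t) := by
  apply csInf_le
  · exact ⟨0, by rintro x ⟨t', ht', rfl⟩; exact Real.sqrt_nonneg _⟩
  · exact ⟨t, ht, rfl⟩

lemma An_near (f : ℝ → ℝ) {m : ℕ} (hm : 1 ≤ m) {ε : ℝ} (hε : 0 < ε) :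
    ∃ t : ℕ → ℝ, IsPartition m t ∧ partErr f m t < (An f m + ε) ^ 2 := by
  obtain ⟨x, hx, hlt⟩ := Real.lt_sInf_add_pos (An_set_nonempty f m hm) hε
  obtain ⟨t, ht, rfl⟩ := hx
  exact ⟨t, ht, Real.lt_sq_of_sqrt_lt hlt⟩

theorem stmt11 (G H : ℝ → ℝ) (hGm : Measurable G) (hHm : Measurable H)
    (hGpos : ∀ t ∈ Ico (0 : ℝ) 1, 0 ≤ G t) (hHpos : ∀ t ∈ Ico (0 : ℝ) 1, 0 ≤ H t)
    (n : ℕ) (hn : 1 ≤ n) :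
    An (fun t => G t + H t) (2 * n - 1) ^ 2 ≤ 2 * (An G n ^ 2 + An H n ^ 2) := by
  have hGHm : Measurable fun s => G s + H s := hGm.add hHm
  have key : ∀ ε : ℝ, 0 < ε → An (fun t => G t + H t) (2 * n - 1) ^ 2
      ≤ 2 * ((An G n + ε) ^ 2 + (An H n + ε) ^ 2) + ε := by
    intro ε hε
    obtain ⟨g, hgP, hgE⟩ := An_near G hn hε
    obtain ⟨h, hhP, hhE⟩ := An_near H hn hε
    obtain ⟨m, t, hm1, hm2, htP, htE⟩ := heart hGm hHm hGpos hHpos hn hgP hhP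
    have hε' : 0 < ε / (2 * n) := by positivity
    obtain ⟨t', ht'P, ht'E⟩ := pad hGHm (2 * n - 1 - m) hm1 htP hε'
    rw [show m + (2 * n - 1 - m) = 2 * n - 1 by omega] at ht'P ht'E
    have hA : An (fun s => G s + H s) (2 * n - 1) ≤ Real.sqrt (partErr (fun s => G s + H s) (2 * n - 1) t') :=
      An_le _ ht'P
    have hE0 : 0 ≤ partErr (fun s => G s + H s) (2 * n - 1) t' :=
      partErr_nonneg hGHm ht'P.2.2
    have hsq : An (fun s => G s + H s) (2 * n - 1) ^ 2
        ≤ partErr (fun s => G s + H s) (2 * n - 1) t' := by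
      have h1 := pow_le_pow_left₀ (An_nonneg _ _) hA 2
      rwa [Real.sq_sqrt hE0] at h1
    have hkε : ((2 * n - 1 - m : ℕ) : ℝ) * (ε / (2 * n)) ≤ ε := by
      have h1 : ((2 * n - 1 - m : ℕ) : ℝ) ≤ 2 * n := by
        have : (2 * n - 1 - m : ℕ) ≤ 2 * n := by omega
        exact_mod_cast this
      have h2 : (0:ℝ) < 2 * n := by positivity
      calc ((2 * n - 1 - m : ℕ) : ℝ) * (ε / (2 * n)) ≤ (2 * n) * (ε / (2 * n)) := by
            apply mul_le_mul_of_nonneg_right h1 hε'.le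
        _ = ε := by field_simp
    calc An (fun s => G s + H s) (2 * n - 1) ^ 2
        ≤ partErr (fun s => G s + H s) (2 * n - 1) t' := hsq
      _ ≤ partErr (fun s => G s + H s) m t + ((2 * n - 1 - m : ℕ) : ℝ) * (ε / (2 * n)) := ht'E
      _ ≤ 2 * partErr G n g + 2 * partErr H n h + ε := by linarith
      _ ≤ 2 * ((An G n + ε) ^ 2 + (An H n + ε) ^ 2) + ε := by nlinarith
  have hc : Continuous fun ε : ℝ => 2 * ((An G n + ε) ^ 2 + (An H n + ε) ^ 2) + ε := by
    continuity
  have htend : Filter.Tendsto (fun ε : ℝ => 2 * ((An G n + ε) ^ 2 + (An H n + ε) ^ 2) + ε)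
      (nhdsWithin 0 (Ioi 0)) (nhds (2 * (An G n ^ 2 + An H n ^ 2))) := by
    have h0 : (2 * ((An G n + 0) ^ 2 + (An H n + 0) ^ 2) + 0) = 2 * (An G n ^ 2 + An H n ^ 2) := by
      ring
    have h1 := (hc.tendsto 0).mono_left (nhdsWithin_le_nhds (s := Ioi (0:ℝ)))
    rwa [h0] at h1
  refine ge_of_tendsto htend ?_
  filter_upwards [self_mem_nhdsWithin] with ε hε using key ε hε
end
end

section
/- Let α ∈ (1/2, 1) and suppose H : [0,1) → [0,∞) is increasing with H(t) ≤ c₁ (1 − log(1−t))^{−α}/(1−t) for all t ∈ [0,1) and some c₁ ≥ 1. Then there is c = c(α, c₁) ≥ 1 such that Aₙ(H) ≤ c / √(n^{2α−1}) for all n ∈ ℕ. -/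
open MeasureTheory Set

/-- MVT-type inequality for rpow. -/
lemma rpow_sub_le_mul (a b p : ℝ) (ha : 0 ≤ a) (hab : a ≤ b) (hp : 1 ≤ p) :
    b ^ p - a ^ p ≤ p * b ^ (p - 1) * (b - a) := by
  rcases eq_or_lt_of_le hab with rfl | hlt
  · simp
  have hcont : ContinuousOn (fun x : ℝ => x ^ p) (Icc a b) := by
    intro x _
    exact (Real.continuousAt_rpow_const x p (Or.inr (by linarith))).continuousWithinAt
  have hderiv : ∀ x ∈ Ioo a b, HasDerivAt (fun x : ℝ => x ^ p) (p * x ^ (p - 1)) x :=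
    fun x _ => Real.hasDerivAt_rpow_const (Or.inr hp)
  obtain ⟨c, hc, hslope⟩ := exists_hasDerivAt_eq_slope (fun x : ℝ => x ^ p)
    (fun x => p * x ^ (p - 1)) hlt hcont hderiv
  have hcb : c ^ (p - 1) ≤ b ^ (p - 1) :=
    Real.rpow_le_rpow (le_trans ha hc.1.le) hc.2.le (by linarith)
  have hpos : (0:ℝ) < b - a := by linarith
  have : (b ^ p - a ^ p) / (b - a) ≤ p * b ^ (p - 1) := by
    rw [← hslope]
    have hp0 : 0 ≤ p := by linarith
    nlinarith [hcb, hp0]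
  calc b ^ p - a ^ p = (b ^ p - a ^ p) / (b - a) * (b - a) := by field_simp
    _ ≤ p * b ^ (p - 1) * (b - a) := by
        apply mul_le_mul_of_nonneg_right this hpos.le

lemma sq_rpow' (x a : ℝ) (hx : 0 ≤ x) : (x ^ a) ^ 2 = x ^ (2 * a) := by
  rw [← Real.rpow_natCast (x ^ a) 2, ← Real.rpow_mul hx]
  norm_num [mul_comm]

lemma tail_bound (α c₁ : ℝ) (hα1 : 1/2 < α) (hα2 : α < 1) (hc₁ : 1 ≤ c₁)
    (H : ℝ → ℝ) (hmono : MonotoneOn H (Ico (0:ℝ) 1)) (hpos : ∀ s ∈ Ico (0:ℝ) 1, 0 ≤ H s)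
    (hH : ∀ s ∈ Ico (0:ℝ) 1, H s ≤ c₁ * ((1 - Real.log (1 - s)) ^ (-α) / (1 - s)))
    (t : ℝ) (ht0 : 0 ≤ t) (ht1 : t < 1) :
    (∫ s in t..1, (1 - s) * H s ^ 2) ≤
      c₁ ^ 2 / (2 * α - 1) * (1 - Real.log (1 - t)) ^ (1 - 2 * α) := by
  have hden : (0:ℝ) < 2 * α - 1 := by linarith
  set u : ℝ → ℝ := fun s => 1 - Real.log (1 - s) with hu
  set f : ℝ → ℝ := fun s => (1 - s) * H s ^ 2 with hf
  set g : ℝ → ℝ := fun s => c₁ ^ 2 * (u s ^ (-(2*α)) * (1 - s)⁻¹) with hg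
  set G : ℝ → ℝ := fun s => c₁ ^ 2 / (2*α - 1) * (-(u s ^ (1 - 2*α))) with hG
  set V : ℝ := c₁ ^ 2 / (2*α - 1) * u t ^ (1 - 2*α) with hV
  -- basic facts on [t,1)
  have hu1 : ∀ s : ℝ, s < 1 → 0 ≤ s → 1 ≤ u s := by
    intro s hs hs0
    have h1s : 1 - s ≤ 1 := by linarith
    have h1s' : 0 < 1 - s := by linarith
    have := Real.log_nonpos (by linarith) h1s
    simp only [hu]; linarith
  have hupos : ∀ s : ℝ, s < 1 → 0 ≤ s → 0 < u s := fun s hs hs0 => lt_of_lt_of_le one_pos <| by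
    simpa using hu1 s hs hs0
  -- derivative of G
  have hGderiv : ∀ s : ℝ, 0 ≤ s → s < 1 → HasDerivAt G (g s) s := by
    intro s hs0 hs1
    have h1s : (0:ℝ) < 1 - s := by linarith
    have hus : 0 < u s := hupos s hs1 hs0
    have hlog : HasDerivAt (fun s : ℝ => Real.log (1 - s)) (-(1 - s)⁻¹) s := by
      have h1 : HasDerivAt (fun s : ℝ => 1 - s) (-1) s := by
        simpa using (hasDerivAt_id s).const_sub 1
      have := (Real.hasDerivAt_log h1s.ne').comp s h1
      rw [mul_neg_one] at this; exact this
    have huderiv : HasDerivAt u ((1 - s)⁻¹) s := by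
      have := (hasDerivAt_const s (1:ℝ)).sub hlog
      rw [zero_sub, neg_neg] at this; exact this
    have hr : HasDerivAt (fun s => u s ^ (1 - 2*α))
        ((1 - 2*α) * u s ^ (1 - 2*α - 1) * (1 - s)⁻¹) s :=
      (Real.hasDerivAt_rpow_const (Or.inl hus.ne')).comp s huderiv
    have := ((hr.neg).const_mul (c₁ ^ 2 / (2*α - 1)))
    refine this.congr_deriv ?_
    have : 1 - 2*α - 1 = -(2*α) := by ring
    rw [this]; simp only [hg]
    field_simp [hg]
    ring
  -- g is continuous on [0,1)
  have hgcont : ∀ s : ℝ, 0 ≤ s → s < 1 → ContinuousAt g s := by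
    intro s hs0 hs1
    have h1s : (0:ℝ) < 1 - s := by linarith
    have hus : 0 < u s := hupos s hs1 hs0
    have hucont : ContinuousAt u s := by
      have : ContinuousAt (fun s : ℝ => Real.log (1 - s)) s :=
        (Real.continuousAt_log h1s.ne').comp (by fun_prop)
      exact (continuousAt_const.sub this)
    have : ContinuousAt (fun s => u s ^ (-(2*α))) s :=
      (Real.continuousAt_rpow_const (u s) _ (Or.inl hus.ne')).comp hucont
    exact continuousAt_const.mul (this.mul ((continuousAt_const.sub continuousAt_id).inv₀ h1s.ne'))
  -- pointwise bound f ≤ g on [0,1)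
  have hfg : ∀ s : ℝ, 0 ≤ s → s < 1 → f s ≤ g s := by
    intro s hs0 hs1
    have h1s : (0:ℝ) < 1 - s := by linarith
    have hus : 0 < u s := hupos s hs1 hs0
    have hHs := hH s ⟨hs0, hs1⟩
    have hHs0 := hpos s ⟨hs0, hs1⟩
    have hsq : H s ^ 2 ≤ (c₁ * (u s ^ (-α) / (1 - s))) ^ 2 := by
      apply pow_le_pow_left₀ hHs0 hHs
    have hrw : (u s ^ (-α)) ^ 2 = u s ^ (-(2*α)) := by
      rw [← Real.rpow_natCast (u s ^ (-α)) 2, ← Real.rpow_mul hus.le]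
      norm_num
      ring_nf
    calc f s ≤ (1 - s) * (c₁ * (u s ^ (-α) / (1 - s))) ^ 2 := by
          simp only [hf]; exact mul_le_mul_of_nonneg_left hsq h1s.le
      _ = g s := by
          simp only [hg]
          rw [mul_pow, div_pow, hrw]
          field_simp
  -- interval integrability of f on [t,b] for b < 1
  have hfint : ∀ b : ℝ, t ≤ b → b < 1 → IntegrableOn f (Ioc t b) := by
    intro b htb hb1
    have hsub : Ioc t b ⊆ Ico (0:ℝ) 1 := fun s hs => ⟨le_trans ht0 hs.1.le, lt_of_le_of_lt hs.2 hb1⟩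
    have hHm : AEMeasurable H (volume.restrict (Ioc t b)) :=
      aemeasurable_restrict_of_monotoneOn measurableSet_Ioc (hmono.mono hsub)
    have hfm : AEStronglyMeasurable f (volume.restrict (Ioc t b)) := by
      apply AEMeasurable.aestronglyMeasurable
      exact (aemeasurable_const.sub aemeasurable_id).mul ((hHm.mul hHm).congr <| by
        filter_upwards with s using by rw [Pi.mul_apply, sq])
    apply Integrable.mono' (integrable_const (1 * H b ^ 2)) hfm
    filter_upwards [ae_restrict_mem measurableSet_Ioc] with s hs
    have hs01 := hsub hs
    have hHb : H s ≤ H b := hmono hs01 ⟨le_trans ht0 (le_trans hs.1.le hs.2), hb1⟩ hs.2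
    have hH0 := hpos s hs01
    have h1 : 0 ≤ 1 - s := by linarith [hs01.2]
    have h2 : 1 - s ≤ 1 := by linarith [hs01.1]
    have hf0 : 0 ≤ f s := by simp only [hf]; positivity
    rw [Real.norm_eq_abs, abs_of_nonneg hf0]
    have hsq2 : H s ^ 2 ≤ H b ^ 2 := pow_le_pow_left₀ hH0 hHb 2
    show (1 - s) * H s ^ 2 ≤ 1 * H b ^ 2
    nlinarith [sq_nonneg (H s)]
  -- ∫ t..b f ≤ V for b ∈ [t,1)
  have hkey : ∀ b : ℝ, t ≤ b → b < 1 → (∫ s in t..b, f s) ≤ V := by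
    intro b htb hb1
    have hgint : IntervalIntegrable g volume t b := by
      apply ContinuousOn.intervalIntegrable
      intro s hs
      rw [uIcc_of_le htb] at hs
      exact (hgcont s (le_trans ht0 hs.1) (lt_of_le_of_lt hs.2 hb1)).continuousWithinAt
    have hfint' : IntervalIntegrable f volume t b :=
      (intervalIntegrable_iff_integrableOn_Ioc_of_le htb).mpr (hfint b htb hb1)
    have h1 : (∫ s in t..b, f s) ≤ ∫ s in t..b, g s := by
      apply intervalIntegral.integral_mono_on htb hfint' hgint
      intro s hs
      exact hfg s (le_trans ht0 hs.1) (lt_of_le_of_lt hs.2 hb1)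
    have h2 : (∫ s in t..b, g s) = G b - G t := by
      apply intervalIntegral.integral_eq_sub_of_hasDerivAt
      · intro s hs
        rw [uIcc_of_le htb] at hs
        exact hGderiv s (le_trans ht0 hs.1) (lt_of_le_of_lt hs.2 hb1)
      · exact hgint
    have h3 : G b - G t ≤ V := by
      simp only [hG, hV]
      have hub : 0 < u b := hupos b hb1 (le_trans ht0 htb)
      have : (0:ℝ) ≤ u b ^ (1 - 2*α) := (Real.rpow_pos_of_pos hub _).le
      have hc : 0 < c₁ ^ 2 / (2*α - 1) := by positivity
      nlinarith
    linarith [h1, h2.le, h2.ge]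
  -- the sequence b i → 1
  set b : ℕ → ℝ := fun i => 1 - (1 - t) / (i + 1) with hb
  have hbt : ∀ i : ℕ, t ≤ b i := by
    intro i
    have h1 : (0:ℝ) < (i:ℝ) + 1 := by positivity
    have : (1 - t) / ((i:ℝ) + 1) ≤ (1 - t) := by
      apply div_le_self (by linarith) (by linarith)
    simp only [hb]; linarith
  have hb1 : ∀ i : ℕ, b i < 1 := by
    intro i
    have h1 : (0:ℝ) < (i:ℝ) + 1 := by positivity
    have : 0 < (1 - t) / ((i:ℝ) + 1) := div_pos (by linarith) h1
    simp only [hb]; linarith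
  have hbtend : Filter.Tendsto b Filter.atTop (nhds 1) := by
    have h0 : Filter.Tendsto (fun i : ℕ => (1 - t) * (1 / ((i:ℝ) + 1))) Filter.atTop (nhds 0) := by
      simpa using tendsto_one_div_add_atTop_nhds_zero_nat.const_mul (1 - t)
    have : Filter.Tendsto (fun i : ℕ => 1 - (1 - t) * (1 / ((i:ℝ) + 1))) Filter.atTop (nhds (1 - 0)) :=
      tendsto_const_nhds.sub h0
    simpa [hb, mul_one_div, div_eq_mul_inv] using this
  -- norm integrals bounded
  have hnormbound : ∀ i : ℕ, (∫ x in Ioc t (b i), ‖f x‖) ≤ V := by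
    intro i
    have heq : (∫ x in Ioc t (b i), ‖f x‖) = ∫ x in Ioc t (b i), f x := by
      apply setIntegral_congr_fun measurableSet_Ioc
      intro s hs
      have : 0 ≤ f s := by
        have h1 : s ≤ 1 := le_trans hs.2 (hb1 i).le
        have h2 : 0 ≤ 1 - s := by linarith
        simp only [hf]; positivity
      simp [Real.norm_eq_abs, abs_of_nonneg this]
    rw [heq, ← intervalIntegral.integral_of_le (hbt i)]
    exact hkey (b i) (hbt i) (hb1 i)
  have hfint1 : IntegrableOn f (Ioc t 1) :=
    MeasureTheory.integrableOn_Ioc_of_intervalIntegral_norm_bounded_right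
      (fun i => hfint (b i) (hbt i) (hb1 i)) hbtend (Filter.Eventually.of_forall hnormbound)
  -- conclude
  have hcover := MeasureTheory.aecover_Ioc_of_Ioc (μ := volume) (l := Filter.atTop)
    (tendsto_const_nhds : Filter.Tendsto (fun _ : ℕ => t) _ (nhds t)) hbtend
  have htendI : Filter.Tendsto (fun i => ∫ x in Ioc t (b i), f x) Filter.atTop
      (nhds (∫ x in Ioc t 1, f x)) := by
    have := hcover.integral_tendsto_of_countably_generated (f := f) hfint1
    refine this.congr fun i => ?_
    rw [Measure.restrict_restrict measurableSet_Ioc, inter_eq_self_of_subset_left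
      (Ioc_subset_Ioc_right (hb1 i).le)]
  have hfinal : (∫ x in Ioc t 1, f x) ≤ V := by
    apply le_of_tendsto htendI
    filter_upwards with i
    rw [← intervalIntegral.integral_of_le (hbt i)]
    exact hkey (b i) (hbt i) (hb1 i)
  rw [intervalIntegral.integral_of_le ht1.le]
  exact hfinal
set_option maxHeartbeats 1000000 in
theorem stmt13 (α : ℝ) (hα : α ∈ Ioo (1 / 2 : ℝ) 1) (c₁ : ℝ) (hc₁ : 1 ≤ c₁)
    (H : ℝ → ℝ) (hmono : MonotoneOn H (Ico (0 : ℝ) 1))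
    (hpos : ∀ t ∈ Ico (0 : ℝ) 1, 0 ≤ H t)
    (hH : ∀ t ∈ Ico (0 : ℝ) 1, H t ≤ c₁ * ((1 - Real.log (1 - t)) ^ (-α) / (1 - t))) :
    ∃ c : ℝ, 1 ≤ c ∧ ∀ n : ℕ, 1 ≤ n → An H n ≤ c / Real.sqrt ((n : ℝ) ^ (2 * α - 1)) := by
  obtain ⟨hα1, hα2⟩ := hα
  have hα1 : 1/2 < α := hα1
  have hden : (0:ℝ) < 2 * α - 1 := by linarith
  have h1α : (0:ℝ) < 1 - α := by linarith
  set γ : ℝ := 1 / (1 - α) with hγdef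
  have hγpos : 0 < γ := by positivity
  have hγ1 : 1 < γ := by
    rw [hγdef, lt_div_iff₀ h1α]; linarith
  have hγα : γ * (1 - α) = 1 := by
    rw [hγdef]; field_simp
  have hc₁pos : (0:ℝ) < c₁ := by linarith
  set K₁ : ℝ := c₁ ^ 2 * Real.exp (2 * γ) * γ ^ 2 with hK₁def
  set K₂ : ℝ := c₁ ^ 2 / (2 * α - 1) * (2:ℝ) ^ (γ * (2 * α - 1)) with hK₂def
  set K : ℝ := K₁ + K₂ with hKdef
  have hK₁ : 0 < K₁ := by positivity
  have hK₂ : 0 < K₂ := by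
    apply mul_pos (by positivity) (Real.rpow_pos_of_pos two_pos _)
  have hK : 0 < K := by positivity
  refine ⟨max 1 (Real.sqrt K), le_max_left _ _, ?_⟩
  intro n hn
  have hN1 : (1:ℝ) ≤ (n:ℝ) := by exact_mod_cast hn
  have hN0 : (0:ℝ) < (n:ℝ) := by linarith
  -- the partition
  set x : ℕ → ℝ := fun i => 1 + (i:ℝ) ^ γ * (n:ℝ) ^ (1 - γ) with hxdef
  set T : ℕ → ℝ := fun i => if i = n then 1 else 1 - Real.exp (1 - x i) with hTdef
  have hNγ : (0:ℝ) < (n:ℝ) ^ (1 - γ) := Real.rpow_pos_of_pos hN0 _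
  have hxmono : ∀ i j : ℕ, i < j → x i < x j := by
    intro i j hij
    have : (i:ℝ) ^ γ < (j:ℝ) ^ γ :=
      Real.rpow_lt_rpow (Nat.cast_nonneg i) (by exact_mod_cast hij) hγpos
    simp only [hxdef]
    have := mul_lt_mul_of_pos_right this hNγ
    linarith
  have hx1 : ∀ i : ℕ, 1 ≤ x i := by
    intro i
    have : 0 ≤ (i:ℝ) ^ γ * (n:ℝ) ^ (1 - γ) :=
      mul_nonneg (Real.rpow_nonneg (Nat.cast_nonneg i) _) hNγ.le
    simp only [hxdef]; linarith
  have hx0 : x 0 = 1 := by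
    simp [hxdef, Real.zero_rpow hγpos.ne']
  have hT0 : ∀ i : ℕ, 0 ≤ T i := by
    intro i
    simp only [hTdef]
    split
    · norm_num
    · have : Real.exp (1 - x i) ≤ 1 := Real.exp_le_one_iff.mpr (by linarith [hx1 i])
      linarith
  have hTlt1 : ∀ i : ℕ, i ≠ n → T i < 1 := by
    intro i hi
    simp only [hTdef, if_neg hi]
    linarith [Real.exp_pos (1 - x i)]
  have hTformula : ∀ i : ℕ, i ≠ n → T i = 1 - Real.exp (1 - x i) := by
    intro i hi; simp only [hTdef, if_neg hi]
  have hTmono : ∀ i : ℕ, i < n → T i < T (i + 1) := by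
    intro i hi
    rcases eq_or_ne (i + 1) n with h | h
    · rw [hTdef]; simp only [if_pos h, if_neg (by omega : i ≠ n)]
      linarith [Real.exp_pos (1 - x i)]
    · rw [hTformula i (by omega), hTformula (i+1) h]
      have : Real.exp (1 - x (i+1)) < Real.exp (1 - x i) :=
        Real.exp_lt_exp.mpr (by linarith [hxmono i (i+1) (by omega)])
      linarith
  have hpart : IsPartition n T := by
    refine ⟨?_, ?_, fun i hi => hTmono i hi⟩
    · rw [hTformula 0 (by omega), hx0]; simp
    · simp [hTdef]
  -- u(T i) = x i for i ≠ n
  have hu_eq : ∀ i : ℕ, i ≠ n → 1 - Real.log (1 - T i) = x i := by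
    intro i hi
    rw [hTformula i hi]
    simp [Real.log_exp]
  -- main interval bound
  set m : ℕ := n - 1 with hmdef
  have hm : m + 1 = n := by omega
  have hmain : ∀ i ∈ Finset.range m,
      (∫ s in T i..T (i+1), (T (i+1) - s) * H s ^ 2) ≤ K₁ * (n:ℝ) ^ (-(2*α)) := by
    intro i hi
    rw [Finset.mem_range] at hi
    have hi1n : i + 1 ≠ n := by omega
    have hin : i ≠ n := by omega
    have hTi1lt1 : T (i+1) < 1 := hTlt1 _ hi1n
    have hTlt : T i < T (i+1) := hTmono i (by omega)
    set P : ℝ := (i:ℝ) + 1 with hPdef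
    have hP0 : (0:ℝ) < P := by positivity
    have hPN : P ≤ (n:ℝ) := by
      rw [hPdef]
      have : (i:ℝ) + 1 ≤ (n:ℝ) := by exact_mod_cast (by omega : i + 1 ≤ n)
      linarith
    set δ : ℝ := x (i+1) - x i with hδdef
    have hδ0 : 0 < δ := by
      have := hxmono i (i+1) (by omega); simp only [hδdef]; linarith
    set δbar : ℝ := γ * P ^ (γ - 1) * (n:ℝ) ^ (1 - γ) with hδbardef
    have hδbar0 : 0 < δbar := by positivity
    -- δ ≤ δbar
    have hδle : δ ≤ δbar := by
      have hcast : ((i+1 : ℕ) : ℝ) = P := by rw [hPdef]; push_cast; ring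
      have h1 : ((i:ℝ)+1) ^ γ - (i:ℝ) ^ γ ≤ γ * ((i:ℝ)+1) ^ (γ - 1) * (((i:ℝ)+1) - i) :=
        rpow_sub_le_mul (i:ℝ) ((i:ℝ)+1) γ (Nat.cast_nonneg i) (by linarith) hγ1.le
      have h2 : ((i:ℝ)+1) ^ γ - (i:ℝ) ^ γ ≤ γ * P ^ (γ - 1) := by
        rw [hPdef]; linarith [h1]
      simp only [hδdef, hxdef, hδbardef]
      rw [hcast]
      have : (P ^ γ - (i:ℝ) ^ γ) * (n:ℝ) ^ (1-γ) ≤ γ * P ^ (γ-1) * (n:ℝ) ^ (1-γ) := by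
        apply mul_le_mul_of_nonneg_right _ hNγ.le
        rw [hPdef] at h2 ⊢; linarith
      linarith [this]
    -- δbar ≤ γ
    have hδbarγ : δbar ≤ γ := by
      have h1 : P ^ (γ - 1) ≤ (n:ℝ) ^ (γ - 1) :=
        Real.rpow_le_rpow hP0.le hPN (by linarith)
      have h2 : (n:ℝ) ^ (1 - γ) = ((n:ℝ) ^ (γ - 1))⁻¹ := by
        rw [← Real.rpow_neg hN0.le]; norm_num
      have h3 : P ^ (γ - 1) * (n:ℝ) ^ (1 - γ) ≤ 1 := by
        rw [h2, ← div_eq_mul_inv, div_le_one (Real.rpow_pos_of_pos hN0 _)]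
        exact h1
      calc δbar = γ * (P ^ (γ - 1) * (n:ℝ) ^ (1 - γ)) := by rw [hδbardef]; ring
        _ ≤ γ * 1 := mul_le_mul_of_nonneg_left h3 hγpos.le
        _ = γ := mul_one γ
    -- Δ ≤ δbar * exp(1 - x i)
    set Δ : ℝ := T (i+1) - T i with hΔdef
    have hΔ0 : 0 < Δ := by simp only [hΔdef]; linarith
    have hΔle : Δ ≤ δbar * Real.exp (1 - x i) := by
      have he : Real.exp (1 - x (i+1)) = Real.exp (1 - x i) * Real.exp (-δ) := by
        rw [← Real.exp_add]; congr 1; simp only [hδdef]; ring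
      have h1δ : 1 - δ ≤ Real.exp (-δ) := by linarith [Real.add_one_le_exp (-δ)]
      have hΔeq : Δ = Real.exp (1 - x i) - Real.exp (1 - x (i+1)) := by
        simp only [hΔdef]
        rw [hTformula i hin, hTformula (i+1) hi1n]; ring
      have hexp0 := Real.exp_pos (1 - x i)
      have hδδ : δ ≤ δbar := hδle
      calc Δ = Real.exp (1 - x i) * (1 - Real.exp (-δ)) := by rw [hΔeq, he]; ring
        _ ≤ Real.exp (1 - x i) * δ :=
            mul_le_mul_of_nonneg_left (by linarith) hexp0.le
        _ = δ * Real.exp (1 - x i) := by ring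
        _ ≤ δbar * Real.exp (1 - x i) := mul_le_mul_of_nonneg_right hδδ hexp0.le
    -- H bound at T (i+1)
    set M : ℝ := H (T (i+1)) with hMdef
    have hM0 : 0 ≤ M := hpos _ ⟨hT0 _, hTi1lt1⟩
    have hMle : M ≤ c₁ * x (i+1) ^ (-α) * Real.exp (x (i+1) - 1) := by
      have := hH (T (i+1)) ⟨hT0 _, hTi1lt1⟩
      rw [hu_eq (i+1) hi1n] at this
      have h1T : 1 - T (i+1) = Real.exp (1 - x (i+1)) := by
        rw [hTformula (i+1) hi1n]; ring
      rw [h1T] at this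
      calc M ≤ c₁ * (x (i+1) ^ (-α) / Real.exp (1 - x (i+1))) := this
        _ = c₁ * x (i+1) ^ (-α) * Real.exp (x (i+1) - 1) := by
            rw [div_eq_mul_inv, ← Real.exp_neg]
            ring_nf
    -- integral ≤ Δ^2 * M^2
    have hint : (∫ s in T i..T (i+1), (T (i+1) - s) * H s ^ 2) ≤ Δ ^ 2 * M ^ 2 := by
      have hb : ∀ s ∈ Set.uIoc (T i) (T (i+1)), ‖(T (i+1) - s) * H s ^ 2‖ ≤ Δ * M ^ 2 := by
        intro s hs
        rw [uIoc_of_le hTlt.le] at hs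
        have hs0 : 0 ≤ s := le_trans (hT0 i) hs.1.le
        have hs1 : s < 1 := lt_of_le_of_lt hs.2 hTi1lt1
        have hHs : H s ≤ M := hmono ⟨hs0, hs1⟩ ⟨hT0 _, hTi1lt1⟩ hs.2
        have hHs0 : 0 ≤ H s := hpos s ⟨hs0, hs1⟩
        have h1 : T (i+1) - s ≤ Δ := by simp only [hΔdef]; linarith [hs.1]
        have h2 : 0 ≤ T (i+1) - s := by linarith [hs.2]
        rw [Real.norm_eq_abs, abs_of_nonneg (by positivity)]
        have h3 : H s ^ 2 ≤ M ^ 2 := pow_le_pow_left₀ hHs0 hHs 2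
        exact mul_le_mul h1 h3 (by positivity) hΔ0.le
      have := intervalIntegral.norm_integral_le_of_norm_le_const hb
      have habs : |T (i+1) - T i| = Δ := by
        rw [abs_of_nonneg (by linarith : (0:ℝ) ≤ T (i+1) - T i)]
      rw [habs, Real.norm_eq_abs] at this
      calc (∫ s in T i..T (i+1), (T (i+1) - s) * H s ^ 2)
          ≤ |∫ s in T i..T (i+1), (T (i+1) - s) * H s ^ 2| := le_abs_self _
        _ ≤ Δ * M ^ 2 * Δ := this
        _ = Δ ^ 2 * M ^ 2 := by ring
    -- combine
    have hx1pos : 0 < x (i+1) := by linarith [hx1 (i+1)]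
    have hΔ2 : Δ ^ 2 ≤ δbar ^ 2 * Real.exp (1 - x i) ^ 2 := by
      have := pow_le_pow_left₀ hΔ0.le hΔle 2
      rw [mul_pow] at this; exact this
    have hM2 : M ^ 2 ≤ c₁ ^ 2 * x (i+1) ^ (-(2*α)) * Real.exp (x (i+1) - 1) ^ 2 := by
      have := pow_le_pow_left₀ hM0 hMle 2
      rw [mul_pow, mul_pow, sq_rpow' _ _ hx1pos.le] at this
      have h2α : 2 * (-α) = -(2*α) := by ring
      rw [h2α] at this
      exact this
    have hexp2 : Real.exp (1 - x i) ^ 2 * Real.exp (x (i+1) - 1) ^ 2 = Real.exp (2 * δ) := by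
      rw [sq, sq, ← Real.exp_add, ← Real.exp_add, ← Real.exp_add]
      congr 1; simp only [hδdef]; ring
    have hexpγ : Real.exp (2 * δ) ≤ Real.exp (2 * γ) :=
      Real.exp_le_exp.mpr (by linarith)
    -- δbar^2 * x(i+1)^(-2α) ≤ γ^2 * n^(-2α)
    have hkey : δbar ^ 2 * x (i+1) ^ (-(2*α)) ≤ γ ^ 2 * (n:ℝ) ^ (-(2*α)) := by
      have hbase : (0:ℝ) < P ^ γ * (n:ℝ) ^ (1 - γ) :=
        mul_pos (Real.rpow_pos_of_pos hP0 _) hNγ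
      have hbasele : P ^ γ * (n:ℝ) ^ (1 - γ) ≤ x (i+1) := by
        have hcast : ((i+1 : ℕ) : ℝ) = P := by rw [hPdef]; push_cast; ring
        simp only [hxdef]
        rw [hcast]; linarith
      have h1 : x (i+1) ^ (-(2*α)) ≤ (P ^ γ * (n:ℝ) ^ (1 - γ)) ^ (-(2*α)) :=
        Real.rpow_le_rpow_of_nonpos hbase hbasele (by linarith)
      have h2 : (P ^ γ * (n:ℝ) ^ (1 - γ)) ^ (-(2*α))
          = P ^ (γ * -(2*α)) * (n:ℝ) ^ ((1 - γ) * -(2*α)) := by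
        rw [Real.mul_rpow (Real.rpow_nonneg hP0.le _) hNγ.le,
          ← Real.rpow_mul hP0.le, ← Real.rpow_mul hN0.le]
      have h3 : δbar ^ 2 = γ ^ 2 * P ^ (2*(γ-1)) * (n:ℝ) ^ (2*(1-γ)) := by
        rw [hδbardef, mul_pow, mul_pow, sq_rpow' _ _ hP0.le, sq_rpow' _ _ hN0.le]
      have he1 : 2*(γ-1) + γ * -(2*α) = 0 := by linear_combination 2 * hγα
      have he2 : 2*(1-γ) + (1 - γ) * -(2*α) = -(2*α) := by linear_combination (-2) * hγα
      have h4 : δbar ^ 2 * (P ^ (γ * -(2*α)) * (n:ℝ) ^ ((1 - γ) * -(2*α)))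
          = γ ^ 2 * (n:ℝ) ^ (-(2*α)) := by
        rw [h3]
        rw [show γ ^ 2 * P ^ (2*(γ-1)) * (n:ℝ) ^ (2*(1-γ)) *
            (P ^ (γ * -(2*α)) * (n:ℝ) ^ ((1 - γ) * -(2*α)))
          = γ ^ 2 * (P ^ (2*(γ-1)) * P ^ (γ * -(2*α))) *
            ((n:ℝ) ^ (2*(1-γ)) * (n:ℝ) ^ ((1 - γ) * -(2*α))) from by ring]
        rw [← Real.rpow_add hP0, ← Real.rpow_add hN0, he1, he2, Real.rpow_zero, mul_one]
      calc δbar ^ 2 * x (i+1) ^ (-(2*α))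
          ≤ δbar ^ 2 * (P ^ (γ * -(2*α)) * (n:ℝ) ^ ((1 - γ) * -(2*α))) := by
            rw [← h2]
            exact mul_le_mul_of_nonneg_left h1 (by positivity)
        _ = γ ^ 2 * (n:ℝ) ^ (-(2*α)) := h4
    have hxneg : (0:ℝ) ≤ x (i+1) ^ (-(2*α)) := (Real.rpow_pos_of_pos hx1pos _).le
    calc (∫ s in T i..T (i+1), (T (i+1) - s) * H s ^ 2)
        ≤ Δ ^ 2 * M ^ 2 := hint
      _ ≤ (δbar ^ 2 * Real.exp (1 - x i) ^ 2) *
          (c₁ ^ 2 * x (i+1) ^ (-(2*α)) * Real.exp (x (i+1) - 1) ^ 2) := by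
          apply mul_le_mul hΔ2 hM2 (by positivity) (by positivity)
      _ = c₁ ^ 2 * Real.exp (2 * δ) * (δbar ^ 2 * x (i+1) ^ (-(2*α))) := by
          rw [← hexp2]; ring
      _ ≤ c₁ ^ 2 * Real.exp (2 * γ) * (γ ^ 2 * (n:ℝ) ^ (-(2*α))) := by
          apply mul_le_mul (mul_le_mul_of_nonneg_left hexpγ (by positivity)) hkey
            (by positivity) (by positivity)
      _ = K₁ * (n:ℝ) ^ (-(2*α)) := by rw [hK₁def]; ring
  -- tail bound
  have htail : (∫ s in T m..T (m+1), (T (m+1) - s) * H s ^ 2) ≤ K₂ * (n:ℝ) ^ (1 - 2*α) := by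
    have hmn : m ≠ n := by omega
    have hTm1 : T (m+1) = 1 := by rw [hm]; simp [hTdef]
    have hTm0 : 0 ≤ T m := hT0 m
    have hTm1' : T m < 1 := hTlt1 m hmn
    have h1 : (∫ s in T m..T (m+1), (T (m+1) - s) * H s ^ 2)
        ≤ c₁ ^ 2 / (2 * α - 1) * (1 - Real.log (1 - T m)) ^ (1 - 2 * α) := by
      rw [hTm1]
      exact tail_bound α c₁ hα1 hα2 hc₁ H hmono hpos hH (T m) hTm0 hTm1'
    rw [hu_eq m hmn] at h1
    -- x m ≥ 2^(-γ) * n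
    have hlow : (2:ℝ) ^ (-γ) * (n:ℝ) ≤ x m := by
      rcases Nat.eq_zero_or_pos m with h0 | hm1
      · rw [h0, hx0]
        have hn1 : n = 1 := by omega
        rw [hn1]
        have : (2:ℝ) ^ (-γ) ≤ 1 :=
          Real.rpow_le_one_of_one_le_of_nonpos one_le_two (by linarith)
        simpa using this
      · have hm2 : 2 ≤ n := by omega
        have hmN : (1:ℝ) ≤ (m:ℝ) := by exact_mod_cast hm1
        have h2m : (n:ℝ) ≤ 2 * (m:ℝ) := by
          have : n ≤ 2 * m := by omega
          exact_mod_cast this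
        have hhalf : (1:ℝ)/2 ≤ (m:ℝ) / (n:ℝ) := by
          rw [div_le_div_iff₀ two_pos hN0]; linarith
        have h1' : ((1:ℝ)/2) ^ γ ≤ ((m:ℝ) / (n:ℝ)) ^ γ :=
          Real.rpow_le_rpow (by norm_num) hhalf hγpos.le
        have h2' : ((1:ℝ)/2) ^ γ = (2:ℝ) ^ (-γ) := by
          rw [one_div, Real.inv_rpow two_pos.le, ← Real.rpow_neg two_pos.le]
        have h3' : ((m:ℝ) / (n:ℝ)) ^ γ = (m:ℝ) ^ γ * (n:ℝ) ^ (-γ) := by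
          rw [Real.div_rpow (by positivity) hN0.le, div_eq_mul_inv, ← Real.rpow_neg hN0.le]
        have h4' : (m:ℝ) ^ γ * (n:ℝ) ^ (1 - γ) = ((m:ℝ) / (n:ℝ)) ^ γ * (n:ℝ) := by
          rw [h3']
          rw [show (1:ℝ) - γ = -γ + 1 from by ring, Real.rpow_add hN0, Real.rpow_one]
          ring
        have h5' : (2:ℝ) ^ (-γ) * (n:ℝ) ≤ (m:ℝ) ^ γ * (n:ℝ) ^ (1 - γ) := by
          rw [h4', ← h2']
          exact mul_le_mul_of_nonneg_right h1' hN0.le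
        simp only [hxdef]
        linarith
    have hlowpos : (0:ℝ) < (2:ℝ) ^ (-γ) * (n:ℝ) :=
      mul_pos (Real.rpow_pos_of_pos two_pos _) hN0
    have h2 : (x m) ^ (1 - 2*α) ≤ ((2:ℝ) ^ (-γ) * (n:ℝ)) ^ (1 - 2*α) :=
      Real.rpow_le_rpow_of_nonpos hlowpos hlow (by linarith)
    have h3 : ((2:ℝ) ^ (-γ) * (n:ℝ)) ^ (1 - 2*α)
        = (2:ℝ) ^ (γ * (2*α - 1)) * (n:ℝ) ^ (1 - 2*α) := by
      rw [Real.mul_rpow (Real.rpow_pos_of_pos two_pos _).le hN0.le,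
        ← Real.rpow_mul two_pos.le]
      congr 2
      ring
    have hcpos : (0:ℝ) < c₁ ^ 2 / (2*α - 1) := by positivity
    calc (∫ s in T m..T (m+1), (T (m+1) - s) * H s ^ 2)
        ≤ c₁ ^ 2 / (2 * α - 1) * (x m) ^ (1 - 2 * α) := h1
      _ ≤ c₁ ^ 2 / (2 * α - 1) * ((2:ℝ) ^ (γ * (2*α - 1)) * (n:ℝ) ^ (1 - 2*α)) := by
          apply mul_le_mul_of_nonneg_left _ hcpos.le
          rw [← h3]; exact h2
      _ = K₂ * (n:ℝ) ^ (1 - 2*α) := by rw [hK₂def]; ring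
  -- sum the bounds
  have hsum : partErr H n T ≤ K * (n:ℝ) ^ (1 - 2*α) := by
    rw [partErr, ← hm, Finset.sum_range_succ]
    have h1 : ∑ i ∈ Finset.range m, (∫ s in T i..T (i+1), (T (i+1) - s) * H s ^ 2)
        ≤ (m:ℝ) * (K₁ * (n:ℝ) ^ (-(2*α))) := by
      calc ∑ i ∈ Finset.range m, (∫ s in T i..T (i+1), (T (i+1) - s) * H s ^ 2)
          ≤ ∑ _i ∈ Finset.range m, K₁ * (n:ℝ) ^ (-(2*α)) := Finset.sum_le_sum hmain
        _ = (m:ℝ) * (K₁ * (n:ℝ) ^ (-(2*α))) := by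
            rw [Finset.sum_const, Finset.card_range, nsmul_eq_mul]
    have h2 : (m:ℝ) * (K₁ * (n:ℝ) ^ (-(2*α))) ≤ K₁ * (n:ℝ) ^ (1 - 2*α) := by
      have hmn : (m:ℝ) ≤ (n:ℝ) := by exact_mod_cast (by omega : m ≤ n)
      have hpow : (n:ℝ) * (n:ℝ) ^ (-(2*α)) = (n:ℝ) ^ (1 - 2*α) := by
        rw [show (1:ℝ) - 2*α = 1 + -(2*α) from by ring, Real.rpow_add hN0, Real.rpow_one]
      have hnn : (0:ℝ) ≤ (n:ℝ) ^ (-(2*α)) := (Real.rpow_pos_of_pos hN0 _).le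
      calc (m:ℝ) * (K₁ * (n:ℝ) ^ (-(2*α)))
          ≤ (n:ℝ) * (K₁ * (n:ℝ) ^ (-(2*α))) := by
            apply mul_le_mul_of_nonneg_right hmn (by positivity)
        _ = K₁ * ((n:ℝ) * (n:ℝ) ^ (-(2*α))) := by ring
        _ = K₁ * (n:ℝ) ^ (1 - 2*α) := by rw [hpow]
    calc (∑ i ∈ Finset.range m, (∫ s in T i..T (i+1), (T (i+1) - s) * H s ^ 2))
        + (∫ s in T m..T (m+1), (T (m+1) - s) * H s ^ 2)
        ≤ K₁ * (n:ℝ) ^ (1 - 2*α) + K₂ * (n:ℝ) ^ (1 - 2*α) :=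
          add_le_add (le_trans h1 h2) htail
      _ = K * (n:ℝ) ^ (1 - 2*α) := by rw [hKdef]; ring
      _ = K * ((m+1 : ℕ):ℝ) ^ (1 - 2*α) := by rw [hm]
  -- conclude
  have hbdd : BddBelow { x | ∃ t : ℕ → ℝ, IsPartition n t ∧ x = Real.sqrt (partErr H n t) } := by
    refine ⟨0, fun y hy => ?_⟩
    obtain ⟨t, _, rfl⟩ := hy
    exact Real.sqrt_nonneg _
  have hmem : Real.sqrt (partErr H n T) ∈
      { x | ∃ t : ℕ → ℝ, IsPartition n t ∧ x = Real.sqrt (partErr H n t) } := ⟨T, hpart, rfl⟩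
  have hAn : An H n ≤ Real.sqrt (partErr H n T) := csInf_le hbdd hmem
  have hsqrt : Real.sqrt (partErr H n T) ≤ Real.sqrt K * Real.sqrt ((n:ℝ) ^ (1 - 2*α)) := by
    rw [← Real.sqrt_mul hK.le]
    exact Real.sqrt_le_sqrt hsum
  have hinv : Real.sqrt ((n:ℝ) ^ (1 - 2*α)) = (Real.sqrt ((n:ℝ) ^ (2*α - 1)))⁻¹ := by
    rw [show (1:ℝ) - 2*α = -(2*α - 1) from by ring, Real.rpow_neg hN0.le, Real.sqrt_inv]
  have hfinal : Real.sqrt K * Real.sqrt ((n:ℝ) ^ (1 - 2*α))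
      ≤ max 1 (Real.sqrt K) / Real.sqrt ((n:ℝ) ^ (2*α - 1)) := by
    rw [hinv, div_eq_mul_inv]
    apply mul_le_mul_of_nonneg_right (le_max_right _ _) (by positivity)
  linarith
end

section
/- Let α ∈ (1/2,1), c₁ ≥ 1, H increasing with H(t) ≤ c₁(1−log(1−t))^{−α}/(1−t), and set T = 1 − e^{c_α(n)} where c_α(n) = 1 − ((1−α)n^{1−α} + 1)^{1/(1−α)}. Then ∫₀ᵀ H(t) dt ≤ c₁ n^{1−α} and ∫_T¹ (1−t)H(t)² dt ≤ c₁² (1−α)^{(1−2α)/(1−α)}/(2α−1) · n^{1−2α}. -/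
open MeasureTheory Set

lemma stmt15_hasDeriv (p t : ℝ) (ht : t < 1) (hne : 1 - Real.log (1 - t) ≠ 0) :
    HasDerivAt (fun s => (1 - Real.log (1 - s)) ^ p)
      (p * (1 - Real.log (1 - t)) ^ (p - 1) / (1 - t)) t := by
  have h0 : (0:ℝ) < 1 - t := by linarith
  have h1 : HasDerivAt (fun s : ℝ => 1 - s) (-1) t := (hasDerivAt_id t).const_sub 1
  have h2 : HasDerivAt (fun s : ℝ => Real.log (1 - s)) (-(1 - t)⁻¹) t := by
    have := (Real.hasDerivAt_log (ne_of_gt h0)).comp t h1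
    simpa [Function.comp_def] using this
  have h3 : HasDerivAt (fun s : ℝ => 1 - Real.log (1 - s)) ((1 - t)⁻¹) t := by
    simpa using h2.const_sub 1
  have h4 := (Real.hasDerivAt_rpow_const (x := 1 - Real.log (1 - t)) (p := p)
      (Or.inl hne)).comp t h3
  simpa [Function.comp_def, div_eq_mul_inv] using h4

lemma stmt15_contOn (p a b : ℝ) (hb : b < 1)
    (hu : ∀ t ∈ Icc a b, (1:ℝ) ≤ 1 - Real.log (1 - t)) :
    ContinuousOn (fun t => (1 - Real.log (1 - t)) ^ p / (1 - t)) (Icc a b) := by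
  have hne : ∀ t ∈ Icc a b, (1:ℝ) - t ≠ 0 := fun t ht => by
    have := ht.2; intro h; nlinarith
  have c1 : ContinuousOn (fun t : ℝ => 1 - t) (Icc a b) := by fun_prop
  have c2 : ContinuousOn (fun t : ℝ => 1 - Real.log (1 - t)) (Icc a b) :=
    continuousOn_const.sub (c1.log hne)
  have c3 : ContinuousOn (fun t : ℝ => (1 - Real.log (1 - t)) ^ p) (Icc a b) :=
    c2.rpow_const (fun t ht => Or.inl (by have := hu t ht; intro h; nlinarith))
  exact c3.div c1 hne

lemma stmt15_integral_g (p a b : ℝ) (hab : a ≤ b) (hb : b < 1)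
    (hu : ∀ t ∈ Icc a b, (1:ℝ) ≤ 1 - Real.log (1 - t)) (hp : p + 1 ≠ 0) :
    ∫ t in a..b, (1 - Real.log (1 - t)) ^ p / (1 - t)
      = ((1 - Real.log (1 - b)) ^ (p+1) - (1 - Real.log (1 - a)) ^ (p+1)) / (p+1) := by
  have huIcc : uIcc a b = Icc a b := uIcc_of_le hab
  have hderiv : ∀ x ∈ uIcc a b,
      HasDerivAt (fun t => (1 - Real.log (1 - t)) ^ (p+1) / (p+1))
        ((1 - Real.log (1 - x)) ^ p / (1 - x)) x := by
    intro x hx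
    rw [huIcc] at hx
    have h1 := hu x hx
    have hx1 : x < 1 := lt_of_le_of_lt hx.2 hb
    have := (stmt15_hasDeriv (p+1) x hx1 (by intro h; nlinarith)).div_const (p+1)
    have he : (p + 1) * (1 - Real.log (1 - x)) ^ (p + 1 - 1) / (1 - x) / (p + 1)
        = (1 - Real.log (1 - x)) ^ p / (1 - x) := by
      rw [show p + 1 - 1 = p by ring, mul_div_assoc, mul_div_cancel_left₀ _ hp]
    rwa [he] at this
  have hint : IntervalIntegrable (fun t => (1 - Real.log (1 - t)) ^ p / (1 - t))
      MeasureTheory.volume a b := by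
    apply ContinuousOn.intervalIntegrable
    rw [huIcc]
    exact stmt15_contOn p a b hb hu
  rw [intervalIntegral.integral_eq_sub_of_hasDerivAt hderiv hint]
  ring

theorem stmt15 (α : ℝ) (hα : α ∈ Ioo (1 / 2 : ℝ) 1) (c₁ : ℝ) (hc₁ : 1 ≤ c₁)
    (H : ℝ → ℝ) (hmono : MonotoneOn H (Ico (0 : ℝ) 1))
    (hpos : ∀ t ∈ Ico (0 : ℝ) 1, 0 ≤ H t)
    (hH : ∀ t ∈ Ico (0 : ℝ) 1, H t ≤ c₁ * ((1 - Real.log (1 - t)) ^ (-α) / (1 - t)))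
    (n : ℕ) (hn : 1 ≤ n) (T : ℝ)
    (hT : T = 1 - Real.exp (1 - ((1 - α) * (n : ℝ) ^ (1 - α) + 1) ^ (1 / (1 - α)))) :
    (∫ t in (0 : ℝ)..T, H t) ≤ c₁ * (n : ℝ) ^ (1 - α) ∧
      (∫ t in T..(1 : ℝ), (1 - t) * H t ^ 2) ≤
        c₁ ^ 2 * (1 - α) ^ ((1 - 2 * α) / (1 - α)) / (2 * α - 1) * (n : ℝ) ^ (1 - 2 * α) := by
  obtain ⟨hα1, hα2⟩ := hα
  have h1α : (0:ℝ) < 1 - α := by linarith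
  have h2α : (0:ℝ) < 2 * α - 1 := by linarith
  have hn1 : (1:ℝ) ≤ (n:ℝ) := by exact_mod_cast hn
  have hnpow : (0:ℝ) < (n:ℝ) ^ (1 - α) := Real.rpow_pos_of_pos (by linarith) _
  set X : ℝ := (1 - α) * (n : ℝ) ^ (1 - α) + 1 with hXdef
  have hY : (0:ℝ) < (1 - α) * (n:ℝ) ^ (1 - α) := mul_pos h1α hnpow
  have hX1 : (1:ℝ) ≤ X := by rw [hXdef]; linarith
  set B : ℝ := X ^ (1 / (1 - α)) with hBdef
  have hB1 : (1:ℝ) ≤ B := Real.one_le_rpow hX1 (by positivity)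
  have hT1 : T < 1 := by rw [hT]; have := Real.exp_pos (1 - B); linarith
  have hT0 : (0:ℝ) ≤ T := by
    rw [hT]
    have : Real.exp (1 - B) ≤ Real.exp 0 := Real.exp_le_exp.2 (by linarith)
    rw [Real.exp_zero] at this; linarith
  have huT : 1 - Real.log (1 - T) = B := by
    rw [hT]
    have : (1:ℝ) - (1 - Real.exp (1 - B)) = Real.exp (1 - B) := by ring
    rw [this, Real.log_exp]; ring
  have hu : ∀ t : ℝ, 0 ≤ t → t < 1 → (1:ℝ) ≤ 1 - Real.log (1 - t) := by
    intro t h0 h1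
    have := Real.log_nonpos (by linarith) (by linarith : (1:ℝ) - t ≤ 1)
    linarith
  have hBpow1 : B ^ (1 - α) = X := by
    rw [hBdef, ← Real.rpow_mul (by linarith : (0:ℝ) ≤ X),
      one_div_mul_cancel (ne_of_gt h1α), Real.rpow_one]
  constructor
  · -- first integral
    have hsub : Icc (0:ℝ) T ⊆ Ico (0:ℝ) 1 := fun t ht => ⟨ht.1, lt_of_le_of_lt ht.2 hT1⟩
    have hu' : ∀ t ∈ Icc (0:ℝ) T, (1:ℝ) ≤ 1 - Real.log (1 - t) :=
      fun t ht => hu t ht.1 (lt_of_le_of_lt ht.2 hT1)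
    have huIcc : uIcc (0:ℝ) T = Icc (0:ℝ) T := uIcc_of_le hT0
    have hHint : IntervalIntegrable H MeasureTheory.volume 0 T := by
      apply MonotoneOn.intervalIntegrable
      rw [huIcc]
      exact hmono.mono hsub
    have hgint : IntervalIntegrable
        (fun t => c₁ * ((1 - Real.log (1 - t)) ^ (-α) / (1 - t)))
        MeasureTheory.volume 0 T := by
      apply ContinuousOn.intervalIntegrable
      rw [huIcc]
      exact (stmt15_contOn (-α) 0 T hT1 hu').const_smul c₁
    have hmono' := intervalIntegral.integral_mono_on hT0 hHint hgint
      (fun t ht => hH t (hsub ht))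
    refine le_trans hmono' ?_
    rw [intervalIntegral.integral_const_mul,
      stmt15_integral_g (-α) 0 T hT0 hT1 hu' (by intro h; nlinarith)]
    have h0 : (1:ℝ) - Real.log (1 - 0) = 1 := by norm_num
    rw [h0, huT, Real.one_rpow, show -α + 1 = 1 - α by ring, hBpow1]
    rw [show X - 1 = (1 - α) * (n:ℝ) ^ (1 - α) by rw [hXdef]; ring,
      mul_div_cancel_left₀ _ (ne_of_gt h1α)]
  · -- second integral
    set C : ℝ := c₁ ^ 2 * (1 - α) ^ ((1 - 2 * α) / (1 - α)) / (2 * α - 1) * (n : ℝ) ^ (1 - 2 * α)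
      with hCdef
    have hCpos : 0 ≤ C := by
      rw [hCdef]
      have h1 : (0:ℝ) < (1 - α) ^ ((1 - 2 * α) / (1 - α)) := Real.rpow_pos_of_pos h1α _
      have h2 : (0:ℝ) < (n:ℝ) ^ (1 - 2 * α) := Real.rpow_pos_of_pos (by linarith) _
      positivity
    by_cases hint : IntervalIntegrable (fun t => (1 - t) * H t ^ 2) MeasureTheory.volume T 1
    swap
    · rw [intervalIntegral.integral_undef hint]; exact hCpos
    -- the key constant bound
    have hBC : c₁ ^ 2 * (B ^ (1 - 2*α)) / (2 * α - 1) ≤ C := by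
      have he : B ^ (1 - 2*α) = X ^ ((1 - 2*α) / (1 - α)) := by
        rw [hBdef, ← Real.rpow_mul (by linarith : (0:ℝ) ≤ X), one_div_mul_eq_div]
      have hexp : (1 - 2*α) / (1 - α) ≤ 0 :=
        div_nonpos_of_nonpos_of_nonneg (by linarith) (by linarith)
      have hXY : X ^ ((1 - 2*α) / (1 - α)) ≤ ((1 - α) * (n:ℝ) ^ (1 - α)) ^ ((1 - 2*α) / (1 - α)) :=
        Real.rpow_le_rpow_of_nonpos hY (by rw [hXdef]; linarith) hexp
      have hYval : ((1 - α) * (n:ℝ) ^ (1 - α)) ^ ((1 - 2*α) / (1 - α))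
          = (1 - α) ^ ((1 - 2*α) / (1 - α)) * (n:ℝ) ^ (1 - 2*α) := by
        rw [Real.mul_rpow (le_of_lt h1α) (le_of_lt hnpow),
          ← Real.rpow_mul (by linarith : (0:ℝ) ≤ (n:ℝ)),
          mul_div_cancel₀ _ (ne_of_gt h1α)]
      rw [hCdef]
      have : B ^ (1 - 2*α) ≤ (1 - α) ^ ((1 - 2*α) / (1 - α)) * (n:ℝ) ^ (1 - 2*α) := by
        rw [he, ← hYval]; exact hXY
      calc c₁ ^ 2 * (B ^ (1 - 2*α)) / (2 * α - 1)
          ≤ c₁ ^ 2 * ((1 - α) ^ ((1 - 2*α) / (1 - α)) * (n:ℝ) ^ (1 - 2*α)) / (2 * α - 1) := by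
            gcongr
        _ = c₁ ^ 2 * (1 - α) ^ ((1 - 2 * α) / (1 - α)) / (2 * α - 1) * (n : ℝ) ^ (1 - 2 * α) := by
            ring
    -- bound for every b ∈ [T, 1)
    have key : ∀ b ∈ Ico T 1, (∫ t in T..b, (1 - t) * H t ^ 2) ≤ C := by
      intro b hb
      obtain ⟨hbT, hb1⟩ := hb
      have hsub : Icc T b ⊆ Ico (0:ℝ) 1 := fun t ht =>
        ⟨le_trans hT0 ht.1, lt_of_le_of_lt ht.2 hb1⟩
      have hu' : ∀ t ∈ Icc T b, (1:ℝ) ≤ 1 - Real.log (1 - t) :=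
        fun t ht => hu t (le_trans hT0 ht.1) (lt_of_le_of_lt ht.2 hb1)
      have huIcc : uIcc T b = Icc T b := uIcc_of_le hbT
      have hfint : IntervalIntegrable (fun t => (1 - t) * H t ^ 2) MeasureTheory.volume T b := by
        apply hint.mono_set
        rw [huIcc, uIcc_of_le (le_of_lt hT1)]
        exact Icc_subset_Icc le_rfl (le_of_lt hb1)
      have hgint : IntervalIntegrable
          (fun t => c₁ ^ 2 * ((1 - Real.log (1 - t)) ^ (-(2*α)) / (1 - t)))
          MeasureTheory.volume T b := by
        apply ContinuousOn.intervalIntegrable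
        rw [huIcc]
        exact (stmt15_contOn (-(2*α)) T b hb1 hu').const_smul (c₁ ^ 2)
      have hptwise : ∀ t ∈ Icc T b,
          (1 - t) * H t ^ 2 ≤ c₁ ^ 2 * ((1 - Real.log (1 - t)) ^ (-(2*α)) / (1 - t)) := by
        intro t ht
        have htI := hsub ht
        have h1t : (0:ℝ) < 1 - t := by have := htI.2; linarith
        have hut : (1:ℝ) ≤ 1 - Real.log (1 - t) := hu' t ht
        have hu0 : (0:ℝ) < 1 - Real.log (1 - t) := by linarith
        have hsq : ((1 - Real.log (1 - t)) ^ (-α)) ^ 2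
            = (1 - Real.log (1 - t)) ^ (-(2*α)) := by
          rw [← Real.rpow_natCast ((1 - Real.log (1 - t)) ^ (-α)) 2,
            ← Real.rpow_mul (le_of_lt hu0)]
          norm_num
          ring_nf
        have hHsq : H t ^ 2 ≤ (c₁ * ((1 - Real.log (1 - t)) ^ (-α) / (1 - t))) ^ 2 :=
          pow_le_pow_left₀ (hpos t htI) (hH t htI) 2
        calc (1 - t) * H t ^ 2
            ≤ (1 - t) * (c₁ * ((1 - Real.log (1 - t)) ^ (-α) / (1 - t))) ^ 2 :=
              mul_le_mul_of_nonneg_left hHsq (le_of_lt h1t)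
          _ = c₁ ^ 2 * ((1 - Real.log (1 - t)) ^ (-(2*α)) / (1 - t)) := by
              rw [mul_pow, div_pow, hsq]
              field_simp
      have hmono' := intervalIntegral.integral_mono_on hbT hfint hgint hptwise
      refine le_trans hmono' ?_
      rw [intervalIntegral.integral_const_mul,
        stmt15_integral_g (-(2*α)) T b hbT hb1 hu' (by intro h; nlinarith)]
      rw [huT, show -(2*α) + 1 = 1 - 2*α by ring]
      have hub0 : (0:ℝ) ≤ (1 - Real.log (1 - b)) ^ (1 - 2*α) :=
        Real.rpow_nonneg (by have := hu b (le_trans hT0 hbT) hb1; linarith) _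
      refine le_trans ?_ hBC
      have heq : ((1 - Real.log (1 - b)) ^ (1 - 2*α) - B ^ (1 - 2*α)) / (1 - 2*α)
          = (B ^ (1 - 2*α) - (1 - Real.log (1 - b)) ^ (1 - 2*α)) / (2 * α - 1) := by
        rw [div_eq_div_iff (by linarith) (by linarith)]
        ring
      rw [heq, mul_div_assoc]
      apply mul_le_mul_of_nonneg_left _ (by positivity : (0:ℝ) ≤ c₁ ^ 2)
      gcongr
      linarith
    -- pass to the limit b → 1
    have huIcc1 : uIcc T (1:ℝ) = Icc T 1 := uIcc_of_le (le_of_lt hT1)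
    have hcont := intervalIntegral.continuousOn_primitive_interval' hint
      (by rw [huIcc1]; exact ⟨le_rfl, le_of_lt hT1⟩)
    have h1mem : (1:ℝ) ∈ Icc T 1 := ⟨le_of_lt hT1, le_rfl⟩
    have htend : Filter.Tendsto (fun b => ∫ x in T..b, (1 - x) * H x ^ 2)
        (nhdsWithin 1 (Icc T 1)) (nhds (∫ x in T..(1:ℝ), (1 - x) * H x ^ 2)) := by
      have := hcont 1 (by rw [huIcc1]; exact h1mem)
      rw [huIcc1] at this
      exact this
    have hneBot : (nhdsWithin (1:ℝ) (Ico T 1)).NeBot := by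
      rw [← mem_closure_iff_nhdsWithin_neBot, closure_Ico (ne_of_lt hT1)]
      exact h1mem
    have htend' : Filter.Tendsto (fun b => ∫ x in T..b, (1 - x) * H x ^ 2)
        (nhdsWithin 1 (Ico T 1)) (nhds (∫ x in T..(1:ℝ), (1 - x) * H x ^ 2)) :=
      htend.mono_left (nhdsWithin_mono _ Ico_subset_Icc_self)
    exact le_of_tendsto htend' (eventually_mem_nhdsWithin.mono key)
end
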